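/- arXiv:0709.1184 — 12 statements merged into one kernel-verified Lean document; each statement's English description precedes it below -/
import Mathlib

section
/- If f : ℝ → ℝ is continuous and J₀, J₁, ..., J_{n-1} are nonempty closed intervals with J_{i+1} ⊆ f '' J_i for 0 ≤ i ≤ n-2 and J₀ ⊆ f '' J_{n-1}, then there exists a point y ∈ J₀ with f^[n] y = y and f^[i] y ∈ J_i for all 0 ≤ i ≤ n-1. -/
lemma core_sub (f : ℝ → ℝ) (hf : Continuous f) {p q c d : ℝ} (hpq : p ≤ q)
    (hc : f p = c) (hd : f q = d) (hcd : c ≤ d) :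
    ∃ a' b', p ≤ a' ∧ a' ≤ b' ∧ b' ≤ q ∧ f '' Set.Icc a' b' = Set.Icc c d := by
  set S : Set ℝ := Set.Icc p q ∩ f ⁻¹' {d} with hS
  have hScl : IsClosed S := isClosed_Icc.inter (isClosed_singleton.preimage hf)
  have hSne : S.Nonempty := ⟨q, Set.right_mem_Icc.2 hpq, hd⟩
  have hSbdd : BddBelow S := ⟨p, fun x hx => hx.1.1⟩
  set B := sInf S with hB
  have hBmem : B ∈ S := hScl.csInf_mem hSne hSbdd
  have hBle : ∀ x ∈ S, B ≤ x := fun x hx => csInf_le hSbdd hx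
  set T : Set ℝ := Set.Icc p B ∩ f ⁻¹' {c} with hT
  have hTcl : IsClosed T := isClosed_Icc.inter (isClosed_singleton.preimage hf)
  have hTne : T.Nonempty := ⟨p, Set.left_mem_Icc.2 hBmem.1.1, hc⟩
  have hTbdd : BddAbove T := ⟨B, fun x hx => hx.1.2⟩
  set A := sSup T with hA
  have hAmem : A ∈ T := hTcl.csSup_mem hTne hTbdd
  have hAle : ∀ x ∈ T, x ≤ A := fun x hx => le_csSup hTbdd hx
  have hAB : A ≤ B := hAmem.1.2
  have hfA : f A = c := hAmem.2
  have hfB : f B = d := hBmem.2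
  refine ⟨A, B, hAmem.1.1, hAB, hBmem.1.2, ?_⟩
  apply Set.Subset.antisymm
  · rintro y ⟨x, hx, rfl⟩
    constructor
    · by_contra hlt
      push_neg at hlt
      obtain ⟨z, hz, hfz⟩ := intermediate_value_Icc hx.2 hf.continuousOn
        (Set.mem_Icc.2 ⟨le_of_lt hlt, hfB ▸ hcd⟩)
      have hzT : z ∈ T := ⟨⟨hAmem.1.1.trans (hx.1.trans hz.1), hz.2⟩, hfz⟩
      have hxA : A < x := lt_of_le_of_ne hx.1 (fun h => by rw [← h, hfA] at hlt; exact lt_irrefl _ hlt)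
      exact absurd (hAle z hzT) (not_le.2 (lt_of_lt_of_le hxA hz.1))
    · by_contra hlt
      push_neg at hlt
      obtain ⟨z, hz, hfz⟩ := intermediate_value_Icc hx.1 hf.continuousOn
        (Set.mem_Icc.2 ⟨hfA ▸ hcd, le_of_lt hlt⟩)
      have hzS : z ∈ S := ⟨⟨hAmem.1.1.trans hz.1, (hz.2.trans hx.2).trans hBmem.1.2⟩, hfz⟩
      have hxB : x < B := lt_of_le_of_ne hx.2 (fun h => by rw [h, hfB] at hlt; exact lt_irrefl _ hlt)
      exact absurd (hBle z hzS) (not_le.2 (lt_of_le_of_lt hz.2 hxB))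
  · have := intermediate_value_Icc hAB hf.continuousOn
    rw [hfA, hfB] at this
    exact this
lemma sub_interval (f : ℝ → ℝ) (hf : Continuous f) {p q c d : ℝ} (hpq : p ≤ q)
    (hcd : c ≤ d) (h : Set.Icc c d ⊆ f '' Set.Icc p q) :
    ∃ a' b', p ≤ a' ∧ a' ≤ b' ∧ b' ≤ q ∧ f '' Set.Icc a' b' = Set.Icc c d := by
  obtain ⟨u, hu, hfu⟩ := h (Set.left_mem_Icc.2 hcd)
  obtain ⟨v, hv, hfv⟩ := h (Set.right_mem_Icc.2 hcd)
  rcases le_total u v with huv | hvu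
  · obtain ⟨a', b', h1, h2, h3, h4⟩ := core_sub f hf huv hfu hfv hcd
    exact ⟨a', b', hu.1.trans h1, h2, h3.trans hv.2, h4⟩
  · set g : ℝ → ℝ := fun x => f (-x) with hg
    have hgc : Continuous g := hf.comp continuous_neg
    have huv' : -u ≤ -v := neg_le_neg hvu
    obtain ⟨a', b', h1, h2, h3, h4⟩ := core_sub g hgc huv'
      (by simp [hg, hfu]) (by simp [hg, hfv]) hcd
    refine ⟨-b', -a', ?_, neg_le_neg h2, ?_, ?_⟩
    · exact le_neg_of_le_neg (h3.trans (neg_le_neg hv.1))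
    · exact neg_le_of_neg_le ((neg_le_neg hu.2).trans h1)
    · rw [← h4]
      ext y
      simp only [Set.mem_image, hg]
      constructor
      · rintro ⟨x, hx, rfl⟩
        exact ⟨-x, ⟨by simpa using neg_le_neg hx.2, by simpa using neg_le_neg hx.1⟩, by simp⟩
      · rintro ⟨x, hx, rfl⟩
        refine ⟨-x, ⟨by simpa using neg_le_neg hx.2, by simpa using neg_le_neg hx.1⟩, by simp⟩
theorem stmt_1 (f : ℝ → ℝ) (hf : Continuous f) (n : ℕ) (hn : 1 ≤ n)
    (a b : ℕ → ℝ) (hab : ∀ i < n, a i ≤ b i)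
    (hcov : ∀ i, i + 1 < n → Set.Icc (a (i+1)) (b (i+1)) ⊆ f '' Set.Icc (a i) (b i))
    (hcov0 : Set.Icc (a 0) (b 0) ⊆ f '' Set.Icc (a (n-1)) (b (n-1))) :
    ∃ y ∈ Set.Icc (a 0) (b 0), f^[n] y = y ∧ ∀ i < n, f^[i] y ∈ Set.Icc (a i) (b i) := by
  have chain : ∀ k, k ≤ n-1 → ∃ α β, a (n-1-k) ≤ α ∧ α ≤ β ∧ β ≤ b (n-1-k) ∧
      f^[k+1] '' Set.Icc α β = Set.Icc (a 0) (b 0) ∧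
      ∀ j ≤ k, f^[j] '' Set.Icc α β ⊆ Set.Icc (a (n-1-k+j)) (b (n-1-k+j)) := by
    intro k
    induction k with
    | zero =>
      intro _
      obtain ⟨α, β, h1, h2, h3, h4⟩ :=
        sub_interval f hf (hab (n-1) (by omega)) (hab 0 (by omega)) hcov0
      refine ⟨α, β, h1, h2, h3, by simpa using h4, ?_⟩
      intro j hj
      interval_cases j
      simpa using Set.Icc_subset_Icc (by simpa using h1) (by simpa using h3)
    | succ k ih =>
      intro hk
      obtain ⟨α, β, h1, h2, h3, h4, h5⟩ := ih (by omega)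
      have hidx : n-1-(k+1)+1 = n-1-k := by omega
      have hsub : Set.Icc α β ⊆ f '' Set.Icc (a (n-1-(k+1))) (b (n-1-(k+1))) := by
        intro x hx
        have := hcov (n-1-(k+1)) (by omega)
        rw [hidx] at this
        exact this (Set.Icc_subset_Icc h1 h3 hx)
      obtain ⟨α', β', g1, g2, g3, g4⟩ :=
        sub_interval f hf (hab (n-1-(k+1)) (by omega)) h2 hsub
      refine ⟨α', β', g1, g2, g3, ?_, ?_⟩
      · rw [Function.iterate_succ, Set.image_comp, g4, h4]
      · intro j hj
        match j with
        | 0 =>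
          simpa using Set.Icc_subset_Icc (by simpa using g1) (by simpa using g3)
        | j+1 =>
          rw [Function.iterate_succ, Set.image_comp, g4]
          have hix : n-1-(k+1)+(j+1) = n-1-k+j := by omega
          rw [hix]
          exact h5 j (by omega)
  obtain ⟨α, β, h1, h2, h3, h4, h5⟩ := chain (n-1) le_rfl
  have e0 : n-1-(n-1) = 0 := by omega
  have en : n-1+1 = n := by omega
  rw [e0] at h1 h3
  rw [en] at h4
  have hK : Set.Icc α β ⊆ Set.Icc (a 0) (b 0) := Set.Icc_subset_Icc h1 h3
  have hcont : Continuous f^[n] := hf.iterate n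
  obtain ⟨u, hu, hfu⟩ : α ∈ f^[n] '' Set.Icc α β := by
    rw [h4]; exact hK (Set.left_mem_Icc.2 h2)
  obtain ⟨v, hv, hfv⟩ : β ∈ f^[n] '' Set.Icc α β := by
    rw [h4]; exact hK (Set.right_mem_Icc.2 h2)
  set g : ℝ → ℝ := fun x => f^[n] x - x with hg
  have hgc : Continuous g := hcont.sub continuous_id
  have hgu : g u ≤ 0 := by simp [hg, hfu]; exact hu.1
  have hgv : 0 ≤ g v := by simp [hg, hfv]; exact hv.2
  have h0 : (0:ℝ) ∈ Set.uIcc (g u) (g v) := Set.mem_uIcc.2 (Or.inl ⟨hgu, hgv⟩)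
  obtain ⟨y, hy, hgy⟩ := intermediate_value_uIcc hgc.continuousOn h0
  have hyK : y ∈ Set.Icc α β := by
    have : Set.uIcc u v ⊆ Set.Icc α β := Set.uIcc_subset_Icc hu hv
    exact this hy
  have hfix : f^[n] y = y := by
    have : f^[n] y - y = 0 := hgy
    linarith
  refine ⟨y, hK hyK, hfix, ?_⟩
  intro i hi
  have := h5 i (by omega)
  rw [e0] at this
  simpa using this (Set.mem_image_of_mem _ hyK)
end

section
/- If f : ℝ → ℝ is continuous and has a periodic orbit of period m+n of type L(m,n), i.e., points x₀,...,x_{m+n-1} with x_{i+1}=f(x_i) cyclically and x_{m+n-1} < ⋯ < x_{n+1} < x_n < x₀ < x₁ < ⋯ < x_{n-1}, where m,n ≥ 2, then f has a periodic orbit of period m+n+1 of type L(m,n+1), i.e., points y₀,...,y_{m+n} with y_{i+1}=f(y_i) cyclically, all distinct, and y_{m+n} < ⋯ < y_{n+2} < y_{n+1} < y₀ < y₁ < ⋯ < y_n. -/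
open Set Function

section Aux

lemma exact_pts {f : ℝ → ℝ} (hf : Continuous f) {s t c d : ℝ} (hst : s ≤ t)
    (hfs : f s = c) (hft : f t = d) (hcd : c ≤ d) :
    ∃ a b, s ≤ a ∧ a ≤ b ∧ b ≤ t ∧ f '' Icc a b = Icc c d := by
  have hclc : IsClosed {r : ℝ | f r = c} := isClosed_eq hf continuous_const
  have hcld : IsClosed {r : ℝ | f r = d} := isClosed_eq hf continuous_const
  set S : Set ℝ := Icc s t ∩ {r | f r = c} with hSdef
  have hSne : S.Nonempty := ⟨s, ⟨le_rfl, hst⟩, hfs⟩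
  have hSbdd : BddAbove S := BddAbove.mono inter_subset_left bddAbove_Icc
  have haS : sSup S ∈ S := (isClosed_Icc.inter hclc).csSup_mem hSne hSbdd
  set a := sSup S with hadef
  obtain ⟨⟨hsa, hat⟩, hfa⟩ := haS
  set T : Set ℝ := Icc a t ∩ {r | f r = d} with hTdef
  have hTne : T.Nonempty := ⟨t, ⟨hat, le_rfl⟩, hft⟩
  have hTbdd : BddBelow T := BddBelow.mono inter_subset_left bddBelow_Icc
  have hbT : sInf T ∈ T := (isClosed_Icc.inter hcld).csInf_mem hTne hTbdd
  set b := sInf T with hbdef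
  obtain ⟨⟨hab, hbt⟩, hfb⟩ := hbT
  refine ⟨a, b, hsa, hab, hbt, ?_⟩
  apply Subset.antisymm
  · rintro _ ⟨r, ⟨har, hrb⟩, rfl⟩
    constructor
    · by_contra hlt
      push_neg at hlt
      have h0 : c ∈ Icc (f r) (f b) := ⟨hlt.le, by rw [hfb]; exact hcd⟩
      obtain ⟨q, hq, hfq⟩ := intermediate_value_Icc hrb hf.continuousOn h0
      have hqS : q ∈ S := ⟨⟨hsa.trans (har.trans hq.1), hq.2.trans hbt⟩, hfq⟩
      have hqa : q ≤ a := le_csSup hSbdd hqS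
      have : r = q := le_antisymm hq.1 (hqa.trans har)
      rw [← this] at hfq
      exact absurd hfq (ne_of_lt hlt)
    · by_contra hlt
      push_neg at hlt
      have h0 : d ∈ Icc (f a) (f r) := ⟨by rw [hfa]; exact hcd, hlt.le⟩
      obtain ⟨q, hq, hfq⟩ := intermediate_value_Icc har hf.continuousOn h0
      have hqT : q ∈ T := ⟨⟨hq.1, (hq.2.trans hrb).trans hbt⟩, hfq⟩
      have hbq : b ≤ q := csInf_le hTbdd hqT
      have : q = r := le_antisymm hq.2 (hrb.trans hbq)
      rw [this] at hfq
      exact absurd hfq (ne_of_gt hlt)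
  · rw [← hfa, ← hfb]
    exact intermediate_value_Icc hab hf.continuousOn

lemma exact_sub {f : ℝ → ℝ} (hf : Continuous f) {u v c d : ℝ} (hcd : c ≤ d)
    (hcov : Icc c d ⊆ f '' Icc u v) :
    ∃ a b, u ≤ a ∧ a ≤ b ∧ b ≤ v ∧ f '' Icc a b = Icc c d := by
  obtain ⟨s, hs, hfs⟩ := hcov (left_mem_Icc.mpr hcd)
  obtain ⟨t, ht, hft⟩ := hcov (right_mem_Icc.mpr hcd)
  rcases le_total s t with hst | hts
  · obtain ⟨a, b, h1, h2, h3, h4⟩ := exact_pts hf hst hfs hft hcd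
    exact ⟨a, b, hs.1.trans h1, h2, h3.trans ht.2, h4⟩
  · have hgc : Continuous (fun r => f (t + s - r)) :=
      hf.comp (by continuity)
    have h1 : (fun r => f (t + s - r)) t = c := by simp [hfs]
    have h2 : (fun r => f (t + s - r)) s = d := by simp [hft]
    obtain ⟨a, b, ha, hab, hb, him⟩ := exact_pts hgc hts h1 h2 hcd
    refine ⟨t + s - b, t + s - a, by linarith [ht.1], by linarith, by linarith [hs.2], ?_⟩
    rw [← him]
    have himg : Icc (t + s - b) (t + s - a) = (fun r => t + s - r) '' Icc a b := by
      rw [Set.image_const_sub_Icc]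
    rw [himg, Set.image_image]

lemma itin {f : ℝ → ℝ} (hf : Continuous f) (lo hi : ℕ → ℝ) (L : ℕ)
    (hle : ∀ j, j ≤ L → lo j ≤ hi j)
    (hcov : ∀ j, j < L → Icc (lo (j+1)) (hi (j+1)) ⊆ f '' Icc (lo j) (hi j)) :
    ∀ J, J ≤ L → ∃ a b, a ≤ b ∧
      (∀ j, j ≤ J → f^[j] '' Icc a b ⊆ Icc (lo j) (hi j)) ∧
      f^[J] '' Icc a b = Icc (lo J) (hi J) := by
  intro J
  induction J with
  | zero =>
    intro _
    refine ⟨lo 0, hi 0, hle 0 (Nat.zero_le L), ?_, by simp⟩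
    intro j hj
    obtain rfl : j = 0 := Nat.le_zero.mp hj
    simp
  | succ J ih =>
    intro hJL
    obtain ⟨a, b, hab, hmem, hexact⟩ := ih (by omega)
    have hcov' : Icc (lo (J+1)) (hi (J+1)) ⊆ f^[J+1] '' Icc a b := by
      rw [Function.iterate_succ', Set.image_comp, hexact]
      exact hcov J (by omega)
    obtain ⟨a', b', ha', hab', hb', hex'⟩ :=
      exact_sub (hf.iterate (J+1)) (hle (J+1) hJL) hcov'
    refine ⟨a', b', hab', ?_, hex'⟩
    intro j hj
    rcases Nat.lt_succ_iff_lt_or_eq.mp (Nat.lt_succ_of_le hj) with h | rfl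
    · exact (Set.image_mono (Icc_subset_Icc ha' hb')).trans (hmem j (by omega))
    · rw [hex']

lemma loop_point {f : ℝ → ℝ} (hf : Continuous f) (lo hi : ℕ → ℝ) (L : ℕ)
    (hle : ∀ j, j ≤ L → lo j ≤ hi j)
    (hcov : ∀ j, j < L → Icc (lo (j+1)) (hi (j+1)) ⊆ f '' Icc (lo j) (hi j))
    (hlo : lo L = lo 0) (hhi : hi L = hi 0) :
    ∃ w, f^[L] w = w ∧ ∀ j, j ≤ L → f^[j] w ∈ Icc (lo j) (hi j) := by
  obtain ⟨a, b, hab, hmem, hexact⟩ := itin hf lo hi L hle hcov L le_rfl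
  rw [hlo, hhi] at hexact
  have hmem0 : Icc a b ⊆ Icc (lo 0) (hi 0) := by
    have := hmem 0 (Nat.zero_le L)
    simpa using this
  have ha0 : lo 0 ≤ a := (hmem0 ⟨le_rfl, hab⟩).1
  have hb0 : b ≤ hi 0 := (hmem0 ⟨hab, le_rfl⟩).2
  have hlomem : lo 0 ∈ f^[L] '' Icc a b := by
    rw [hexact]; exact left_mem_Icc.mpr (hle 0 (Nat.zero_le L))
  have hhimem : hi 0 ∈ f^[L] '' Icc a b := by
    rw [hexact]; exact right_mem_Icc.mpr (hle 0 (Nat.zero_le L))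
  obtain ⟨s, hs, hfs⟩ := hlomem
  obtain ⟨t, ht, hft⟩ := hhimem
  have hgc : ContinuousOn (fun r => f^[L] r - r) (uIcc s t) :=
    ((hf.iterate L).sub continuous_id).continuousOn
  have h0 : (0:ℝ) ∈ uIcc (f^[L] s - s) (f^[L] t - t) := by
    rw [hfs, hft]
    apply Set.mem_uIcc.mpr
    left
    constructor
    · linarith [hs.1]
    · linarith [ht.2]
  obtain ⟨w, hwmem, hw0⟩ := intermediate_value_uIcc hgc h0
  have hwab : w ∈ Icc a b := uIcc_subset_Icc hs ht hwmem
  have hwfix : f^[L] w = w := by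
    have : f^[L] w - w = 0 := hw0
    linarith
  refine ⟨w, hwfix, ?_⟩
  intro j hj
  exact hmem j hj ⟨w, hwab, rfl⟩
end Aux

lemma cover_inc {f : ℝ → ℝ} (hf : Continuous f) {a b c d : ℝ} (hab : a ≤ b)
    (h1 : f a ≤ c) (h2 : d ≤ f b) : Icc c d ⊆ f '' Icc a b :=
  (Icc_subset_Icc h1 h2).trans (intermediate_value_Icc hab hf.continuousOn)

lemma cover_dec {f : ℝ → ℝ} (hf : Continuous f) {a b c d : ℝ} (hab : a ≤ b)
    (h1 : f b ≤ c) (h2 : d ≤ f a) : Icc c d ⊆ f '' Icc a b :=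
  (Icc_subset_Icc h1 h2).trans (intermediate_value_Icc' hab hf.continuousOn)

def loI (z : ℝ) (x : ℕ → ℝ) (n p j : ℕ) : ℝ :=
  if j ≤ 1 then z else if j ≤ n then x (j - 2) else if j = n + 1 then x n
  else if j ≤ p then x (j - 1) else z

def hiI (z : ℝ) (x : ℕ → ℝ) (n p j : ℕ) : ℝ :=
  if j ≤ 1 then x 0 else if j ≤ n then x (j - 1) else if j = n + 1 then z
  else if j ≤ p then x (j - 2) else x 0

def sigF (m p k : ℕ) : ℕ := if k < m then p - k else k - m

def rnkF (m n p i : ℕ) : ℕ := if i ≤ n then m + i else p - i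

theorem stmt_3 (f : ℝ → ℝ) (hf : Continuous f) (m n : ℕ) (hm : 2 ≤ m) (hn : 2 ≤ n)
    (x : ℕ → ℝ)
    (hcyc : ∀ i < m + n, f (x i) = x ((i + 1) % (m + n)))
    (hdist : ∀ i < m + n, ∀ j < m + n, x i = x j → i = j)
    (hdec : ∀ i, n ≤ i → i + 1 < m + n → x (i + 1) < x i)
    (hmid : x n < x 0)
    (hinc : ∀ i, i + 1 < n → x i < x (i + 1)) :
    ∃ y : ℕ → ℝ,
      (∀ i < m + n + 1, f (y i) = y ((i + 1) % (m + n + 1))) ∧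
      (∀ i < m + n + 1, ∀ j < m + n + 1, y i = y j → i = j) ∧
      (∀ i, n + 1 ≤ i → i + 1 < m + n + 1 → y (i + 1) < y i) ∧
      y (n + 1) < y 0 ∧
      (∀ i, i + 1 < n + 1 → y i < y (i + 1)) := by
  set p := m + n with hp
  have hn1p : n + 1 < p := by omega
  -- values of f on the orbit
  have hfx : ∀ i, i + 1 < p → f (x i) = x (i+1) := by
    intro i hi
    rw [hcyc i (by omega), Nat.mod_eq_of_lt hi]
  have hfxp : f (x (p-1)) = x 0 := by
    rw [hcyc (p-1) (by omega)]
    congr 1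
    have h1 : p - 1 + 1 = p := by omega
    rw [h1, Nat.mod_self]
  -- monotonicity chains
  have key_inc : ∀ j, j < n → ∀ i, i < j → x i < x j := by
    intro j
    induction j with
    | zero => intro _ i hi; omega
    | succ k ih =>
      intro hk i hi
      have hx : x k < x (k+1) := hinc k hk
      rcases Nat.lt_succ_iff_lt_or_eq.mp hi with h | h
      · exact lt_trans (ih (by omega) i h) hx
      · rw [h]; exact hx
  have key_dec : ∀ j, j < p → ∀ i, n ≤ i → i < j → x j < x i := by
    intro j
    induction j with
    | zero => intro _ i _ hi; omega
    | succ k ih =>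
      intro hk i hni hi
      rcases Nat.lt_succ_iff_lt_or_eq.mp hi with h | h
      · have hx : x (k+1) < x k := hdec k (by omega) hk
        exact lt_trans hx (ih (by omega) i hni h)
      · rw [h]; exact hdec k (by omega) hk
  have h01 : x 0 < x 1 := hinc 0 (by omega)
  have hx0n1 : x 0 ≤ x (n-1) := by
    rcases Nat.lt_or_ge 1 n with h | h
    · rcases Nat.eq_or_lt_of_le (show 1 ≤ n - 1 by omega) with h1 | h1
      · rw [← h1]; exact h01.le
      · exact (key_inc (n-1) (by omega) 0 (by omega)).le
    · omega
  have hfxn : f (x n) = x (n+1) := hfx n hn1p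
  have hfx0 : f (x 0) = x 1 := hfx 0 (by omega)
  have hxn1 : x (n+1) < x n := hdec n le_rfl hn1p
  -- the largest fixed point z in [x n, x 0]
  set S : Set ℝ := Icc (x n) (x 0) ∩ {t | f t = t} with hSdef
  have hSclosed : IsClosed S := isClosed_Icc.inter (isClosed_eq hf continuous_id)
  have hSne : S.Nonempty := by
    have hc : ContinuousOn (fun t => f t - t) (Icc (x n) (x 0)) :=
      (hf.sub continuous_id).continuousOn
    have h0 : (0:ℝ) ∈ Icc (f (x n) - x n) (f (x 0) - x 0) := by
      rw [hfxn, hfx0]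
      exact ⟨by linarith, by linarith⟩
    obtain ⟨t, ht, h⟩ := intermediate_value_Icc hmid.le hc h0
    refine ⟨t, ht, ?_⟩
    simp only [mem_setOf_eq]
    have : f t - t = 0 := h
    linarith
  have hSbdd : BddAbove S := BddAbove.mono inter_subset_left bddAbove_Icc
  have hzS : sSup S ∈ S := hSclosed.csSup_mem hSne hSbdd
  set z := sSup S with hzdef
  obtain ⟨⟨hz_ge, hz_le⟩, hzfix⟩ := hzS
  simp only [mem_setOf_eq] at hzfix
  have hz_lt0 : z < x 0 := by
    rcases lt_or_eq_of_le hz_le with h | h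
    · exact h
    · exfalso; rw [h, hfx0] at hzfix; linarith
  have hz_gtn : x n < z := by
    rcases lt_or_eq_of_le hz_ge with h | h
    · exact h
    · exfalso; rw [← h, hfxn] at hzfix; linarith
  have hzmax : ∀ t, z < t → t ≤ x 0 → t < f t := by
    intro t hzt ht0
    by_contra hle
    push_neg at hle
    have hc : ContinuousOn (fun r => f r - r) (Icc t (x 0)) :=
      (hf.sub continuous_id).continuousOn
    have h0 : (0:ℝ) ∈ Icc (f t - t) (f (x 0) - x 0) := by
      rw [hfx0]
      exact ⟨by linarith, by linarith⟩
    obtain ⟨t', ht', h'⟩ := intermediate_value_Icc ht0 hc h0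
    have h'' : f t' = t' := by
      have : f t' - t' = 0 := h'
      linarith
    have htS : t' ∈ S := ⟨⟨by linarith [ht'.1], ht'.2⟩, h''⟩
    have : t' ≤ z := le_csSup hSbdd htS
    linarith [ht'.1]
  -- evaluation lemmas for the interval chain
  have eJR : ∀ j, j ≤ 1 ∨ j = p + 1 → loI z x n p j = z ∧ hiI z x n p j = x 0 := by
    intro j hjc
    unfold loI hiI
    constructor <;> (split_ifs <;> first | rfl | (exfalso; omega))
  have eA : ∀ j, 2 ≤ j → j ≤ n → loI z x n p j = x (j-2) ∧ hiI z x n p j = x (j-1) := by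
    intro j h2 hn2
    unfold loI hiI
    constructor <;> (split_ifs <;> first | rfl | (exfalso; omega))
  have eJL : loI z x n p (n+1) = x n ∧ hiI z x n p (n+1) = z := by
    unfold loI hiI
    constructor <;> (split_ifs <;> first | rfl | (exfalso; omega))
  have eB : ∀ j, n+2 ≤ j → j ≤ p → loI z x n p j = x (j-1) ∧ hiI z x n p j = x (j-2) := by
    intro j h2 hp2
    unfold loI hiI
    constructor <;> (split_ifs <;> first | rfl | (exfalso; omega))
  -- interval chain is well defined
  have hle : ∀ j, j ≤ p + 1 → loI z x n p j ≤ hiI z x n p j := by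
    intro j hj
    rcases Nat.lt_or_ge j 2 with h2 | h2
    · rw [(eJR j (Or.inl (by omega))).1, (eJR j (Or.inl (by omega))).2]
      exact hz_le
    rcases Nat.lt_or_ge n j with hnj | hnj
    · rcases eq_or_ne j (n+1) with rfl | hne
      · rw [eJL.1, eJL.2]; exact hz_ge
      rcases Nat.lt_or_ge p j with hpj | hpj
      · rw [(eJR j (Or.inr (by omega))).1, (eJR j (Or.inr (by omega))).2]
        exact hz_le
      · rw [(eB j (by omega) hpj).1, (eB j (by omega) hpj).2]
        exact (key_dec (j-1) (by omega) (j-2) (by omega) (by omega)).le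
    · rw [(eA j h2 hnj).1, (eA j h2 hnj).2]
      exact (key_inc (j-1) (by omega) (j-2) (by omega)).le
  -- covering relations
  have hcov : ∀ j, j < p + 1 →
      Icc (loI z x n p (j+1)) (hiI z x n p (j+1)) ⊆ f '' Icc (loI z x n p j) (hiI z x n p j) := by
    intro j hj
    rcases Nat.lt_or_ge j 2 with h2 | h2
    · -- j = 0 or j = 1
      have e0 := eJR j (Or.inl (by omega))
      rw [e0.1, e0.2]
      rcases Nat.lt_or_ge j 1 with h1 | h1
      · obtain rfl : j = 0 := by omega
        have e1 := eJR 1 (Or.inl (by omega))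
        rw [e1.1, e1.2]
        exact cover_inc hf hz_le (le_of_eq hzfix) (by rw [hfx0]; exact h01.le)
      · obtain rfl : j = 1 := by omega
        have e1 := eA 2 le_rfl hn
        norm_num at e1
        rw [e1.1, e1.2]
        exact cover_inc hf hz_le (by rw [hzfix]; exact hz_le) (by rw [hfx0])
    rcases Nat.lt_or_ge j n with hjn | hjn
    · -- 2 ≤ j < n : A_{j-2} → A_{j-1}
      obtain ⟨i, rfl⟩ : ∃ i, j = i + 2 := ⟨j - 2, by omega⟩
      have ej := eA (i+2) (by omega) (by omega)
      have ej1 := eA (i+3) (by omega) (by omega)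
      simp only [Nat.add_sub_cancel, show i+2-1 = i+1 by omega, show i+3-2 = i+1 by omega,
        show i+3-1 = i+2 by omega, show i+2+1 = i+3 by omega] at ej ej1 ⊢
      rw [ej.1, ej.2, ej1.1, ej1.2]
      exact cover_inc hf (key_inc (i+1) (by omega) i (by omega)).le
        (by rw [hfx (i) (by omega)]) (by rw [hfx (i+1) (by omega)])
    rcases eq_or_ne j n with heq | hjne
    · -- j = n : A_{n-2} → J_L
      rw [heq]
      have ej := eA n hn le_rfl
      rw [ej.1, ej.2, eJL.1, eJL.2]
      have hfn2 : f (x (n-2)) = x (n-1) := by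
        have := hfx (n-2) (by omega)
        rwa [show n-2+1 = n-1 by omega] at this
      have hfn1 : f (x (n-1)) = x n := by
        have := hfx (n-1) (by omega)
        rwa [show n-1+1 = n by omega] at this
      exact cover_dec hf (key_inc (n-1) (by omega) (n-2) (by omega)).le
        (by rw [hfn1]) (by rw [hfn2]; linarith)
    rcases eq_or_ne j (n+1) with heq | hjne1
    · -- j = n+1 : J_L → B_n
      rw [heq]
      rw [eJL.1, eJL.2]
      have eb := eB (n+2) le_rfl (by omega)
      rw [show n+1+1 = n+2 by rfl, eb.1, eb.2]
      simp only [show n+2-1 = n+1 by omega, Nat.add_sub_cancel]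
      exact cover_inc hf hz_ge (by rw [hfxn]) (by rw [hzfix]; exact hz_ge)
    rcases Nat.lt_or_ge j p with hjp | hjp
    · -- n+2 ≤ j < p : B_{j-2} → B_{j-1}
      have ej := eB j (by omega) (by omega)
      have ej1 := eB (j+1) (by omega) (by omega)
      rw [ej.1, ej.2, ej1.1, ej1.2]
      simp only [Nat.add_sub_cancel, show j+1-2 = j-1 by omega]
      have hf1 : f (x (j-1)) = x j := by
        have := hfx (j-1) (by omega)
        rwa [show j-1+1 = j by omega] at this
      have hf2 : f (x (j-2)) = x (j-1) := by
        have := hfx (j-2) (by omega)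
        rwa [show j-2+1 = j-1 by omega] at this
      exact cover_inc hf (key_dec (j-1) (by omega) (j-2) (by omega) (by omega)).le
        (by rw [hf1]) (by rw [hf2])
    · -- j = p : B_{p-2} → J_R
      obtain rfl : j = p := by omega
      have ej := eB p (by omega) le_rfl
      have e1 := eJR (p+1) (Or.inr rfl)
      rw [ej.1, ej.2, e1.1, e1.2]
      have hf2 : f (x (p-2)) = x (p-1) := by
        have := hfx (p-2) (by omega)
        rwa [show p-2+1 = p-1 by omega] at this
      refine cover_dec hf (key_dec (p-1) (by omega) (p-2) (by omega) (by omega)).le ?_ ?_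
      · rw [hf2]
        have : x (p-1) < x n := key_dec (p-1) (by omega) n le_rfl (by omega)
        linarith
      · rw [hfxp]
  -- the itinerary point
  obtain ⟨w, hwfix, hw⟩ := loop_point hf (loI z x n p) (hiI z x n p) (p+1) hle hcov
    ((eJR (p+1) (Or.inr rfl)).1.trans (eJR 0 (Or.inl (by omega))).1.symm)
    ((eJR (p+1) (Or.inr rfl)).2.trans (eJR 0 (Or.inl (by omega))).2.symm)
  -- orbit iteration formula
  have horb : ∀ t k, k < p → f^[t] (x k) = x ((k + t) % p) := by
    intro t
    induction t with
    | zero => intro k hk; simp [Nat.mod_eq_of_lt hk]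
    | succ t ih =>
      intro k hk
      rw [Function.iterate_succ_apply, hcyc k hk, ih _ (Nat.mod_lt _ (by omega))]
      congr 1
      rw [Nat.mod_add_mod]
      congr 1
      omega
  -- the itinerary point never hits the old orbit
  have hne_x : ∀ j k, k < p → f^[j] w ≠ x k := by
    intro j k hk heq
    have h1 : f^[p+1] (x k) = x k := by
      calc f^[p+1] (x k) = f^[p+1] (f^[j] w) := by rw [heq]
        _ = f^[(p+1)+j] w := (Function.iterate_add_apply f (p+1) j w).symm
        _ = f^[j+(p+1)] w := by rw [Nat.add_comm]
        _ = f^[j] (f^[p+1] w) := Function.iterate_add_apply f j (p+1) w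
        _ = f^[j] w := by rw [hwfix]
        _ = x k := heq
    rw [horb (p+1) k hk] at h1
    have h2 : (k + (p+1)) % p = (k+1) % p := by
      rw [show k + (p+1) = (k+1) + p by omega, Nat.add_mod_right]
    rw [h2] at h1
    have h3 : (k+1) % p = k := hdist _ (Nat.mod_lt _ (by omega)) k hk h1
    rcases Nat.lt_or_ge (k+1) p with h | h
    · rw [Nat.mod_eq_of_lt h] at h3; omega
    · rw [show k+1 = p by omega, Nat.mod_self] at h3; omega
  -- the itinerary point never hits z
  have hne_z : ∀ j, j ≤ p + 1 → f^[j] w ≠ z := by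
    intro j hj heq
    have hwz : w = z := by
      calc w = f^[p+1] w := hwfix.symm
        _ = f^[(p+1-j)+j] w := by congr 1; omega
        _ = f^[p+1-j] (f^[j] w) := Function.iterate_add_apply f (p+1-j) j w
        _ = f^[p+1-j] z := by rw [heq]
        _ = z := Function.iterate_fixed hzfix _
    have h2 : f^[2] w = z := by rw [hwz]; exact Function.iterate_fixed hzfix 2
    have hm2 := hw 2 (by omega)
    rw [(eA 2 le_rfl hn).1, h2] at hm2
    have : x 0 ≤ z := hm2.1
    linarith
  -- open memberships
  have m0 : f^[0] w ∈ Ioo z (x 0) := by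
    have h := hw 0 (by omega)
    rw [(eJR 0 (Or.inl (by omega))).1, (eJR 0 (Or.inl (by omega))).2] at h
    exact ⟨lt_of_le_of_ne h.1 (Ne.symm (hne_z 0 (by omega))), lt_of_le_of_ne h.2 (hne_x 0 0 (by omega))⟩
  have m1 : f^[1] w ∈ Ioo z (x 0) := by
    have h := hw 1 (by omega)
    rw [(eJR 1 (Or.inl (by omega))).1, (eJR 1 (Or.inl (by omega))).2] at h
    exact ⟨lt_of_le_of_ne h.1 (Ne.symm (hne_z 1 (by omega))), lt_of_le_of_ne h.2 (hne_x 1 0 (by omega))⟩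
  have mA : ∀ j, 2 ≤ j → j ≤ n → f^[j] w ∈ Ioo (x (j-2)) (x (j-1)) := by
    intro j h2 hn2
    have h := hw j (by omega)
    rw [(eA j h2 hn2).1, (eA j h2 hn2).2] at h
    exact ⟨lt_of_le_of_ne h.1 (Ne.symm (hne_x j (j-2) (by omega))),
      lt_of_le_of_ne h.2 (hne_x j (j-1) (by omega))⟩
  have mJL : f^[n+1] w ∈ Ioo (x n) z := by
    have h := hw (n+1) (by omega)
    rw [eJL.1, eJL.2] at h
    exact ⟨lt_of_le_of_ne h.1 (Ne.symm (hne_x (n+1) n (by omega))),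
      lt_of_le_of_ne h.2 (hne_z (n+1) (by omega))⟩
  have mB : ∀ j, n+2 ≤ j → j ≤ p → f^[j] w ∈ Ioo (x (j-1)) (x (j-2)) := by
    intro j h2 hp2
    have h := hw j (by omega)
    rw [(eB j h2 hp2).1, (eB j h2 hp2).2] at h
    exact ⟨lt_of_le_of_ne h.1 (Ne.symm (hne_x j (j-1) (by omega))),
      lt_of_le_of_ne h.2 (hne_x j (j-2) (by omega))⟩
  -- order relations for the new orbit
  have O1 : ∀ i, i < n → f^[i] w < f^[i+1] w := by
    intro i hi
    rcases Nat.lt_or_ge i 1 with h1 | h1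
    · obtain rfl : i = 0 := by omega
      have : w < f w := hzmax w m0.1 m0.2.le
      simpa using this
    rcases Nat.lt_or_ge i 2 with h2 | h2
    · obtain rfl : i = 1 := by omega
      have h2' := mA 2 le_rfl hn
      norm_num at h2'
      exact lt_trans m1.2 h2'.1
    · have hu := (mA i h2 (by omega)).2
      have hl := (mA (i+1) (by omega) (by omega)).1
      rw [show i+1-2 = i-1 by omega] at hl
      exact lt_trans hu hl
  have O2 : f^[n+1] w < f^[0] w := lt_trans mJL.2 m0.1
  have O3 : ∀ i, n+1 ≤ i → i < p → f^[i+1] w < f^[i] w := by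
    intro i h1 h2
    rcases eq_or_ne i (n+1) with rfl | hne
    · have hb := mB (n+2) le_rfl (by omega)
      rw [show n+2-2 = n by omega] at hb
      exact lt_trans hb.2 mJL.1
    · have hbi := (mB i (by omega) (by omega)).1
      have hbi1 := (mB (i+1) (by omega) (by omega)).2
      rw [show i+1-2 = i-1 by omega] at hbi1
      exact lt_trans hbi1 hbi
  -- chain in spatial order
  have step : ∀ k, k < p → f^[sigF m p k] w < f^[sigF m p (k+1)] w := by
    intro k hk
    unfold sigF
    split_ifs with h1 h2 h3
    · -- k < m, k+1 < m
      have := O3 (p-k-1) (by omega) (by omega)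
      rw [show p-k-1+1 = p-k by omega] at this
      rw [show p-(k+1) = p-k-1 by omega]
      exact this
    · -- k < m, k+1 = m
      rw [show p - k = n+1 by omega, show k+1-m = 0 by omega]
      exact O2
    · exfalso; omega
    · have := O1 (k-m) (by omega)
      rw [show k-m+1 = k+1-m by omega] at this
      exact this
  have hchain : ∀ b, b ≤ p → ∀ a, a < b → f^[sigF m p a] w < f^[sigF m p b] w := by
    intro b
    induction b with
    | zero => intro _ a ha; omega
    | succ b ih =>
      intro hb a ha
      rcases Nat.lt_succ_iff_lt_or_eq.mp ha with h | h
      · exact lt_trans (ih (by omega) a h) (step b (by omega))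
      · rw [h]; exact step b (by omega)
  have hsr : ∀ i, i ≤ p → sigF m p (rnkF m n p i) = i ∧ rnkF m n p i ≤ p := by
    intro i hi
    unfold sigF rnkF
    split_ifs <;> omega
  -- assemble
  refine ⟨fun i => f^[i % (p+1)] w, ?_, ?_, ?_, ?_, ?_⟩
  · intro i hi
    show f (f^[i % (p+1)] w) = f^[(i + 1) % (p + 1) % (p+1)] w
    have h1 : i % (p+1) = i := Nat.mod_eq_of_lt hi
    rcases Nat.lt_or_ge (i+1) (p+1) with h | h
    · have h2 : (i+1) % (p+1) = i+1 := Nat.mod_eq_of_lt h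
      simp only [h1, h2]
      exact (Function.iterate_succ_apply' f i w).symm
    · obtain rfl : i = p := by omega
      have h2 : (p+1) % (p+1) = 0 := Nat.mod_self _
      simp only [h1, h2, Function.iterate_zero, id_eq]
      rw [← Function.iterate_succ_apply' f p w]
      exact hwfix
  · intro i hi j hj heq
    simp only [Nat.mod_eq_of_lt hi, Nat.mod_eq_of_lt hj] at heq
    have hip : i ≤ p := by omega
    have hjp : j ≤ p := by omega
    rcases lt_trichotomy (rnkF m n p i) (rnkF m n p j) with h | h | h
    · have := hchain _ (hsr j hjp).2 _ h
      rw [(hsr i hip).1, (hsr j hjp).1] at this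
      exact absurd heq (ne_of_lt this)
    · have : sigF m p (rnkF m n p i) = sigF m p (rnkF m n p j) := by rw [h]
      rw [(hsr i hip).1, (hsr j hjp).1] at this
      exact this
    · have := hchain _ (hsr i hip).2 _ h
      rw [(hsr i hip).1, (hsr j hjp).1] at this
      exact absurd heq (ne_of_gt this)
  · intro i h1 h2
    show f^[(i+1) % (p+1)] w < f^[i % (p+1)] w
    rw [Nat.mod_eq_of_lt (by omega : i + 1 < p + 1), Nat.mod_eq_of_lt (by omega : i < p + 1)]
    exact O3 i h1 (by omega)
  · show f^[(n+1) % (p+1)] w < f^[0 % (p+1)] w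
    rw [Nat.mod_eq_of_lt (by omega : n + 1 < p + 1), Nat.zero_mod]
    exact O2
  · intro i h1
    show f^[i % (p+1)] w < f^[(i+1) % (p+1)] w
    rw [Nat.mod_eq_of_lt (by omega : i < p + 1), Nat.mod_eq_of_lt (by omega : i + 1 < p + 1)]
    exact O1 i (by omega)
end

section
/- If f : ℝ → ℝ is continuous and has a periodic orbit of period m+n of type L(m,n) (points x₀,...,x_{m+n-1} with x_{i+1}=f(x_i) cyclically and x_{m+n-1} < ⋯ < x_n < x₀ < x₁ < ⋯ < x_{n-1}), where m,n ≥ 2, then f has a periodic orbit of period m+n+1 of type L(m+1,n), i.e., points y₀,...,y_{m+n} with y_{m+n} < ⋯ < y_n < y₀ < y₁ < ⋯ < y_{n-1}. -/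
lemma cover_core {g : ℝ → ℝ} (hg : Continuous g) {a b c d u v : ℝ}
    (hcd : c ≤ d) (hu : u ∈ Set.Icc a b) (hv : v ∈ Set.Icc a b)
    (huv : u ≤ v) (hgu : g u ≤ c) (hgv : d ≤ g v) :
    ∃ a' b', a ≤ a' ∧ a' ≤ b' ∧ b' ≤ b ∧ (∀ t ∈ Set.Icc a' b', g t ∈ Set.Icc c d) ∧
      g a' = c ∧ g b' = d := by
  obtain ⟨t0, ht0, hgt0⟩ := intermediate_value_Icc huv hg.continuousOn ⟨hgu.trans hcd, hgv⟩
  set S := Set.Icc u v ∩ {t | g t = d} with hSdef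
  have hScomp : IsCompact S := isCompact_Icc.inter_right (isClosed_eq hg continuous_const)
  have hSne : S.Nonempty := ⟨t0, ht0, hgt0⟩
  set b' := sInf S with hb'def
  have hb'S : b' ∈ S := hScomp.sInf_mem hSne
  obtain ⟨⟨hub', hb'v⟩, hgb'⟩ := hb'S
  have hle_d : ∀ t ∈ Set.Icc u b', g t ≤ d := by
    rintro t ⟨hut, htb'⟩
    by_contra h
    push_neg at h
    obtain ⟨t1, ⟨ht1u, ht1t⟩, hgt1⟩ :=
      intermediate_value_Icc hut hg.continuousOn ⟨hgu.trans hcd, h.le⟩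
    have hb't1 : b' ≤ t1 :=
      csInf_le hScomp.bddBelow ⟨⟨ht1u, (ht1t.trans htb').trans hb'v⟩, hgt1⟩
    have ht' : t = b' := le_antisymm htb' (hb't1.trans ht1t)
    rw [ht', hgb'] at h
    exact lt_irrefl d h
  -- now a'
  obtain ⟨t2, ht2, hgt2⟩ :=
    intermediate_value_Icc hub' hg.continuousOn ⟨hgu, by rw [hgb']; exact hcd⟩
  set T := Set.Icc u b' ∩ {t | g t = c} with hTdef
  have hTcomp : IsCompact T := isCompact_Icc.inter_right (isClosed_eq hg continuous_const)
  have hTne : T.Nonempty := ⟨t2, ht2, hgt2⟩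
  set a' := sSup T with ha'def
  have ha'T : a' ∈ T := hTcomp.sSup_mem hTne
  obtain ⟨⟨hua', ha'b'⟩, hga'⟩ := ha'T
  have hge_c : ∀ t ∈ Set.Icc a' b', c ≤ g t := by
    rintro t ⟨hat, htb⟩
    by_contra h
    push_neg at h
    obtain ⟨t1, ⟨ht1t, ht1b⟩, hgt1⟩ :=
      intermediate_value_Icc htb hg.continuousOn ⟨h.le, by rw [hgb']; exact hcd⟩
    have ht1a : t1 ≤ a' :=
      le_csSup hTcomp.bddAbove ⟨⟨(hua'.trans hat).trans ht1t, ht1b⟩, hgt1⟩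
    have ht' : t = a' := le_antisymm (ht1t.trans ht1a) hat
    rw [ht', hga'] at h
    exact lt_irrefl c h
  exact ⟨a', b', hu.1.trans hua', ha'b', hb'v.trans hv.2,
    fun t ht => ⟨hge_c t ht, hle_d t ⟨hua'.trans ht.1, ht.2⟩⟩, hga', hgb'⟩

lemma cover {g : ℝ → ℝ} (hg : Continuous g) {a b c d u v : ℝ}
    (hcd : c ≤ d) (hu : u ∈ Set.Icc a b) (hv : v ∈ Set.Icc a b)
    (hgu : g u ≤ c) (hgv : d ≤ g v) :
    ∃ a' b', a ≤ a' ∧ a' ≤ b' ∧ b' ≤ b ∧ (∀ t ∈ Set.Icc a' b', g t ∈ Set.Icc c d) ∧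
      ((g a' = c ∧ g b' = d) ∨ (g a' = d ∧ g b' = c)) := by
  rcases le_total u v with h | h
  · obtain ⟨a', b', h1, h2, h3, h4, h5, h6⟩ := cover_core hg hcd hu hv h hgu hgv
    exact ⟨a', b', h1, h2, h3, h4, Or.inl ⟨h5, h6⟩⟩
  · have hg' : Continuous (fun t => -(g t)) := hg.neg
    have h1 : (fun t => -(g t)) v ≤ -d := by simpa using hgv
    have h2 : -c ≤ (fun t => -(g t)) u := by simpa using hgu
    obtain ⟨a', b', ha1, ha2, ha3, hmem, h5, h6⟩ :=
      cover_core hg' (neg_le_neg hcd) hv hu h h1 h2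
    refine ⟨a', b', ha1, ha2, ha3, fun t ht => ?_, Or.inr ⟨?_, ?_⟩⟩
    · have := hmem t ht
      constructor <;> [simpa using this.2; simpa using this.1]
    · have : -(g a') = -d := h5
      linarith
    · have : -(g b') = -c := h6
      linarith

lemma chain {f : ℝ → ℝ} (hf : Continuous f) (lo hi : ℕ → ℝ) (N : ℕ)
    (hN0 : lo N = lo 0) (hN1 : hi N = hi 0)
    (hlh : ∀ i, i ≤ N → lo i ≤ hi i)
    (hcov : ∀ i, i < N → ∃ u v, u ∈ Set.Icc (lo i) (hi i) ∧ v ∈ Set.Icc (lo i) (hi i) ∧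
      f u ≤ lo (i+1) ∧ hi (i+1) ≤ f v) :
    ∃ z, f^[N] z = z ∧ ∀ i, i ≤ N → f^[i] z ∈ Set.Icc (lo i) (hi i) := by
  have key : ∀ i, i ≤ N → ∃ a b, a ≤ b ∧ Set.Icc a b ⊆ Set.Icc (lo 0) (hi 0) ∧
      (∀ j, j ≤ i → ∀ t ∈ Set.Icc a b, f^[j] t ∈ Set.Icc (lo j) (hi j)) ∧
      ((f^[i] a = lo i ∧ f^[i] b = hi i) ∨ (f^[i] a = hi i ∧ f^[i] b = lo i)) := by
    intro i
    induction i with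
    | zero =>
      intro _
      refine ⟨lo 0, hi 0, hlh 0 (by omega), subset_rfl, ?_, Or.inl ⟨by simp, by simp⟩⟩
      intro j hj t ht
      obtain rfl := Nat.le_zero.mp hj
      simpa using ht
    | succ i ih =>
      intro hiN
      obtain ⟨a, b, hab, hsub, hmem, hends⟩ := ih (by omega)
      obtain ⟨u, v, hu, hv, hfu, hfv⟩ := hcov i (by omega)
      have himg : Set.Icc (lo i) (hi i) ⊆ f^[i] '' Set.Icc a b := by
        rcases hends with ⟨h1, h2⟩ | ⟨h1, h2⟩
        · have := intermediate_value_Icc hab (hf.iterate i).continuousOn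
          rwa [h1, h2] at this
        · have := intermediate_value_Icc' hab (hf.iterate i).continuousOn
          rwa [h1, h2] at this
      obtain ⟨u', hu', hgu'⟩ := himg hu
      obtain ⟨v', hv', hgv'⟩ := himg hv
      have hgu2 : f^[i+1] u' ≤ lo (i+1) := by
        rw [Function.iterate_succ_apply', hgu']; exact hfu
      have hgv2 : hi (i+1) ≤ f^[i+1] v' := by
        rw [Function.iterate_succ_apply', hgv']; exact hfv
      obtain ⟨a', b', ha1, ha2, ha3, hmem', hends'⟩ :=
        cover (hf.iterate (i+1)) (hlh (i+1) hiN) hu' hv' hgu2 hgv2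
      refine ⟨a', b', ha2, (Set.Icc_subset_Icc ha1 ha3).trans hsub, ?_, hends'⟩
      intro j hj t ht
      rcases eq_or_lt_of_le hj with rfl | hj'
      · exact hmem' t ht
      · exact hmem j (by omega) t ((Set.Icc_subset_Icc ha1 ha3) ht)
  obtain ⟨a, b, hab, hsub, hmem, hends⟩ := key N le_rfl
  have hcont : ContinuousOn (fun t => f^[N] t - t) (Set.Icc a b) :=
    ((hf.iterate N).sub continuous_id).continuousOn
  have hla : lo 0 ≤ a := (hsub ⟨le_rfl, hab⟩).1
  have hhb : b ≤ hi 0 := (hsub ⟨hab, le_rfl⟩).2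
  rcases hends with ⟨h1, h2⟩ | ⟨h1, h2⟩
  · have h0 : (0:ℝ) ∈ Set.Icc (f^[N] a - a) (f^[N] b - b) := by
      constructor
      · rw [h1, hN0]; simp; linarith
      · rw [h2, hN1]; simp; linarith
    obtain ⟨z, hz, hz0⟩ := intermediate_value_Icc hab hcont h0
    have hz0' : f^[N] z = z := by
      have : f^[N] z - z = 0 := hz0
      linarith
    exact ⟨z, hz0', fun i hi => hmem i hi z hz⟩
  · have h0 : (0:ℝ) ∈ Set.Icc (f^[N] b - b) (f^[N] a - a) := by
      constructor
      · rw [h2, hN0]; simp; linarith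
      · rw [h1, hN1]; simp; linarith
    obtain ⟨z, hz, hz0⟩ := intermediate_value_Icc' hab hcont h0
    have hz0' : f^[N] z = z := by
      have : f^[N] z - z = 0 := hz0
      linarith
    exact ⟨z, hz0', fun i hi => hmem i hi z hz⟩

theorem stmt_4 (f : ℝ → ℝ) (hf : Continuous f) (m n : ℕ) (hm : 2 ≤ m) (hn : 2 ≤ n)
    (x : ℕ → ℝ)
    (hcyc : ∀ i < m + n, f (x i) = x ((i + 1) % (m + n)))
    (hdist : ∀ i < m + n, ∀ j < m + n, x i = x j → i = j)
    (hdec : ∀ i, n ≤ i → i + 1 < m + n → x (i + 1) < x i)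
    (hmid : x n < x 0)
    (hinc : ∀ i, i + 1 < n → x i < x (i + 1)) :
    ∃ y : ℕ → ℝ,
      (∀ i < m + n + 1, f (y i) = y ((i + 1) % (m + n + 1))) ∧
      (∀ i < m + n + 1, ∀ j < m + n + 1, y i = y j → i = j) ∧
      (∀ i, n ≤ i → i + 1 < m + n + 1 → y (i + 1) < y i) ∧
      y n < y 0 ∧
      (∀ i, i + 1 < n → y i < y (i + 1)) := by
  -- basic orbit step facts
  have hx : ∀ k, k + 1 < m + n → f (x k) = x (k + 1) := by
    intro k hk
    rw [hcyc k (by omega), Nat.mod_eq_of_lt hk]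
  have hxp : f (x (m + n - 1)) = x 0 := by
    rw [hcyc (m + n - 1) (by omega), show m + n - 1 + 1 = m + n from by omega, Nat.mod_self]
  -- monotonicity facts
  have incr : ∀ i j, i < j → j < n → x i < x j := by
    intro i j hij hj
    induction j with
    | zero => omega
    | succ k ih =>
      rcases Nat.lt_succ_iff_lt_or_eq.mp hij with h | h
      · exact (ih h (by omega)).trans (hinc k (by omega))
      · subst h; exact hinc i (by omega)
  have decr : ∀ i j, n ≤ i → i < j → j < m + n → x j < x i := by
    intro i j hni hij hj
    induction j with
    | zero => omega
    | succ k ih =>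
      rcases Nat.lt_succ_iff_lt_or_eq.mp hij with h | h
      · exact (hdec k (by omega) (by omega)).trans (ih h (by omega))
      · subst h; exact hdec i hni (by omega)
  have hxn1 : f (x n) = x (n + 1) := hx n (by omega)
  have hx01 : f (x 0) = x 1 := hx 0 (by omega)
  have hxn_lt : x (n + 1) < x n := hdec n le_rfl (by omega)
  have h01 : x 0 < x 1 := hinc 0 (by omega)
  -- fixed point c ∈ (x n, x 0)
  obtain ⟨c, hcmem, hc⟩ : ∃ c ∈ Set.Icc (x n) (x 0), f c = c := by
    have hco : ContinuousOn (fun t => f t - t) (Set.Icc (x n) (x 0)) :=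
      (hf.sub continuous_id).continuousOn
    have h0 : (0:ℝ) ∈ Set.Icc (f (x n) - x n) (f (x 0) - x 0) := by
      constructor
      · rw [hxn1]; linarith
      · rw [hx01]; linarith
    obtain ⟨c, hcm, hc0⟩ := intermediate_value_Icc hmid.le hco h0
    have : f c - c = 0 := hc0
    exact ⟨c, hcm, by linarith⟩
  have hcn : x n < c := by
    rcases lt_or_eq_of_le hcmem.1 with h | h
    · exact h
    · exfalso; rw [← h, hxn1] at hc; exact absurd hc (ne_of_lt hxn_lt)
  have hc0 : c < x 0 := by
    rcases lt_or_eq_of_le hcmem.2 with h | h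
    · exact h
    · exfalso; rw [h, hx01] at hc; linarith
  -- point s ∈ (x n, c) with f s = x n
  obtain ⟨s, hsmem, hs⟩ : ∃ s ∈ Set.Icc (x n) c, f s = x n := by
    have h0 : x n ∈ Set.Icc (f (x n)) (f c) := by
      constructor
      · rw [hxn1]; exact hxn_lt.le
      · rw [hc]; exact hcn.le
    exact intermediate_value_Icc hcn.le hf.continuousOn h0
  have hsn : x n < s := by
    rcases lt_or_eq_of_le hsmem.1 with h | h
    · exact h
    · exfalso; rw [← h, hxn1] at hs; exact absurd hs (ne_of_lt hxn_lt)
  have hsc : s < c := by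
    rcases lt_or_eq_of_le hsmem.2 with h | h
    · exact h
    · exfalso; rw [h, hc] at hs; rw [hs] at hcn; linarith
  -- the interval loop
  set N := m + n + 1 with hNdef
  set L : ℕ → ℝ := fun i =>
    if i = 0 ∨ i = N then c else if i = n then s else if i = n + 1 then x n else x (i - 1)
    with hLdef
  set H : ℕ → ℝ := fun i =>
    if i = 0 ∨ i = N then x 0 else if i < n then x i else if i = n then c
    else if i = n + 1 then s else x (i - 2) with hHdef
  have hL0 : L 0 = c := by simp [hLdef]
  have hH0 : H 0 = x 0 := by simp [hHdef]
  have hLN : L N = c := by simp [hLdef]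
  have hHN : H N = x 0 := by simp [hHdef]
  have hLJ : ∀ i, 1 ≤ i → i < n → L i = x (i - 1) := by
    intro i h1 h2
    simp only [hLdef]
    rw [if_neg (by omega), if_neg (by omega), if_neg (by omega)]
  have hHJ : ∀ i, 1 ≤ i → i < n → H i = x i := by
    intro i h1 h2
    simp only [hHdef]
    rw [if_neg (by omega), if_pos h2]
  have hLn : L n = s := by
    simp only [hLdef]
    rw [if_neg (by omega)]; simp
  have hHn : H n = c := by
    simp only [hHdef]
    rw [if_neg (by omega), if_neg (by omega)]; simp
  have hLn1 : L (n + 1) = x n := by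
    simp only [hLdef]
    rw [if_neg (by omega), if_neg (by omega)]; simp
  have hHn1 : H (n + 1) = s := by
    simp only [hHdef]
    rw [if_neg (by omega), if_neg (by omega), if_neg (by omega)]; simp
  have hLI : ∀ i, n + 2 ≤ i → i ≤ m + n → L i = x (i - 1) := by
    intro i h1 h2
    simp only [hLdef]
    rw [if_neg (by omega), if_neg (by omega), if_neg (by omega)]
  have hHI : ∀ i, n + 2 ≤ i → i ≤ m + n → H i = x (i - 2) := by
    intro i h1 h2
    simp only [hHdef]
    rw [if_neg (by omega), if_neg (by omega), if_neg (by omega), if_neg (by omega)]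
  have hlh : ∀ i, i ≤ N → L i ≤ H i := by
    intro i hiN
    have hcase : i = 0 ∨ (1 ≤ i ∧ i < n) ∨ i = n ∨ i = n + 1 ∨ (n + 2 ≤ i ∧ i ≤ m + n) ∨
        i = N := by omega
    rcases hcase with rfl | ⟨h1, h2⟩ | rfl | rfl | ⟨h1, h2⟩ | rfl
    · rw [hL0, hH0]; exact hc0.le
    · rw [hLJ i h1 h2, hHJ i h1 h2]; exact (incr (i - 1) i (by omega) h2).le
    · rw [hLn, hHn]; exact hsc.le
    · rw [hLn1, hHn1]; exact hsn.le
    · rw [hLI i h1 h2, hHI i h1 h2]; exact (decr (i - 2) (i - 1) (by omega) (by omega) (by omega)).le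
    · rw [hLN, hHN]; exact hc0.le
  have hcov : ∀ i, i < N → ∃ u v, u ∈ Set.Icc (L i) (H i) ∧ v ∈ Set.Icc (L i) (H i) ∧
      f u ≤ L (i + 1) ∧ H (i + 1) ≤ f v := by
    intro i hiN
    have hcase : i = 0 ∨ (1 ≤ i ∧ i + 1 < n) ∨ i = n - 1 ∨ i = n ∨ i = n + 1 ∨
        (n + 2 ≤ i ∧ i + 1 ≤ m + n) ∨ i = m + n := by omega
    rcases hcase with rfl | ⟨h1, h2⟩ | h0 | rfl | rfl | ⟨h1, h2⟩ | rfl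
    · -- K_0 = [c, x 0] → K_1 = [x 0, x 1]
      refine ⟨c, x 0, ?_, ?_, ?_, ?_⟩
      · rw [hL0, hH0]; exact ⟨le_rfl, hc0.le⟩
      · rw [hL0, hH0]; exact ⟨hc0.le, le_rfl⟩
      · rw [hc, hLJ 1 le_rfl (by omega)]; exact hc0.le
      · rw [hx01, hHJ 1 le_rfl (by omega)]
    · -- J_i → J_{i+1}
      refine ⟨x (i - 1), x i, ?_, ?_, ?_, ?_⟩
      · rw [hLJ i h1 (by omega), hHJ i h1 (by omega)]
        exact ⟨le_rfl, (incr (i - 1) i (by omega) (by omega)).le⟩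
      · rw [hLJ i h1 (by omega), hHJ i h1 (by omega)]
        exact ⟨(incr (i - 1) i (by omega) (by omega)).le, le_rfl⟩
      · rw [hx (i - 1) (by omega), show i - 1 + 1 = i from by omega,
          hLJ (i + 1) (by omega) (by omega), show i + 1 - 1 = i from by omega]
      · rw [hHJ (i + 1) (by omega) (by omega), hx i (by omega)]
    · -- J_{n-1} → [s, c]
      subst h0
      refine ⟨x (n - 1), x (n - 2), ?_, ?_, ?_, ?_⟩
      · rw [hLJ (n - 1) (by omega) (by omega), hHJ (n - 1) (by omega) (by omega)]
        exact ⟨(incr (n - 1 - 1) (n - 1) (by omega) (by omega)).le, le_rfl⟩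
      · rw [hLJ (n - 1) (by omega) (by omega), hHJ (n - 1) (by omega) (by omega)]
        refine ⟨le_rfl, (incr (n - 1 - 1) (n - 1) (by omega) (by omega)).le⟩
      · rw [hx (n - 1) (by omega), show n - 1 + 1 = n from by omega, hLn]
        exact hsn.le
      · rw [show n - 1 + 1 = n from by omega, hHn, hx (n - 2) (by omega),
          show n - 2 + 1 = n - 1 from by omega]
        rcases Nat.eq_or_lt_of_le (show 1 ≤ n - 1 from by omega) with h | h
        · rw [← h]; exact (hc0.trans h01).le
        · exact (hc0.trans (incr 0 (n - 1) (by omega) (by omega))).le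
    · -- [s, c] → [x n, s]
      refine ⟨s, c, ?_, ?_, ?_, ?_⟩
      · rw [hLn, hHn]; exact ⟨le_rfl, hsc.le⟩
      · rw [hLn, hHn]; exact ⟨hsc.le, le_rfl⟩
      · rw [hs, hLn1]
      · rw [hc, hHn1]; exact hsc.le
    · -- [x n, s] → [x (n+1), x n]
      refine ⟨x n, s, ?_, ?_, ?_, ?_⟩
      · rw [hLn1, hHn1]; exact ⟨le_rfl, hsn.le⟩
      · rw [hLn1, hHn1]; exact ⟨hsn.le, le_rfl⟩
      · rw [hxn1, hLI (n + 1 + 1) (by omega) (by omega), show n + 1 + 1 - 1 = n + 1 from by omega]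
      · rw [hs, hHI (n + 1 + 1) (by omega) (by omega), show n + 1 + 1 - 2 = n from by omega]
    · -- I chain
      refine ⟨x (i - 1), x (i - 2), ?_, ?_, ?_, ?_⟩
      · rw [hLI i h1 (by omega), hHI i h1 (by omega)]
        exact ⟨le_rfl, (decr (i - 2) (i - 1) (by omega) (by omega) (by omega)).le⟩
      · rw [hLI i h1 (by omega), hHI i h1 (by omega)]
        exact ⟨(decr (i - 2) (i - 1) (by omega) (by omega) (by omega)).le, le_rfl⟩
      · rw [hx (i - 1) (by omega), show i - 1 + 1 = i from by omega,
          hLI (i + 1) (by omega) (by omega), show i + 1 - 1 = i from by omega]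
      · rw [hx (i - 2) (by omega), show i - 2 + 1 = i - 1 from by omega,
          hHI (i + 1) (by omega) (by omega), show i + 1 - 2 = i - 1 from by omega]
    · -- last: [x (m+n-1), x (m+n-2)] → [c, x 0]
      refine ⟨x (m + n - 2), x (m + n - 1), ?_, ?_, ?_, ?_⟩
      · rw [hLI (m + n) (by omega) (by omega), hHI (m + n) (by omega) (by omega)]
        exact ⟨(decr (m + n - 2) (m + n - 1) (by omega) (by omega) (by omega)).le, le_rfl⟩
      · rw [hLI (m + n) (by omega) (by omega), hHI (m + n) (by omega) (by omega)]
        exact ⟨le_rfl, (decr (m + n - 2) (m + n - 1) (by omega) (by omega) (by omega)).le⟩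
      · rw [hx (m + n - 2) (by omega), show m + n - 2 + 1 = m + n - 1 from by omega,
          show L (m + n + 1) = c from by rw [← hNdef, hLN]]
        exact ((decr n (m + n - 1) le_rfl (by omega) (by omega)).trans hcn).le
      · rw [hxp, show H (m + n + 1) = x 0 from by rw [← hNdef, hHN]]
  obtain ⟨z, hz1, hz2⟩ := chain hf L H N (by rw [hLN, hL0]) (by rw [hHN, hH0]) hlh hcov
  -- orbit iteration and avoidance lemmas
  have hxiter : ∀ t k, k < m + n → f^[t] (x k) = x ((k + t) % (m + n)) := by
    intro t
    induction t with
    | zero => intro k hk; simp [Nat.mod_eq_of_lt hk]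
    | succ t ih =>
      intro k hk
      rw [Function.iterate_succ_apply', ih k hk,
        hcyc _ (Nat.mod_lt _ (by omega)), Nat.mod_add_mod, Nat.add_assoc]
  have hper : ∀ t, f^[t + (m + n + 1)] z = f^[t] z := by
    intro t; rw [Function.iterate_add_apply, hz1]
  have L1 : ∀ i, ∀ k, k < m + n → f^[i] z ≠ x k := by
    intro i k hk heq
    have h1 : f^[m + n + 1] (x k) = x k := by
      have h : f^[m + n + 1] (f^[i] z) = f^[i] z := by
        rw [← Function.iterate_add_apply, show m + n + 1 + i = i + (m + n + 1) from by omega]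
        exact hper i
      rwa [heq] at h
    have h2 := hxiter (m + n + 1) k hk
    rw [h1] at h2
    have h3 : (k + (m + n + 1)) % (m + n) = k :=
      hdist _ (Nat.mod_lt _ (by omega)) k hk h2.symm
    rw [show k + (m + n + 1) = k + 1 + (m + n) from by omega, Nat.add_mod_right] at h3
    rcases Nat.lt_or_ge (k + 1) (m + n) with h | h
    · rw [Nat.mod_eq_of_lt h] at h3; omega
    · have hkk : k + 1 = m + n := by omega
      rw [hkk, Nat.mod_self] at h3; omega
  have hcz : ∀ t, f^[t] c = c := fun t => Function.iterate_fixed hc t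
  have hperk : ∀ k, f^[k * (m + n + 1)] z = z := by
    intro k
    induction k with
    | zero => simp
    | succ k ih =>
      rw [show (k + 1) * (m + n + 1) = k * (m + n + 1) + (m + n + 1) from by ring,
        Function.iterate_add_apply, hz1, ih]
  have L2 : ∀ i, f^[i] z ≠ c := by
    intro i heq
    have hzc : z = c := by
      have h1 : f^[i * (m + n)] (f^[i] z) = c := by rw [heq]; exact hcz _
      rwa [← Function.iterate_add_apply, show i * (m + n) + i = i * (m + n + 1) from by ring,
        hperk i] at h1
    have h1 := (hz2 1 (by omega)).1
    rw [hLJ 1 le_rfl (by omega), Function.iterate_one, hzc, hc] at h1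
    exact absurd h1 (not_le.mpr hc0)
  have L3a : f^[n] z ≠ s := by
    intro heq
    exact L1 (n + 1) n (by omega) (by rw [Function.iterate_succ_apply', heq, hs])
  have L3b : f^[n + 1] z ≠ s := by
    intro heq
    exact L1 (n + 2) n (by omega) (by rw [Function.iterate_succ_apply', heq, hs])
  -- boundary sequence W and position function
  set W : ℕ → ℝ := fun r =>
    if r < m then x (m + n - 1 - r) else if r = m then s else if r = m + 1 then c
    else x (r - m - 2) with hWdef
  set pos : ℕ → ℕ := fun i => if i = 0 then m + 1 else if i < n then m + 1 + i else m + n - i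
    with hposdef
  have hW1 : ∀ r, r < m → W r = x (m + n - 1 - r) := by
    intro r h; simp only [hWdef]; rw [if_pos h]
  have hW2 : W m = s := by simp [hWdef]
  have hW3 : W (m + 1) = c := by
    simp only [hWdef]; rw [if_neg (by omega), if_neg (by omega)]; simp
  have hW4 : ∀ r, m + 2 ≤ r → W r = x (r - m - 2) := by
    intro r h; simp only [hWdef]
    rw [if_neg (by omega), if_neg (by omega), if_neg (by omega)]
  have hpos0 : pos 0 = m + 1 := by simp [hposdef]
  have hposJ : ∀ i, 1 ≤ i → i < n → pos i = m + 1 + i := by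
    intro i h1 h2; simp only [hposdef]; rw [if_neg (by omega), if_pos h2]
  have hposR : ∀ i, n ≤ i → pos i = m + n - i := by
    intro i h1; simp only [hposdef]; rw [if_neg (by omega), if_neg (by omega)]
  have hwmono : ∀ r, r + 1 ≤ m + n + 1 → W r < W (r + 1) := by
    intro r hr
    have hcase : r + 2 ≤ m ∨ r + 1 = m ∨ r = m ∨ r = m + 1 ∨ (m + 2 ≤ r ∧ r ≤ m + n) := by
      omega
    rcases hcase with h | h | rfl | rfl | ⟨h1, h2⟩
    · rw [hW1 r (by omega), hW1 (r + 1) (by omega)]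
      exact decr (m + n - 1 - (r + 1)) (m + n - 1 - r) (by omega) (by omega) (by omega)
    · rw [hW1 r (by omega), show r + 1 = m from h, hW2, show m + n - 1 - r = n from by omega]
      exact hsn
    · rw [hW2, hW3]; exact hsc
    · rw [hW3, show m + 1 + 1 = m + 2 from by omega, hW4 (m + 2) le_rfl,
        show m + 2 - m - 2 = 0 from by omega]
      exact hc0
    · rw [hW4 r h1, hW4 (r + 1) (by omega)]
      have := incr (r - m - 2) (r + 1 - m - 2) (by omega) (by omega)
      exact this
  have hwlt : ∀ r t, r < t → t ≤ m + n + 1 → W r < W t := by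
    intro r t hrt ht
    induction t with
    | zero => omega
    | succ k ih =>
      rcases Nat.lt_succ_iff_lt_or_eq.mp hrt with h | h
      · exact (ih h (by omega)).trans (hwmono k (by omega))
      · subst h; exact hwmono r ht
  -- strict membership
  have hz3 : ∀ i, i ≤ m + n → W (pos i) < f^[i] z ∧ f^[i] z < W (pos i + 1) := by
    intro i hi
    have hcase : i = 0 ∨ (1 ≤ i ∧ i < n) ∨ i = n ∨ i = n + 1 ∨ (n + 2 ≤ i ∧ i ≤ m + n) := by
      omega
    rcases hcase with rfl | ⟨h1, h2⟩ | h0 | h0 | ⟨h1, h2⟩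
    · have hmm := hz2 0 (by omega)
      rw [hL0, hH0] at hmm
      rw [hpos0, hW3, show m + 1 + 1 = m + 2 from by omega, hW4 (m + 2) le_rfl,
        show m + 2 - m - 2 = 0 from by omega]
      exact ⟨lt_of_le_of_ne hmm.1 (Ne.symm (L2 0)), lt_of_le_of_ne hmm.2 (L1 0 0 (by omega))⟩
    · have hmm := hz2 i (by omega)
      rw [hLJ i h1 h2, hHJ i h1 h2] at hmm
      rw [hposJ i h1 h2, hW4 (m + 1 + i) (by omega), hW4 (m + 1 + i + 1) (by omega),
        show m + 1 + i - m - 2 = i - 1 from by omega, show m + 1 + i + 1 - m - 2 = i from by omega]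
      exact ⟨lt_of_le_of_ne hmm.1 (Ne.symm (L1 i (i - 1) (by omega))),
        lt_of_le_of_ne hmm.2 (L1 i i (by omega))⟩
    · rw [h0]
      have hmm := hz2 n (by omega)
      rw [hLn, hHn] at hmm
      rw [hposR n le_rfl, show m + n - n = m from by omega, hW2,
        show m + 1 = m + 1 from rfl, hW3]
      exact ⟨lt_of_le_of_ne hmm.1 (Ne.symm L3a), lt_of_le_of_ne hmm.2 (L2 n)⟩
    · rw [h0]
      have hmm := hz2 (n + 1) (by omega)
      rw [hLn1, hHn1] at hmm
      rw [hposR (n + 1) (by omega), show m + n - (n + 1) = m - 1 from by omega,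
        hW1 (m - 1) (by omega), show m - 1 + 1 = m from by omega, hW2,
        show m + n - 1 - (m - 1) = n from by omega]
      exact ⟨lt_of_le_of_ne hmm.1 (Ne.symm (L1 (n + 1) n (by omega))),
        lt_of_le_of_ne hmm.2 L3b⟩
    · have hmm := hz2 i (by omega)
      rw [hLI i h1 h2, hHI i h1 h2] at hmm
      rw [hposR i (by omega), hW1 (m + n - i) (by omega), hW1 (m + n - i + 1) (by omega),
        show m + n - 1 - (m + n - i) = i - 1 from by omega,
        show m + n - 1 - (m + n - i + 1) = i - 2 from by omega]
      exact ⟨lt_of_le_of_ne hmm.1 (Ne.symm (L1 i (i - 1) (by omega))),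
        lt_of_le_of_ne hmm.2 (L1 i (i - 2) (by omega))⟩
  have hposle : ∀ j, j ≤ m + n → pos j ≤ m + n := by
    intro j hj; simp only [hposdef]; split_ifs <;> omega
  have horder : ∀ i, i ≤ m + n → ∀ j, j ≤ m + n → pos i < pos j → f^[i] z < f^[j] z := by
    intro i hi j hj hpij
    have h1 := hz3 i hi
    have h2 := hz3 j hj
    have hle : W (pos i + 1) ≤ W (pos j) := by
      rcases eq_or_lt_of_le (Nat.succ_le_of_lt hpij) with h | h
      · have h' : pos i + 1 = pos j := h
        rw [h']
      · exact (hwlt _ _ h (by have := hposle j hj; omega)).le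
    linarith [h1.2, h2.1]
  have hposinj : ∀ i, i ≤ m + n → ∀ j, j ≤ m + n → pos i = pos j → i = j := by
    intro i hi j hj h
    simp only [hposdef] at h
    split_ifs at h <;> omega
  -- conclusion
  refine ⟨fun i => f^[i] z, ?_, ?_, ?_, ?_, ?_⟩
  · intro i hiN
    show f (f^[i] z) = f^[(i + 1) % (m + n + 1)] z
    rcases Nat.lt_or_ge i (m + n) with h | h
    · rw [Nat.mod_eq_of_lt (by omega), Function.iterate_succ_apply']
    · have hi : i = m + n := by omega
      subst hi
      have hstep : f (f^[m + n] z) = f^[m + n + 1] z :=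
        (Function.iterate_succ_apply' f (m + n) z).symm
      rw [Nat.mod_self, hstep, hz1]
      simp
  · intro i hiN j hjN heq
    simp only at heq
    rcases lt_trichotomy (pos i) (pos j) with h | h | h
    · exact absurd heq (ne_of_lt (horder i (by omega) j (by omega) h))
    · exact hposinj i (by omega) j (by omega) h
    · exact absurd heq.symm (ne_of_lt (horder j (by omega) i (by omega) h))
  · intro i hni hiN
    show f^[i + 1] z < f^[i] z
    refine horder (i + 1) (by omega) i (by omega) ?_
    rw [hposR (i + 1) (by omega), hposR i hni]
    omega
  · show f^[n] z < f^[0] z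
    refine horder n (by omega) 0 (by omega) ?_
    rw [hposR n le_rfl, hpos0]
    omega
  · intro i hi1
    show f^[i] z < f^[i + 1] z
    refine horder i (by omega) (i + 1) (by omega) ?_
    rcases Nat.eq_zero_or_pos i with rfl | hpos'
    · rw [hpos0, hposJ 1 le_rfl (by omega)]; omega
    · rw [hposJ i hpos' (by omega), hposJ (i + 1) (by omega) (by omega)]; omega
end

section
/- If f : ℝ → ℝ is continuous and has a periodic orbit of period m+n of type L(m,n) with m,n ≥ 2, then f has a fixed point z₀ admitting a backward orbit (z_{-i})_{i≥0} (f(z_{-i-1}) = z_{-i}, z_0 = z₀) satisfying z_{-1} < z_{-2} < ⋯ < z_{-m} < z₀ and z₀ < z_{-i} < z_{-i+1} for all i ≥ m+1 (i.e., type L(m,∞)). -/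
lemma chain_aux {α : Type} [Inhabited α] (P : ℕ → α → Prop) (R : ℕ → α → α → Prop) (z0 : α)
    (h0 : P 0 z0) (hst : ∀ k t, P k t → ∃ w, P (k + 1) w ∧ R k w t) :
    ∃ z : ℕ → α, z 0 = z0 ∧ (∀ k, P k (z k)) ∧ (∀ k, R k (z (k + 1)) (z k)) := by
  classical
  let g : ℕ → α → α := fun k t => if h : ∃ w, P (k + 1) w ∧ R k w t then h.choose else default
  let z : ℕ → α := fun k => Nat.rec (motive := fun _ => α) z0 g k
  have hz : ∀ k, z (k + 1) = g k (z k) := fun _ => rfl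
  have hP : ∀ k, P k (z k) := by
    intro k
    induction k with
    | zero => exact h0
    | succ k ih =>
      have hex := hst k (z k) ih
      rw [hz k]
      show (if h : ∃ w, P (k + 1) w ∧ R k w (z k) then h.choose else default) ∈ {t | P (k+1) t}
      rw [dif_pos hex]
      exact hex.choose_spec.1
  have hRz : ∀ k, R k (z (k + 1)) (z k) := by
    intro k
    have hex := hst k (z k) (hP k)
    rw [hz k]
    show R k (if h : ∃ w, P (k + 1) w ∧ R k w (z k) then h.choose else default) (z k)
    rw [dif_pos hex]
    exact hex.choose_spec.2
  exact ⟨z, rfl, hP, hRz⟩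

theorem stmt_5 (f : ℝ → ℝ) (hf : Continuous f) (m n : ℕ) (hm : 2 ≤ m) (hn : 2 ≤ n)
    (x : ℕ → ℝ)
    (hcyc : ∀ i < m + n, f (x i) = x ((i + 1) % (m + n)))
    (hdist : ∀ i < m + n, ∀ j < m + n, x i = x j → i = j)
    (hdec : ∀ i, n ≤ i → i + 1 < m + n → x (i + 1) < x i)
    (hmid : x n < x 0)
    (hinc : ∀ i, i + 1 < n → x i < x (i + 1)) :
    ∃ z : ℕ → ℝ,
      f (z 0) = z 0 ∧
      (∀ i, f (z (i + 1)) = z i) ∧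
      (∀ i, 1 ≤ i → i + 1 ≤ m → z i < z (i + 1)) ∧
      z m < z 0 ∧
      (∀ i, m + 1 ≤ i → z 0 < z i) ∧
      (∀ i, m + 1 ≤ i → z (i + 1) < z i) := by
  classical
  -- basic step facts
  have hstep : ∀ i, i + 1 < m + n → f (x i) = x (i + 1) := by
    intro i h
    have h2 := hcyc i (by omega)
    rwa [Nat.mod_eq_of_lt h] at h2
  have hlast : f (x (m + n - 1)) = x 0 := by
    have h2 := hcyc (m + n - 1) (by omega)
    have h3 : (m + n - 1 + 1) % (m + n) = 0 := by
      have h4 : m + n - 1 + 1 = m + n := by omega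
      rw [h4, Nat.mod_self]
    rwa [h3] at h2
  -- monotonicity on the two sides
  have L2 : ∀ j, j < m + n → ∀ i, n ≤ i → i < j → x j < x i := by
    intro j
    induction j with
    | zero => intro _ i _ h; omega
    | succ j ih =>
      intro hj i hi hij
      have hd : x (j + 1) < x j := hdec j (by omega) hj
      rcases Nat.lt_or_ge i j with h | h
      · exact hd.trans (ih (by omega) i hi h)
      · have he : i = j := by omega
        rw [he]; exact hd
  have R2 : ∀ j, j < n → ∀ i, i < j → x i < x j := by
    intro j
    induction j with
    | zero => intro _ i h; omega
    | succ j ih =>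
      intro hj i hij
      have hd : x j < x (j + 1) := hinc j hj
      rcases Nat.lt_or_ge i j with h | h
      · exact (ih (by omega) i h).trans hd
      · have he : i = j := by omega
        rw [he]; exact hd
  have hx0x1 : x 0 < x 1 := hinc 0 (by omega)
  have hxn1 : x (n + 1) < x n := hdec n le_rfl (by omega)
  have hf0 : f (x 0) = x 1 := hstep 0 (by omega)
  have hfn : f (x n) = x (n + 1) := hstep n (by omega)
  have hx0n1 : x 0 < x (n - 1) := R2 (n - 1) (by omega) 0 (by omega)
  -- fixed point: largest fixed point in [x n, x 0]
  have hxn0 : x n ≤ x 0 := le_of_lt hmid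
  have hgc : Continuous (fun y => f y - y) := hf.sub continuous_id
  have h0mem : (0 : ℝ) ∈ Set.Icc ((fun y => f y - y) (x n)) ((fun y => f y - y) (x 0)) := by
    simp only [Set.mem_Icc, hfn, hf0]
    constructor <;> [linarith; linarith]
  obtain ⟨y, hyI, hy⟩ := intermediate_value_Icc hxn0 hgc.continuousOn h0mem
  set F : Set ℝ := Set.Icc (x n) (x 0) ∩ {y | f y = y} with hFdef
  have hFne : F.Nonempty := ⟨y, hyI, by simpa using sub_eq_zero.mp hy⟩
  have hFcl : IsClosed F := isClosed_Icc.inter (isClosed_eq hf continuous_id)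
  have hFcp : IsCompact F := isCompact_Icc.of_isClosed_subset hFcl Set.inter_subset_left
  set z₀ : ℝ := sSup F with hz₀def
  have hz₀F : z₀ ∈ F := hFcp.sSup_mem hFne
  have hz₀l : x n ≤ z₀ := hz₀F.1.1
  have hz₀r : z₀ ≤ x 0 := hz₀F.1.2
  have hz₀fix : f z₀ = z₀ := hz₀F.2
  have hz₀l' : x n < z₀ := by
    rcases eq_or_lt_of_le hz₀l with h | h
    · exfalso; rw [← h] at hz₀fix; rw [hfn] at hz₀fix; linarith
    · exact h
  have hz₀r' : z₀ < x 0 := by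
    rcases eq_or_lt_of_le hz₀r with h | h
    · exfalso; rw [h, hf0] at hz₀fix; linarith
    · exact h
  have hmaxF : ∀ w, w ∈ F → w ≤ z₀ := fun w hw => le_csSup hFcp.bddAbove hw
  -- above z₀, up to x 0, the map is strictly above the diagonal
  have hAbove : ∀ y, z₀ < y → y ≤ x 0 → y < f y := by
    intro u hu1 hu2
    by_contra h
    push_neg at h
    have hne : f u ≠ u := by
      intro he
      have : u ∈ F := ⟨⟨le_of_lt (hz₀l'.trans hu1), hu2⟩, he⟩
      exact absurd (hmaxF u this) (by linarith)
    have hlt : f u < u := lt_of_le_of_ne h hne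
    have h0m : (0 : ℝ) ∈ Set.Icc ((fun y => f y - y) u) ((fun y => f y - y) (x 0)) := by
      simp only [Set.mem_Icc, hf0]
      constructor <;> [linarith; linarith]
    obtain ⟨w, hwI, hw⟩ := intermediate_value_Icc hu2 hgc.continuousOn h0m
    have hwfix : f w = w := by simpa using sub_eq_zero.mp hw
    have : w ∈ F := ⟨⟨le_of_lt (hz₀l'.trans (lt_of_lt_of_le hu1 hwI.1)), hwI.2⟩, hwfix⟩
    have := hmaxF w this
    have : z₀ < w := lt_of_lt_of_le hu1 hwI.1
    linarith [hmaxF w ⟨⟨le_of_lt (hz₀l'.trans (lt_of_lt_of_le hu1 hwI.1)), hwI.2⟩, hwfix⟩]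
  -- locating a point in the right chain
  have exk : ∀ t, x 0 < t → t ≤ x (n - 1) → ∃ k, k + 1 ≤ n - 1 ∧ x k < t ∧ t ≤ x (k + 1) := by
    intro t ht1 ht2
    have main : ∀ j, j ≤ n - 1 → t ≤ x j → ∃ k, k + 1 ≤ n - 1 ∧ x k < t ∧ t ≤ x (k + 1) := by
      intro j
      induction j with
      | zero => intro _ h; linarith
      | succ j ih =>
        intro hj h
        by_cases h2 : t ≤ x j
        · exact ih (by omega) h2
        · exact ⟨j, hj, by linarith, h⟩
    exact main (n - 1) le_rfl ht2
  -- tail step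
  have tailstep : ∀ t, z₀ < t → t ≤ x (n - 1) → ∃ w, z₀ < w ∧ w < t ∧ f w = t := by
    intro t ht1 ht2
    by_cases hc : t ≤ x 0
    · have hft : t < f t := hAbove t ht1 hc
      have htm : t ∈ Set.Icc (f z₀) (f t) := by
        rw [hz₀fix]; exact ⟨le_of_lt ht1, le_of_lt hft⟩
      obtain ⟨w, hwI, hw⟩ := intermediate_value_Icc (le_of_lt ht1) hf.continuousOn htm
      refine ⟨w, ?_, ?_, hw⟩
      · refine lt_of_le_of_ne hwI.1 ?_
        intro he; rw [← he, hz₀fix] at hw; linarith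
      · refine lt_of_le_of_ne hwI.2 ?_
        intro he; rw [he] at hw; linarith
    · push_neg at hc
      obtain ⟨k, hk1, hk2, hk3⟩ := exk t hc ht2
      have hfk : f (x k) = x (k + 1) := hstep k (by omega)
      have hz₀xk : z₀ ≤ x k := by
        rcases Nat.eq_zero_or_pos k with h | h
        · rw [h]; exact le_of_lt hz₀r'
        · have : x 0 < x k := R2 k (by omega) 0 h
          linarith
      have htm : t ∈ Set.Icc (f z₀) (f (x k)) := by
        rw [hz₀fix, hfk]; exact ⟨le_of_lt ht1, hk3⟩
      obtain ⟨w, hwI, hw⟩ := intermediate_value_Icc hz₀xk hf.continuousOn htm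
      refine ⟨w, ?_, lt_of_le_of_lt hwI.2 hk2, hw⟩
      refine lt_of_le_of_ne hwI.1 ?_
      intro he; rw [← he, hz₀fix] at hw; linarith
  -- the invariant
  set P : ℕ → ℝ → Prop := fun k t =>
    (k = 0 ∧ t = z₀) ∨
    (1 ≤ k ∧ k ≤ m - 1 ∧ x (m + n - k) < t ∧ t < x (m + n - k - 1)) ∨
    (k = m ∧ x n < t ∧ t < z₀) ∨
    (m + 1 ≤ k ∧ z₀ < t ∧ t ≤ x (n - 1)) with hPdef
  set R : ℕ → ℝ → ℝ → Prop := fun k w t => f w = t ∧ (m + 1 ≤ k → w < t) with hRdef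
  have hstep' : ∀ k t, P k t → ∃ w, P (k + 1) w ∧ R k w t := by
    intro k t hPt
    rcases hPt with ⟨hk, ht⟩ | ⟨hk1, hk2, ht1, ht2⟩ | ⟨hk, ht1, ht2⟩ | ⟨hk, ht1, ht2⟩
    · -- k = 0 : first preimage, in (x (m+n-1), x (m+n-2))
      subst hk; subst ht
      have hab : x (m + n - 1) < x (m + n - 2) := L2 (m + n - 1) (by omega) (m + n - 2) (by omega) (by omega)
      have hfb : f (x (m + n - 2)) = x (m + n - 1) := by
        have h2 := hstep (m + n - 2) (by omega)
        rwa [show m + n - 2 + 1 = m + n - 1 from by omega] at h2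
      have hxn' : x (m + n - 1) < x n := L2 (m + n - 1) (by omega) n le_rfl (by omega)
      have htm : z₀ ∈ Set.Icc (f (x (m + n - 2))) (f (x (m + n - 1))) := by
        rw [hfb, hlast]
        exact ⟨le_of_lt (hxn'.trans hz₀l'), le_of_lt hz₀r'⟩
      obtain ⟨w, hwI, hw⟩ := intermediate_value_Icc' (le_of_lt hab) hf.continuousOn htm
      have hw1 : x (m + n - 1) < w := by
        refine lt_of_le_of_ne hwI.1 ?_
        intro he; rw [← he, hlast] at hw; linarith
      have hw2 : w < x (m + n - 2) := by
        refine lt_of_le_of_ne hwI.2 ?_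
        intro he; rw [he, hfb] at hw
        have : x (m + n - 1) < z₀ := hxn'.trans hz₀l'
        linarith
      refine ⟨w, Or.inr (Or.inl ⟨le_rfl, by omega, ?_, ?_⟩), hw, fun h => absurd h (by omega)⟩
      · rw [show m + n - (0 + 1) = m + n - 1 from by omega]; exact hw1
      · rw [show m + n - (0 + 1) - 1 = m + n - 2 from by omega]; exact hw2
    · -- 1 ≤ k ≤ m - 1
      by_cases hk3 : k ≤ m - 2
      · -- next preimage in (x (m+n-k-1), x (m+n-k-2))
        have hab : x (m + n - k - 1) < x (m + n - k - 2) :=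
          L2 (m + n - k - 1) (by omega) (m + n - k - 2) (by omega) (by omega)
        have hfa : f (x (m + n - k - 1)) = x (m + n - k) := by
          have h2 := hstep (m + n - k - 1) (by omega)
          rwa [show m + n - k - 1 + 1 = m + n - k from by omega] at h2
        have hfb : f (x (m + n - k - 2)) = x (m + n - k - 1) := by
          have h2 := hstep (m + n - k - 2) (by omega)
          rwa [show m + n - k - 2 + 1 = m + n - k - 1 from by omega] at h2
        have htm : t ∈ Set.Icc (f (x (m + n - k - 1))) (f (x (m + n - k - 2))) := by
          rw [hfa, hfb]; exact ⟨le_of_lt ht1, le_of_lt ht2⟩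
        obtain ⟨w, hwI, hw⟩ := intermediate_value_Icc (le_of_lt hab) hf.continuousOn htm
        have hw1 : x (m + n - k - 1) < w := by
          refine lt_of_le_of_ne hwI.1 ?_
          intro he; rw [← he, hfa] at hw; linarith
        have hw2 : w < x (m + n - k - 2) := by
          refine lt_of_le_of_ne hwI.2 ?_
          intro he; rw [he, hfb] at hw; linarith
        refine ⟨w, Or.inr (Or.inl ⟨by omega, by omega, ?_, ?_⟩), hw, fun h => absurd h (by omega)⟩
        · rw [show m + n - (k + 1) = m + n - k - 1 from by omega]; exact hw1
        · rw [show m + n - (k + 1) - 1 = m + n - k - 2 from by omega]; exact hw2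
      · -- k = m - 1 : preimage in (x n, z₀)
        have hkm : k = m - 1 := by omega
        rw [show m + n - k = n + 1 from by omega] at ht1
        rw [show m + n - k - 1 = n from by omega] at ht2
        have htm : t ∈ Set.Icc (f (x n)) (f z₀) := by
          rw [hfn, hz₀fix]
          exact ⟨le_of_lt ht1, le_of_lt (ht2.trans hz₀l')⟩
        obtain ⟨w, hwI, hw⟩ := intermediate_value_Icc hz₀l hf.continuousOn htm
        have hw1 : x n < w := by
          refine lt_of_le_of_ne hwI.1 ?_
          intro he; rw [← he, hfn] at hw; linarith
        have hw2 : w < z₀ := by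
          refine lt_of_le_of_ne hwI.2 ?_
          intro he; rw [he, hz₀fix] at hw; linarith
        exact ⟨w, Or.inr (Or.inr (Or.inl ⟨by omega, hw1, hw2⟩)), hw, fun h => absurd h (by omega)⟩
    · -- k = m : jump to the right of z₀, into (z₀, x (n-1)]
      have hfb : f (x (n - 1)) = x n := by
        have h2 := hstep (n - 1) (by omega)
        rwa [show n - 1 + 1 = n from by omega] at h2
      have hz₀b : z₀ ≤ x (n - 1) := le_of_lt (hz₀r'.trans hx0n1)
      have htm : t ∈ Set.Icc (f (x (n - 1))) (f z₀) := by
        rw [hfb, hz₀fix]; exact ⟨le_of_lt ht1, le_of_lt ht2⟩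
      obtain ⟨w, hwI, hw⟩ := intermediate_value_Icc' hz₀b hf.continuousOn htm
      have hw1 : z₀ < w := by
        refine lt_of_le_of_ne hwI.1 ?_
        intro he; rw [← he, hz₀fix] at hw; linarith
      exact ⟨w, Or.inr (Or.inr (Or.inr ⟨by omega, hw1, hwI.2⟩)), hw, fun h => absurd h (by omega)⟩
    · -- k ≥ m + 1 : descending tail
      obtain ⟨w, hw1, hw2, hw3⟩ := tailstep t ht1 ht2
      exact ⟨w, Or.inr (Or.inr (Or.inr ⟨by omega, hw1, le_of_lt (lt_of_lt_of_le hw2 ht2)⟩)),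
        hw3, fun _ => hw2⟩
  -- build the backward orbit
  obtain ⟨z, hz0, hPz, hRz⟩ := chain_aux P R z₀ (Or.inl ⟨rfl, rfl⟩) hstep'
  refine ⟨z, ?_, fun i => (hRz i).1, ?_, ?_, ?_, fun i h => (hRz i).2 h⟩
  · rw [hz0]; exact hz₀fix
  · -- increasing prefix
    intro i h1 h2
    have Pi := hPz i
    have Pi1 := hPz (i + 1)
    rcases Pi with ⟨h, _⟩ | ⟨_, hb1, _, hb2⟩ | ⟨h, _, _⟩ | ⟨h, _, _⟩
    · omega
    · rcases Pi1 with ⟨h, _⟩ | ⟨_, _, hc1, _⟩ | ⟨_, hc1, _⟩ | ⟨h, _, _⟩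
      · omega
      · rw [show m + n - (i + 1) = m + n - i - 1 from by omega] at hc1
        exact hb2.trans hc1
      · rw [show m + n - i - 1 = n from by omega] at hb2
        exact hb2.trans hc1
      · omega
    · omega
    · omega
  · -- z m < z 0
    have Pm := hPz m
    rcases Pm with ⟨h, _⟩ | ⟨_, hb, _, _⟩ | ⟨_, _, hb⟩ | ⟨h, _, _⟩
    · omega
    · omega
    · rw [hz0]; exact hb
    · omega
  · -- tail above z 0
    intro i h
    have Pi := hPz i
    rcases Pi with ⟨h2, _⟩ | ⟨_, hb, _, _⟩ | ⟨h2, _, _⟩ | ⟨_, hb, _⟩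
    · omega
    · omega
    · omega
    · rw [hz0]; exact hb
end

section
/- If f : ℝ → ℝ is continuous and has a fixed point z₀ with a backward orbit (z_{-i}) satisfying z_{-1} < z_{-2} < ⋯ < z_{-m} < z₀ < ⋯ < z_{-i} < z_{-i+1} < ⋯ < z_{-m-1} for some m ≥ 2 (type L(m,∞)), then f has a fixed point with a backward orbit of type L(m+1,∞), i.e., a fixed point w₀ with backward orbit (w_{-i}) satisfying w_{-1} < ⋯ < w_{-m-1} < w₀ and w₀ < w_{-j} < w_{-j+1} for all j ≥ m+2. -/
/-- Auxiliary: iterate a "find a smaller preimage" step to get an infinite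
decreasing backward-orbit tail. -/
lemma tail_exists {f : ℝ → ℝ} (P : ℝ → Prop)
    (step : ∀ x, P x → ∃ y, P y ∧ y < x ∧ f y = x) (d : ℝ) (hd : P d) :
    ∃ t : ℕ → ℝ, t 0 = d ∧ ∀ n, P (t n) ∧ t (n + 1) < t n ∧ f (t (n + 1)) = t n := by
  choose g hg1 hg2 hg3 using step
  let T : ℕ → {x : ℝ // P x} := fun n =>
    Nat.rec ⟨d, hd⟩ (fun _ p => ⟨g p.1 p.2, hg1 p.1 p.2⟩) n
  exact ⟨fun n => (T n).1, rfl, fun n => ⟨(T n).2, hg2 _ _, hg3 _ _⟩⟩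

theorem stmt_6 (f : ℝ → ℝ) (hf : Continuous f) (m : ℕ) (hm : 2 ≤ m)
    (z : ℕ → ℝ)
    (hfix : f (z 0) = z 0)
    (hback : ∀ i, f (z (i + 1)) = z i)
    (hinc : ∀ i, 1 ≤ i → i + 1 ≤ m → z i < z (i + 1))
    (hmid : z m < z 0)
    (habove : ∀ i, m + 1 ≤ i → z 0 < z i)
    (hdec : ∀ i, m + 1 ≤ i → z (i + 1) < z i) :
    ∃ w : ℕ → ℝ,
      f (w 0) = w 0 ∧
      (∀ i, f (w (i + 1)) = w i) ∧
      (∀ i, 1 ≤ i → i + 1 ≤ m + 1 → w i < w (i + 1)) ∧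
      w (m + 1) < w 0 ∧
      (∀ j, m + 2 ≤ j → w 0 < w j) ∧
      (∀ j, m + 2 ≤ j → w (j + 1) < w j) := by
  -- The decreasing tail of z and its limit L
  set s : ℕ → ℝ := fun n => z (n + (m + 1)) with hs
  have hs_anti : Antitone s := by
    apply antitone_nat_of_succ_le
    intro n
    have := hdec (n + (m + 1)) (by omega)
    simp only [hs]
    have e : n + 1 + (m + 1) = n + (m + 1) + 1 := by omega
    rw [e]
    exact this.le
  have hs_bdd : BddBelow (Set.range s) := by
    refine ⟨z 0, ?_⟩
    rintro x ⟨n, rfl⟩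
    exact (habove (n + (m + 1)) (by omega)).le
  set L : ℝ := ⨅ n, s n with hL
  have hz0L : z 0 ≤ L := le_ciInf fun n => (habove (n + (m + 1)) (by omega)).le
  have hLle : ∀ j, m + 1 ≤ j → L ≤ z j := by
    intro j hj
    have : s (j - (m + 1)) = z j := by simp only [hs]; congr 1; omega
    calc L ≤ s (j - (m + 1)) := ciInf_le hs_bdd _
      _ = z j := this
  have hLlt : ∀ j, m + 1 ≤ j → L < z j := fun j hj =>
    lt_of_le_of_lt (hLle (j + 1) (by omega)) (hdec j hj)
  -- L is a fixed point
  have hsL : Filter.Tendsto s Filter.atTop (nhds L) := tendsto_atTop_ciInf hs_anti hs_bdd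
  have hfL : f L = L := by
    have h1 : Filter.Tendsto (fun n => s (n + 1)) Filter.atTop (nhds L) :=
      hsL.comp (Filter.tendsto_add_atTop_nat 1)
    have h2 : Filter.Tendsto (fun n => f (s (n + 1))) Filter.atTop (nhds (f L)) :=
      (hf.tendsto L).comp h1
    have h3 : (fun n => f (s (n + 1))) = s := by
      funext n
      simp only [hs]
      have e : n + 1 + (m + 1) = n + (m + 1) + 1 := by omega
      rw [e]; exact hback _
    rw [h3] at h2
    exact tendsto_nhds_unique h2 hsL
  -- find c ∈ (z m, z 0) with f c = z m
  have hm1 : z (m - 1) < z m := by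
    have := hinc (m - 1) (by omega) (by omega)
    have e : m - 1 + 1 = m := by omega
    rwa [e] at this
  have hfzm : f (z m) = z (m - 1) := by
    have := hback (m - 1)
    have e : m - 1 + 1 = m := by omega
    rwa [e] at this
  obtain ⟨c, hcmem, hfc⟩ : ∃ c ∈ Set.Ioo (z m) (z 0), f c = z m := by
    have h := intermediate_value_Ioo (le_of_lt hmid) hf.continuousOn (f := f)
    have : z m ∈ Set.Ioo (f (z m)) (f (z 0)) := by
      rw [hfzm, hfix]; exact ⟨hm1, hmid⟩
    obtain ⟨c, hc, hfc⟩ := h this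
    exact ⟨c, hc, hfc⟩
  -- find d ∈ (L, z (m+1)) with f d = c
  have hLltm1 : L < z (m + 1) := hLlt (m + 1) le_rfl
  obtain ⟨d, hdmem, hfd⟩ : ∃ d ∈ Set.Ioo L (z (m + 1)), f d = c := by
    have h := intermediate_value_Ioo' (le_of_lt hLltm1) hf.continuousOn (f := f)
    have : c ∈ Set.Ioo (f (z (m + 1))) (f L) := by
      rw [hback m, hfL]
      exact ⟨hcmem.1, lt_of_lt_of_le hcmem.2 hz0L⟩
    obtain ⟨d, hd, hfd⟩ := h this
    exact ⟨d, hd, hfd⟩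
  -- the tail step: any x ∈ (L, z (m+1)) has a preimage in (L, x)
  set P : ℝ → Prop := fun x => L < x ∧ x < z (m + 1) with hP
  have step : ∀ x, P x → ∃ y, P y ∧ y < x ∧ f y = x := by
    rintro x ⟨hx1, hx2⟩
    -- find j ≥ m+1 with z (j+1) < x ≤ z j
    have hex : ∃ n, z (n + (m + 1)) < x := by
      obtain ⟨n, hn⟩ := (hsL.eventually_lt_const hx1).exists
      exact ⟨n, hn⟩
    obtain ⟨j, hjge, hj1, hj2⟩ : ∃ j, m + 1 ≤ j ∧ z (j + 1) < x ∧ x ≤ z j := by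
      have hfind := Nat.find_spec hex
      rcases Nat.eq_zero_or_pos (Nat.find hex) with h0 | hpos
      · exfalso
        rw [h0] at hfind
        simp only [Nat.zero_add] at hfind
        linarith
      · obtain ⟨k, hk⟩ : ∃ k, Nat.find hex = k + 1 := ⟨Nat.find hex - 1, by omega⟩
        have hkmin : ¬ z (k + (m + 1)) < x := Nat.find_min hex (by omega)
        rw [hk] at hfind
        refine ⟨k + (m + 1), by omega, ?_, not_lt.mp hkmin⟩
        have e : k + (m + 1) + 1 = k + 1 + (m + 1) := by omega
        rwa [e]
    -- IVT on [z (j+2), z (j+1)]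
    have hord : z (j + 1 + 1) ≤ z (j + 1) := (hdec (j + 1) (by omega)).le
    have h := intermediate_value_Ioc hord hf.continuousOn (f := f)
    have hx : x ∈ Set.Ioc (f (z (j + 1 + 1))) (f (z (j + 1))) := by
      rw [hback (j + 1), hback j]; exact ⟨hj1, hj2⟩
    obtain ⟨y, hy, hfy⟩ := h hx
    have hyL : L < y := lt_of_le_of_lt (hLle (j + 1 + 1) (by omega)) hy.1
    have hyx : y < x := lt_of_le_of_lt hy.2 hj1
    exact ⟨y, ⟨hyL, lt_trans hyx hx2⟩, hyx, hfy⟩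
  obtain ⟨t, ht0, htp⟩ := tail_exists P step d ⟨hdmem.1, hdmem.2⟩
  -- define w
  refine ⟨fun i => if i ≤ m then z i else if i = m + 1 then c else t (i - (m + 2)),
    ?_, ?_, ?_, ?_, ?_, ?_⟩
  · simp only [Nat.zero_le, if_pos]
    exact hfix
  · intro i
    rcases lt_trichotomy i m with hi | hi | hi
    · have h1 : i + 1 ≤ m := by omega
      simp only [if_pos h1, if_pos (by omega : i ≤ m)]
      exact hback i
    · subst hi
      simp only [if_neg (by omega : ¬ i + 1 ≤ i), if_pos (le_refl i),
        if_pos (by omega : i + 1 = i + 1)]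
      exact hfc
    · rcases eq_or_lt_of_le (by omega : m + 1 ≤ i) with hi' | hi'
      · have e1 : ¬ i + 1 ≤ m := by omega
        have e2 : ¬ i + 1 = m + 1 := by omega
        have e3 : ¬ i ≤ m := by omega
        simp only [if_neg e1, if_neg e2, if_neg e3, if_pos hi'.symm]
        have e4 : i + 1 - (m + 2) = 0 := by omega
        rw [e4, ht0]
        rw [hfd]
      · have e1 : ¬ i + 1 ≤ m := by omega
        have e2 : ¬ i + 1 = m + 1 := by omega
        have e3 : ¬ i ≤ m := by omega
        have e4 : ¬ i = m + 1 := by omega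
        simp only [if_neg e1, if_neg e2, if_neg e3, if_neg e4]
        have e5 : i + 1 - (m + 2) = (i - (m + 2)) + 1 := by omega
        rw [e5]
        exact (htp (i - (m + 2))).2.2
  · intro i hi1 hi2
    rcases lt_or_eq_of_le (by omega : i ≤ m) with hi | hi
    · simp only [if_pos (by omega : i ≤ m), if_pos (by omega : i + 1 ≤ m)]
      exact hinc i hi1 (by omega)
    · subst hi
      simp only [if_pos (le_refl i), if_neg (by omega : ¬ i + 1 ≤ i),
        if_pos (by omega : i + 1 = i + 1)]
      exact hcmem.1
  · simp only [if_neg (by omega : ¬ m + 1 ≤ m), if_pos (by omega : m + 1 = m + 1),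
      if_pos (Nat.zero_le m)]
    exact hcmem.2
  · intro j hj
    have e1 : ¬ j ≤ m := by omega
    have e2 : ¬ j = m + 1 := by omega
    simp only [if_pos (Nat.zero_le m), if_neg e1, if_neg e2]
    exact lt_of_le_of_lt hz0L (htp (j - (m + 2))).1.1
  · intro j hj
    have e1 : ¬ j ≤ m := by omega
    have e2 : ¬ j = m + 1 := by omega
    have e3 : ¬ j + 1 ≤ m := by omega
    have e4 : ¬ j + 1 = m + 1 := by omega
    simp only [if_neg e1, if_neg e2, if_neg e3, if_neg e4]
    have e5 : j + 1 - (m + 2) = (j - (m + 2)) + 1 := by omega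
    rw [e5]
    exact (htp (j - (m + 2))).2.1
end

section
/- If f : ℝ → ℝ is continuous and has a period-3 point x₀ with orbit x₂ < x₀ < x₁ (where x₁ = f(x₀), x₂ = f(x₁), x₀ = f(x₂)), then f² = f ∘ f has a periodic point y₀ of period 4 whose f²-orbit y₀, y₁, y₂, y₃ satisfies y₃ < y₂ < y₀ < y₁ (type L²(2,2)). -/
open Set

/-- Exact pullback lemma, reversing orientation: if `f p ≥ v` and `f q ≤ u` with
`u ≤ v`, then there is a subinterval `[p', q'] ⊆ [p, q]` with `f p' = v`, `f q' = u`
and `f` mapping `[p', q']` into `[u, v]`. -/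
lemma rev_pullback (f : ℝ → ℝ) (hf : Continuous f) {p q u v : ℝ}
    (hpq : p ≤ q) (huv : u ≤ v) (hp : v ≤ f p) (hq : f q ≤ u) :
    ∃ p' q', p ≤ p' ∧ p' ≤ q' ∧ q' ≤ q ∧ f p' = v ∧ f q' = u ∧
      ∀ x, p' ≤ x → x ≤ q' → u ≤ f x ∧ f x ≤ v := by
  have hcont : ContinuousOn f (Icc p q) := hf.continuousOn
  -- the set of points of [p,q] mapping to u
  set S : Set ℝ := Icc p q ∩ f ⁻¹' {u} with hSdef
  have hSclosed : IsClosed S := isClosed_Icc.inter (isClosed_singleton.preimage hf)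
  have hSne : S.Nonempty := by
    obtain ⟨x0, hx0, hfx0⟩ := intermediate_value_Icc' hpq hcont ⟨hq, huv.trans hp⟩
    exact ⟨x0, hx0, hfx0⟩
  have hSbdd : BddBelow S := ⟨p, fun x hx => hx.1.1⟩
  set q0 : ℝ := sInf S with hq0def
  have hq0S : q0 ∈ S := hSclosed.csInf_mem hSne hSbdd
  have hq0p : p ≤ q0 := hq0S.1.1
  have hq0q : q0 ≤ q := hq0S.1.2
  have hfq0 : f q0 = u := hq0S.2
  -- before q0, f stays above u
  have low : ∀ x, p ≤ x → x < q0 → ¬ f x ≤ u := by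
    intro x hpx hxq0 hfx
    obtain ⟨z, hz, hfz⟩ := intermediate_value_Icc' hpx (hf.continuousOn)
      (show u ∈ Icc (f x) (f p) from ⟨hfx, huv.trans hp⟩)
    have hzS : z ∈ S := ⟨⟨hz.1, le_trans hz.2 (le_trans hxq0.le hq0q)⟩, hfz⟩
    have := csInf_le hSbdd hzS
    have : z < q0 := lt_of_le_of_lt hz.2 hxq0
    have := csInf_le hSbdd hzS
    linarith
  -- the set of points of [p, q0] mapping to v
  set T : Set ℝ := Icc p q0 ∩ f ⁻¹' {v} with hTdef
  have hTclosed : IsClosed T := isClosed_Icc.inter (isClosed_singleton.preimage hf)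
  have hTne : T.Nonempty := by
    obtain ⟨x0, hx0, hfx0⟩ := intermediate_value_Icc' hq0p (hf.continuousOn)
      (show v ∈ Icc (f q0) (f p) from ⟨by rw [hfq0]; exact huv, hp⟩)
    exact ⟨x0, hx0, hfx0⟩
  have hTbdd : BddAbove T := ⟨q0, fun x hx => hx.1.2⟩
  set p' : ℝ := sSup T with hp'def
  have hp'T : p' ∈ T := hTclosed.csSup_mem hTne hTbdd
  have hp'p : p ≤ p' := hp'T.1.1
  have hp'q0 : p' ≤ q0 := hp'T.1.2
  have hfp' : f p' = v := hp'T.2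
  -- after p', f stays below v
  have high : ∀ x, p' < x → x ≤ q0 → ¬ v ≤ f x := by
    intro x h1 h2 hvfx
    obtain ⟨z, hz, hfz⟩ := intermediate_value_Icc' h2 (hf.continuousOn)
      (show v ∈ Icc (f q0) (f x) from ⟨by rw [hfq0]; exact huv, hvfx⟩)
    have hzT : z ∈ T := ⟨⟨le_trans hp'p (le_trans h1.le hz.1), hz.2⟩, hfz⟩
    have := le_csSup hTbdd hzT
    linarith [hz.1]
  refine ⟨p', q0, hp'p, hp'q0, hq0q, hfp', hfq0, ?_⟩
  intro x h1 h2
  constructor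
  · rcases eq_or_lt_of_le h2 with rfl | hlt
    · rw [hfq0]
    · by_contra hc
      push_neg at hc
      exact low x (le_trans hp'p h1) hlt hc.le
  · rcases eq_or_lt_of_le h1 with rfl | hlt
    · rw [hfp']
    · by_contra hc
      push_neg at hc
      exact high x hlt h2 hc.le

/-- Exact pullback lemma, preserving orientation. -/
lemma pres_pullback (f : ℝ → ℝ) (hf : Continuous f) {p q u v : ℝ}
    (hpq : p ≤ q) (huv : u ≤ v) (hp : f p ≤ u) (hq : v ≤ f q) :
    ∃ p' q', p ≤ p' ∧ p' ≤ q' ∧ q' ≤ q ∧ f p' = u ∧ f q' = v ∧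
      ∀ x, p' ≤ x → x ≤ q' → u ≤ f x ∧ f x ≤ v := by
  obtain ⟨a', b', h1, h2, h3, h4, h5, h6⟩ :=
    rev_pullback (fun x => f (-x)) (hf.comp continuous_neg)
      (p := -q) (q := -p) (by linarith) huv (by simpa) (by simpa)
  refine ⟨-b', -a', by linarith, by linarith, by linarith, by simpa using h5,
    by simpa using h4, ?_⟩
  intro x hx1 hx2
  have := h6 (-x) (by linarith) (by linarith)
  simpa using this

theorem stmt_8 (f : ℝ → ℝ) (hf : Continuous f)
    (x0 x1 x2 : ℝ)
    (h01 : f x0 = x1) (h12 : f x1 = x2) (h20 : f x2 = x0)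
    (hord1 : x2 < x0) (hord2 : x0 < x1) :
    ∃ y0 y1 y2 y3 : ℝ,
      (f ∘ f) y0 = y1 ∧ (f ∘ f) y1 = y2 ∧ (f ∘ f) y2 = y3 ∧ (f ∘ f) y3 = y0 ∧
      y3 < y2 ∧ y2 < y0 ∧ y0 < y1 := by
  -- Step 1: the branch C = [γ1, γ2] ⊆ [x0, x1] with f γ1 = x0, f γ2 = x2,
  -- mapping into [x2, x0].
  obtain ⟨γ1, γ2, hγ1b, hγ12, hγ2c, hfγ1, hfγ2, hRC⟩ :=
    rev_pullback f hf (p := x0) (q := x1) (u := x2) (v := x0) hord2.le hord1.le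
      (by rw [h01]; exact hord2.le) (by rw [h12])
  -- Step 2: the branch B = [β1, β2] ⊆ [x0, γ1] with f β1 = x1, f β2 = x0,
  -- mapping into [x0, x1].  Note B lies to the left of C.
  obtain ⟨β1, β2, hβ1b, hβ12, hβ2γ1, hfβ1, hfβ2, hRB⟩ :=
    rev_pullback f hf (p := x0) (q := γ1) (u := x0) (v := x1) hγ1b hord2.le
      (by rw [h01]) (by rw [hfγ1])
  -- Step 3: L7 ⊆ [x0, x1] with f L7 ⊆ [γ1, γ2], endpoints to endpoints.
  obtain ⟨p7, q7, h7a, h7b, h7c, hfp7, hfq7, hR7⟩ :=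
    rev_pullback f hf (p := x0) (q := x1) (u := γ1) (v := γ2) hord2.le hγ12
      (by rw [h01]; exact hγ2c) (by rw [h12]; exact hord1.le.trans hγ1b)
  -- Step 4: L6 ⊆ [x2, x0] with f L6 ⊆ L7.
  obtain ⟨p6, q6, h6a, h6b, h6c, hfp6, hfq6, hR6⟩ :=
    pres_pullback f hf (p := x2) (q := x0) (u := p7) (v := q7) hord1.le h7b
      (by rw [h20]; exact h7a) (by rw [h01]; exact h7c)
  -- Step 5: L5 ⊆ [x0, x1] with f L5 ⊆ L6.
  obtain ⟨p5, q5, h5a, h5b, h5c, hfp5, hfq5, hR5⟩ :=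
    rev_pullback f hf (p := x0) (q := x1) (u := p6) (v := q6) hord2.le h6b
      (by rw [h01]; exact h6c.trans hord2.le) (by rw [h12]; exact h6a)
  -- Step 6: L4 ⊆ B with f L4 ⊆ L5.
  obtain ⟨p4, q4, h4a, h4b, h4c, hfp4, hfq4, hR4⟩ :=
    rev_pullback f hf (p := β1) (q := β2) (u := p5) (v := q5) hβ12 h5b
      (by rw [hfβ1]; exact h5c) (by rw [hfβ2]; exact h5a)
  -- Step 7: L3 ⊆ [x2, x0] with f L3 ⊆ L4.
  obtain ⟨p3, q3, h3a, h3b, h3c, hfp3, hfq3, hR3⟩ :=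
    pres_pullback f hf (p := x2) (q := x0) (u := p4) (v := q4) hord1.le h4b
      (by rw [h20]; exact hβ1b.trans h4a)
      (by rw [h01]; exact le_trans h4c (le_trans hβ2γ1 (hγ12.trans hγ2c)))
  -- Step 8: L2 ⊆ C with f L2 ⊆ L3.
  obtain ⟨p2, q2, h2a, h2b, h2c, hfp2, hfq2, hR2⟩ :=
    rev_pullback f hf (p := γ1) (q := γ2) (u := p3) (v := q3) hγ12 h3b
      (by rw [hfγ1]; exact h3c) (by rw [hfγ2]; exact h3a)
  -- Step 9: L1 ⊆ [q3, x0] (to the right of L3!) with f L1 ⊆ L2.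
  obtain ⟨p1, q1, h1a, h1b, h1c, hfp1, hfq1, hR1⟩ :=
    pres_pullback f hf (p := q3) (q := x0) (u := p2) (v := q2) h3c h2b
      (by rw [hfq3]; exact (h4c.trans hβ2γ1).trans h2a) (by rw [h01]; exact (h2c.trans hγ2c))
  -- Step 10: L0 ⊆ [γ1, p2] (to the left of L2!) with f L0 ⊆ L1.
  obtain ⟨p0, q0, h0a, h0b, h0c, hfp0, hfq0, hR0⟩ :=
    rev_pullback f hf (p := γ1) (q := p2) (u := p1) (v := q1) h2a h1b
      (by rw [hfγ1]; exact h1c) (by rw [hfp2]; exact h1a)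
  -- The eighth iterate of f
  set F : ℝ → ℝ := fun x => f (f (f (f (f (f (f (f x))))))) with hF
  have hFcont : Continuous F := by
    rw [hF]
    fun_prop
  -- endpoint computations
  have hFp0 : F p0 = γ2 := by
    simp only [hF]
    rw [hfp0, hfq1, hfq2, hfp3, hfp4, hfq5, hfp6, hfp7]
  have hFq0 : F q0 = γ1 := by
    simp only [hF]
    rw [hfq0, hfp1, hfp2, hfq3, hfq4, hfp5, hfq6, hfq7]
  -- find the fixed point of F in [p0, q0]
  have hivt : ∃ y ∈ Icc p0 q0, F y - y = 0 := by
    have hcont : ContinuousOn (fun x => F x - x) (Icc p0 q0) :=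
      (hFcont.sub continuous_id).continuousOn
    have h1 : F q0 - q0 ≤ 0 := by rw [hFq0]; linarith
    have h2 : 0 ≤ F p0 - p0 := by
      rw [hFp0]
      have : p0 ≤ γ2 := le_trans h0b (le_trans h0c (le_trans h2b h2c))
      linarith
    obtain ⟨y, hy, hy0⟩ := intermediate_value_Icc' h0b hcont ⟨h1, h2⟩
    exact ⟨y, hy, hy0⟩
  obtain ⟨y, hy, hFy⟩ := hivt
  have hFyy : F y = y := by linarith [hFy]
  -- orbit memberships
  have m1 := hR0 y hy.1 hy.2
  have m2 := hR1 (f y) m1.1 m1.2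
  have m3 := hR2 (f (f y)) m2.1 m2.2
  have m4 := hR3 (f (f (f y))) m3.1 m3.2
  have m5 := hR4 (f (f (f (f y)))) m4.1 m4.2
  have m6 := hR5 (f (f (f (f (f y))))) m5.1 m5.2
  have m7 := hR6 (f (f (f (f (f (f y)))))) m6.1 m6.2
  set y0 : ℝ := y with hy0def
  set y1 : ℝ := f (f y) with hy1def
  set y2 : ℝ := f (f (f (f y))) with hy2def
  set y3 : ℝ := f (f (f (f (f (f y))))) with hy3def
  have e0 : (f ∘ f) y0 = y1 := rfl
  have e1 : (f ∘ f) y1 = y2 := rfl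
  have e2 : (f ∘ f) y2 = y3 := rfl
  have e3 : (f ∘ f) y3 = y0 := hFyy
  -- weak inequalities
  have w32 : y3 ≤ y2 := by
    -- y3 ≤ q6 ≤ x0 ≤ β1 ≤ p4 ≤ y2
    have h1 : y3 ≤ q6 := m6.2
    have h2 : p4 ≤ y2 := m4.1
    linarith [h6c, hβ1b, h4a]
  have w20 : y2 ≤ y0 := by
    -- y2 ≤ q4 ≤ β2 ≤ γ1 ≤ p0 ≤ y0
    have h1 : y2 ≤ q4 := m4.2
    have h2 : p0 ≤ y0 := hy.1
    linarith [h4c, hβ2γ1, h0a]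
  have w01 : y0 ≤ y1 := by
    -- y0 ≤ q0 ≤ p2 ≤ y1
    have h1 : y0 ≤ q0 := hy.2
    have h2 : p2 ≤ y1 := m2.1
    linarith [h0c]
  -- the key non-degeneracy: y2 ≠ y0
  have hne : y2 ≠ y0 := by
    intro heq
    -- then y2 ≤ q4 ≤ β2 ≤ γ1 ≤ p0 ≤ y0 = y2 collapses
    have h1 : y2 ≤ q4 := m4.2
    have h2 : p0 ≤ y0 := hy.1
    have hq4 : q4 = β2 := le_antisymm h4c (by linarith [hβ2γ1, h0a])
    have hy0γ1 : y0 = γ1 := le_antisymm (by linarith [h4c, hβ2γ1]) (le_trans h0a h2)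
    -- compute the orbit explicitly
    have hw1 : f y0 = x0 := by rw [hy0γ1, hfγ1]
    have hw2 : y1 = x1 := by rw [hy1def, hw1, h01]
    have hw3 : f y1 = x2 := by rw [hw2, h12]
    have hw4 : y2 = x0 := by
      have : y2 = f (f y1) := rfl
      rw [this, hw3, h20]
    -- but y2 = β2 (from the collapse) and f β2 = x0, so f x0 = x0, contradiction
    have hy2β2 : y2 = β2 := by linarith [hβ2γ1, h0a]
    have hfy2 : f y2 = x0 := by rw [hy2β2]; exact hfβ2
    rw [hw4] at hfy2
    rw [h01] at hfy2
    linarith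
  have s20 : y2 < y0 := lt_of_le_of_ne w20 hne
  have s01 : y0 < y1 := by
    rcases eq_or_lt_of_le w01 with heq | h
    · exfalso
      apply hne
      have hB : f (f y1) = y2 := rfl
      have hC : f (f y0) = y1 := rfl
      rw [heq] at hC
      exact (hB.symm.trans hC).trans heq.symm
    · exact h
  have s32 : y3 < y2 := by
    rcases eq_or_lt_of_le w32 with heq | h
    · exfalso
      apply hne
      have hB : f (f y2) = y3 := rfl
      have hA' : f (f y2) = y0 := by rw [← heq]; exact hFyy
      exact (heq.symm.trans hB.symm).trans hA'
    · exact h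
  exact ⟨y0, y1, y2, y3, e0, e1, e2, e3, s32, s20, s01⟩
end

section
/- If f : ℝ → ℝ is continuous and has a period-(2n+1) point x₀ with orbit of Štefan type x_{2n} < x_{2n-2} < ⋯ < x₂ < x₀ < x₁ < x₃ < ⋯ < x_{2n-1} (where x_{i+1}=f(x_i) cyclically), n ≥ 2, then f² has a periodic orbit of period 2n+1 of type L(n+1,n): points y₀,...,y_{2n} with f²(y_i)=y_{i+1} cyclically, all distinct, and y_{2n} < ⋯ < y_{n+1} < y_n < y₀ < y₁ < ⋯ < y_{n-1}. -/
theorem stmt_9 (f : ℝ → ℝ) (hf : Continuous f) (n : ℕ) (hn : 2 ≤ n)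
    (x : ℕ → ℝ)
    (hcyc : ∀ i < 2 * n + 1, f (x i) = x ((i + 1) % (2 * n + 1)))
    (hdist : ∀ i < 2 * n + 1, ∀ j < 2 * n + 1, x i = x j → i = j)
    (heven : ∀ i, 2 * i + 2 ≤ 2 * n → x (2 * i + 2) < x (2 * i))
    (h01 : x 0 < x 1)
    (hodd : ∀ i, 2 * i + 3 ≤ 2 * n → x (2 * i + 1) < x (2 * i + 3)) :
    ∃ y : ℕ → ℝ,
      (∀ i < 2 * n + 1, (f ∘ f) (y i) = y ((i + 1) % (2 * n + 1))) ∧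
      (∀ i < 2 * n + 1, ∀ j < 2 * n + 1, y i = y j → i = j) ∧
      (∀ i, n ≤ i → i + 1 < 2 * n + 1 → y (i + 1) < y i) ∧
      y n < y 0 ∧
      (∀ i, i + 1 < n → y i < y (i + 1)) := by
  set m := 2 * n + 1 with hm
  have hm0 : 0 < m := by omega
  refine ⟨fun i => x ((2 * i + 1) % m), ?_, ?_, ?_, ?_, ?_⟩
  · intro i hi
    have h1 : (2 * i + 1) % m < m := Nat.mod_lt _ hm0
    have h2 : ((2 * i + 1) % m + 1) % m < m := Nat.mod_lt _ hm0
    show f (f (x ((2 * i + 1) % m))) = x ((2 * ((i + 1) % m) + 1) % m)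
    rw [hcyc _ h1, hcyc _ h2]
    congr 1
    have A : (2 * i + 1) % m ≡ 2 * i + 1 [MOD m] := Nat.mod_modEq _ _
    have B : ((2 * i + 1) % m + 1) % m ≡ 2 * i + 2 [MOD m] :=
      (Nat.mod_modEq _ _).trans (A.add_right 1)
    have L : ((2 * i + 1) % m + 1) % m + 1 ≡ 2 * i + 3 [MOD m] := B.add_right 1
    have C : (i + 1) % m ≡ i + 1 [MOD m] := Nat.mod_modEq _ _
    have R : 2 * ((i + 1) % m) + 1 ≡ 2 * (i + 1) + 1 [MOD m] :=
      (C.mul_left 2).add_right 1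
    have e : 2 * (i + 1) + 1 = 2 * i + 3 := by ring
    rw [e] at R
    exact L.trans R.symm
  · intro i hi j hj hxy
    have h1 : (2 * i + 1) % m < m := Nat.mod_lt _ hm0
    have h2 : (2 * j + 1) % m < m := Nat.mod_lt _ hm0
    have heq := hdist _ h1 _ h2 hxy
    have di : (2 * i + 1) % m = 2 * i + 1 ∨
        (m ≤ 2 * i + 1 ∧ (2 * i + 1) % m = 2 * i + 1 - m) := by
      rcases Nat.lt_or_ge (2 * i + 1) m with h | h
      · exact Or.inl (Nat.mod_eq_of_lt h)
      · exact Or.inr ⟨h, by rw [Nat.mod_eq_sub_mod h, Nat.mod_eq_of_lt (by omega)]⟩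
    have dj : (2 * j + 1) % m = 2 * j + 1 ∨
        (m ≤ 2 * j + 1 ∧ (2 * j + 1) % m = 2 * j + 1 - m) := by
      rcases Nat.lt_or_ge (2 * j + 1) m with h | h
      · exact Or.inl (Nat.mod_eq_of_lt h)
      · exact Or.inr ⟨h, by rw [Nat.mod_eq_sub_mod h, Nat.mod_eq_of_lt (by omega)]⟩
    rcases di with d | ⟨hd, d⟩ <;> rcases dj with d' | ⟨hd', d'⟩ <;>
      rw [d, d'] at heq <;> omega
  · intro i hni hi1
    have e1 : (2 * i + 1) % m = 2 * (i - n) := by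
      rw [Nat.mod_eq_sub_mod (by omega), Nat.mod_eq_of_lt (by omega)]; omega
    have e2 : (2 * (i + 1) + 1) % m = 2 * (i - n) + 2 := by
      rw [Nat.mod_eq_sub_mod (by omega), Nat.mod_eq_of_lt (by omega)]; omega
    show x ((2 * (i + 1) + 1) % m) < x ((2 * i + 1) % m)
    rw [e1, e2]
    exact heven (i - n) (by omega)
  · show x ((2 * n + 1) % m) < x (1 % m)
    rw [show (2 * n + 1) % m = 0 by simp [hm], Nat.mod_eq_of_lt (by omega)]
    simpa using h01
  · intro i hi
    have e1 : (2 * i + 1) % m = 2 * i + 1 := Nat.mod_eq_of_lt (by omega)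
    have e2 : (2 * (i + 1) + 1) % m = 2 * i + 3 := Nat.mod_eq_of_lt (by omega)
    show x ((2 * i + 1) % m) < x ((2 * (i + 1) + 1) % m)
    rw [e1, e2]
    exact hodd i (by omega)
end

section
/- If f : ℝ → ℝ is continuous and has a period-3 point with orbit x₂ < x₀ < x₁, then f² has at least three fixed points a < b < c with x₂ < a < x₀ and x₀ < b < c < x₁. -/
lemma fix_aux (g : ℝ → ℝ) (hg : Continuous g) {u v : ℝ} (huv : u < v)
    (hu : u < g u) (hv : g v < v) : ∃ t, u < t ∧ t < v ∧ g t = t := by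
  have h : ContinuousOn (fun x => g x - x) (Set.Icc u v) :=
    (hg.sub continuous_id).continuousOn
  obtain ⟨t, ht, ht0⟩ := intermediate_value_Ioo' huv.le h
    (show (0:ℝ) ∈ _ from ⟨by simp; linarith, by simp; linarith⟩)
  exact ⟨t, ht.1, ht.2, by simpa using sub_eq_zero.mp ht0⟩

lemma fix_aux' (g : ℝ → ℝ) (hg : Continuous g) {u v : ℝ} (huv : u < v)
    (hu : g u < u) (hv : v < g v) : ∃ t, u < t ∧ t < v ∧ g t = t := by
  have h : ContinuousOn (fun x => g x - x) (Set.Icc u v) :=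
    (hg.sub continuous_id).continuousOn
  obtain ⟨t, ht, ht0⟩ := intermediate_value_Ioo huv.le h
    (show (0:ℝ) ∈ _ from ⟨by simp; linarith, by simp; linarith⟩)
  exact ⟨t, ht.1, ht.2, by simpa using sub_eq_zero.mp ht0⟩

theorem stmt_11 (f : ℝ → ℝ) (hf : Continuous f)
    (x0 x1 x2 : ℝ)
    (h01 : f x0 = x1) (h12 : f x1 = x2) (h20 : f x2 = x0)
    (hord1 : x2 < x0) (hord2 : x0 < x1) :
    ∃ a b c : ℝ,
      (f ∘ f) a = a ∧ (f ∘ f) b = b ∧ (f ∘ f) c = c ∧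
      x2 < a ∧ a < x0 ∧ x0 < b ∧ b < c ∧ c < x1 := by
  set g : ℝ → ℝ := f ∘ f with hgdef
  have hg : Continuous g := hf.comp hf
  have hg2 : g x2 = x1 := by simp [hgdef, Function.comp, h20, h01]
  have hg0 : g x0 = x2 := by simp [hgdef, Function.comp, h01, h12]
  have hg1 : g x1 = x0 := by simp [hgdef, Function.comp, h12, h20]
  obtain ⟨y, hy, hfy⟩ := intermediate_value_Ioo' hord2.le hf.continuousOn
    (show x0 ∈ _ from ⟨by rw [h12]; exact hord1, by rw [h01]; exact hord2⟩)
  have hgy : g y = x1 := by simp [hgdef, Function.comp, hfy, h01]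
  obtain ⟨a, ha1, ha2, ha⟩ := fix_aux g hg hord1 (by rw [hg2]; linarith) (by rw [hg0]; linarith)
  obtain ⟨b, hb1, hb2, hb⟩ := fix_aux' g hg hy.1 (by rw [hg0]; linarith [hy.1])
    (by rw [hgy]; exact hy.2)
  obtain ⟨c, hc1, hc2, hc⟩ := fix_aux g hg hy.2 (by rw [hgy]; exact hy.2)
    (by rw [hg1]; exact hord2)
  exact ⟨a, b, c, ha, hb, hc, ha1, ha2, hb1, by linarith, hc2⟩
end

section
/- If f : ℝ → ℝ is continuous and has a periodic orbit of period m+n of type L(m,n) with m,n ≥ 2, then for every N ≥ m+n, f has a periodic point of period N. (Consequence of the forcing L(m,n) → L(m,n+1) iterated, each L-type orbit having period equal to the sum of parameters.) -/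
lemma my_cover (f : ℝ → ℝ) (hf : Continuous f) {a b : ℝ} (hab : a ≤ b)
    {s : Set ℝ} (h : s ⊆ Set.uIcc (f a) (f b)) : s ⊆ f '' Set.Icc a b := by
  intro z hz
  have h2 := intermediate_value_uIcc (f := f) (a := a) (b := b) hf.continuousOn
  rw [Set.uIcc_of_le hab] at h2
  exact h2 (h hz)

lemma pullback_half (f : ℝ → ℝ) (hf : Continuous f) {c d u v : ℝ} (hcd : c ≤ d)
    (huv : u ≤ v) (hu : f u = c) (hv : f v = d) :
    ∃ a b, u ≤ a ∧ a ≤ b ∧ b ≤ v ∧ f '' Set.Icc a b = Set.Icc c d := by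
  set S : Set ℝ := {z | z ∈ Set.Icc u v ∧ f z = c} with hS
  have hScl : IsClosed S := by
    have : S = Set.Icc u v ∩ f ⁻¹' {c} := by ext z; simp only [hS, Set.mem_setOf_eq, Set.mem_inter_iff, Set.mem_preimage, Set.mem_singleton_iff]
    rw [this]; exact isClosed_Icc.inter (isClosed_singleton.preimage hf)
  have hSne : S.Nonempty := ⟨u, ⟨Set.left_mem_Icc.2 huv, hu⟩⟩
  have hSbd : BddAbove S := ⟨v, fun z hz => hz.1.2⟩
  set s := sSup S with hsdef
  have hsS : s ∈ S := hScl.csSup_mem hSne hSbd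
  have hfs : f s = c := hsS.2
  have hus : u ≤ s := hsS.1.1
  have hsv : s ≤ v := hsS.1.2
  set T : Set ℝ := {z | z ∈ Set.Icc s v ∧ f z = d} with hT
  have hTcl : IsClosed T := by
    have : T = Set.Icc s v ∩ f ⁻¹' {d} := by ext z; simp only [hT, Set.mem_setOf_eq, Set.mem_inter_iff, Set.mem_preimage, Set.mem_singleton_iff]
    rw [this]; exact isClosed_Icc.inter (isClosed_singleton.preimage hf)
  have hTne : T.Nonempty := ⟨v, ⟨Set.right_mem_Icc.2 hsv, hv⟩⟩
  have hTbd : BddBelow T := ⟨s, fun z hz => hz.1.1⟩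
  set t := sInf T with htdef
  have htT : t ∈ T := hTcl.csInf_mem hTne hTbd
  have hft : f t = d := htT.2
  have hst : s ≤ t := htT.1.1
  have htv : t ≤ v := htT.1.2
  refine ⟨s, t, hus, hst, htv, ?_⟩
  apply Set.Subset.antisymm
  · rintro _ ⟨z, hz, rfl⟩
    constructor
    · by_contra hlt
      push_neg at hlt
      have hzt : z ≤ t := hz.2
      have : c ∈ Set.Icc (f z) (f t) := ⟨hlt.le, by rw [hft]; exact hcd⟩
      obtain ⟨w, hw, hfw⟩ := intermediate_value_Icc hzt hf.continuousOn this
      have hws : w ≤ s := le_csSup hSbd ⟨⟨hus.trans (hz.1.trans hw.1), (hw.2.trans htv)⟩, hfw⟩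
      have : s < z := lt_of_le_of_ne hz.1 (by rintro rfl; rw [hfs] at hlt; exact lt_irrefl _ hlt)
      exact absurd (hw.1.trans hws) (not_le.2 this)
    · by_contra hlt
      push_neg at hlt
      have hsz : s ≤ z := hz.1
      have : d ∈ Set.Icc (f s) (f z) := ⟨by rw [hfs]; exact hcd, hlt.le⟩
      obtain ⟨w, hw, hfw⟩ := intermediate_value_Icc hsz hf.continuousOn this
      have htw : t ≤ w := csInf_le hTbd ⟨⟨hw.1, hw.2.trans (hz.2.trans htv)⟩, hfw⟩
      have : z < t := lt_of_le_of_ne hz.2 (by rintro rfl; rw [hft] at hlt; exact lt_irrefl _ hlt)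
      exact absurd (htw.trans hw.2) (not_le.2 this)
  · intro z hz
    have := intermediate_value_Icc hst hf.continuousOn
    rw [hfs, hft] at this
    exact this hz

lemma pullback (f : ℝ → ℝ) (hf : Continuous f) {A B c d : ℝ} (hcd : c ≤ d) (hAB : A ≤ B)
    (hsub : Set.Icc c d ⊆ f '' Set.Icc A B) :
    ∃ a b, A ≤ a ∧ a ≤ b ∧ b ≤ B ∧ f '' Set.Icc a b = Set.Icc c d := by
  obtain ⟨u, hu, hfu⟩ := hsub (Set.left_mem_Icc.2 hcd)
  obtain ⟨v, hv, hfv⟩ := hsub (Set.right_mem_Icc.2 hcd)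
  rcases le_total u v with huv | hvu
  · obtain ⟨a, b, h1, h2, h3, h4⟩ := pullback_half f hf hcd huv hfu hfv
    exact ⟨a, b, hu.1.trans h1, h2, h3.trans hv.2, h4⟩
  · set g : ℝ → ℝ := fun z => f (u + v - z) with hg
    have hgc : Continuous g := hf.comp (by continuity)
    obtain ⟨a, b, h1, h2, h3, h4⟩ := pullback_half g hgc hcd hvu
      (by simp only [hg]; rw [show u + v - v = u by ring]; exact hfu) (by simp only [hg]; rw [show u + v - u = v by ring]; exact hfv)
    refine ⟨u + v - b, u + v - a, ?_, by linarith, ?_, ?_⟩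
    · linarith [hv.1]
    · linarith [hu.2]
    · rw [← h4, hg]
      rw [show ((fun z => f (u + v - z)) '' Set.Icc a b) = f '' ((fun z => u + v - z) '' Set.Icc a b) by
        rw [← Set.image_comp]; rfl]
      congr 1
      rw [Set.image_const_sub_Icc]

lemma loop_periodic (f : ℝ → ℝ) (hf : Continuous f) (N : ℕ) (hN : 0 < N)
    (lo hi : ℕ → ℝ) (hle : ∀ t < N, lo t ≤ hi t)
    (hcov : ∀ t < N,
      Set.Icc (lo ((t + 1) % N)) (hi ((t + 1) % N)) ⊆ f '' Set.Icc (lo t) (hi t)) :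
    ∃ y, f^[N] y = y ∧ ∀ t < N, f^[t] y ∈ Set.Icc (lo t) (hi t) := by
  set I : ℕ → Set ℝ := fun t => Set.Icc (lo (t % N)) (hi (t % N)) with hI
  have hle' : ∀ t, lo (t % N) ≤ hi (t % N) := fun t => hle _ (Nat.mod_lt _ hN)
  have hcov' : ∀ t, I (t + 1) ⊆ f '' I t := by
    intro t
    have h1 : (t % N + 1) % N = (t + 1) % N := (Nat.ModEq.add_right 1 (Nat.mod_modEq t N))
    have := hcov (t % N) (Nat.mod_lt _ hN)
    rw [h1] at this
    simpa [hI] using this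
  have key : ∀ k, k ≤ N → ∃ a b, a ≤ b ∧ (∀ j ≤ k, f^[j] '' Set.Icc a b ⊆ I (N - k + j)) ∧
      f^[k] '' Set.Icc a b = I N := by
    intro k
    induction k with
    | zero =>
      intro _
      refine ⟨lo (N % N), hi (N % N), hle' N, ?_, by simp [hI]⟩
      intro j hj
      interval_cases j
      simp [hI]
    | succ k ih =>
      intro hk1
      obtain ⟨a, b, hab, hmem, heq⟩ := ih (Nat.le_of_succ_le hk1)
      have hsub0 : Set.Icc a b ⊆ I (N - k) := by
        have := hmem 0 (Nat.zero_le k)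
        simpa using this
      have hidx : N - k = (N - (k + 1)) + 1 := by omega
      have hsub : Set.Icc a b ⊆ f '' Set.Icc (lo ((N - (k+1)) % N)) (hi ((N - (k+1)) % N)) := by
        intro z hz
        have := hcov' (N - (k + 1))
        rw [← hidx] at this
        exact this (hsub0 hz)
      obtain ⟨a', b', h1, h2, h3, h4⟩ := pullback f hf hab (hle' _) hsub
      refine ⟨a', b', h2, ?_, ?_⟩
      · intro j hj
        match j with
        | 0 =>
          simp only [Function.iterate_zero, Set.image_id]
          intro z hz
          exact ⟨h1.trans hz.1, hz.2.trans h3⟩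
        | (j' + 1) =>
          rw [Function.iterate_succ, Set.image_comp, h4]
          have := hmem j' (by omega)
          rwa [show N - k + j' = N - (k + 1) + (j' + 1) by omega] at this
      · rw [Function.iterate_succ, Set.image_comp, h4, heq]
  obtain ⟨a, b, hab, hmem, heq⟩ := key N le_rfl
  have hIN : I N = Set.Icc (lo 0) (hi 0) := by simp [hI]
  have hsub0 : Set.Icc a b ⊆ Set.Icc (lo 0) (hi 0) := by
    have := hmem 0 (Nat.zero_le N)
    simpa [hI] using this
  have hle0 : lo 0 ≤ hi 0 := by simpa using hle' N
  rw [hIN] at heq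
  obtain ⟨u, hu, hfu⟩ : ∃ u ∈ Set.Icc a b, f^[N] u = lo 0 := by
    have : lo 0 ∈ f^[N] '' Set.Icc a b := heq ▸ Set.left_mem_Icc.2 hle0
    obtain ⟨u, hu, hfu⟩ := this
    exact ⟨u, hu, hfu⟩
  obtain ⟨v, hv, hfv⟩ : ∃ v ∈ Set.Icc a b, f^[N] v = hi 0 := by
    have : hi 0 ∈ f^[N] '' Set.Icc a b := heq ▸ Set.right_mem_Icc.2 hle0
    obtain ⟨v, hv, hfv⟩ := this
    exact ⟨v, hv, hfv⟩
  set g : ℝ → ℝ := fun z => f^[N] z - z with hg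
  have hgc : Continuous g := (hf.iterate N).sub continuous_id
  have hgu : g u ≤ 0 := by
    have : lo 0 ≤ u := (hsub0 hu).1
    simp only [hg, hfu]; linarith
  have hgv : 0 ≤ g v := by
    have : v ≤ hi 0 := (hsub0 hv).2
    simp only [hg, hfv]; linarith
  have h0 : (0 : ℝ) ∈ Set.uIcc (g u) (g v) := Set.mem_uIcc.2 (Or.inl ⟨hgu, hgv⟩)
  obtain ⟨y, hy, hgy⟩ := intermediate_value_uIcc hgc.continuousOn h0
  have hyab : y ∈ Set.Icc a b := by
    rcases Set.mem_uIcc.1 hy with ⟨h1', h2'⟩ | ⟨h1', h2'⟩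
    · exact ⟨hu.1.trans h1', h2'.trans hv.2⟩
    · exact ⟨hv.1.trans h1', h2'.trans hu.2⟩
  have hfix : f^[N] y = y := by
    have : f^[N] y - y = 0 := hgy
    linarith
  refine ⟨y, hfix, ?_⟩
  intro t ht
  have := hmem t (le_of_lt ht)
  rw [show N - N + t = t by omega] at this
  have h2 := this ⟨y, hyab, rfl⟩
  rw [hI] at h2; simp only at h2; rwa [Nat.mod_eq_of_lt ht] at h2

theorem stmt_12 (f : ℝ → ℝ) (hf : Continuous f) (m n : ℕ) (hm : 2 ≤ m) (hn : 2 ≤ n)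
    (x : ℕ → ℝ)
    (hcyc : ∀ i < m + n, f (x i) = x ((i + 1) % (m + n)))
    (hdist : ∀ i < m + n, ∀ j < m + n, x i = x j → i = j)
    (hdec : ∀ i, n ≤ i → i + 1 < m + n → x (i + 1) < x i)
    (hmid : x n < x 0)
    (hinc : ∀ i, i + 1 < n → x i < x (i + 1)) :
    ∀ N, m + n ≤ N → ∃ y : ℝ, f^[N] y = y ∧ ∀ j, 0 < j → j < N → f^[j] y ≠ y := by
  intro N hN
  -- simple cyclic facts
  have cyc : ∀ i, i + 1 < m + n → f (x i) = x (i + 1) := by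
    intro i hi
    have := hcyc i (by omega)
    rwa [Nat.mod_eq_of_lt hi] at this
  have cyc_last : f (x (m + n - 1)) = x 0 := by
    have := hcyc (m + n - 1) (by omega)
    rwa [show m + n - 1 + 1 = m + n by omega, Nat.mod_self] at this
  -- decreasing chain
  have dec : ∀ j, j < m + n → ∀ i, n ≤ i → i ≤ j → x j ≤ x i := by
    intro j
    induction j with
    | zero => intro _ i hni hij; omega
    | succ j ih =>
      intro hj i hni hij
      rcases Nat.eq_or_lt_of_le hij with h | h
      · rw [h]
      · have h1 : x (j + 1) < x j := hdec j (by omega) hj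
        exact h1.le.trans (ih (by omega) i hni (by omega))
  set r := N - m + 1 with hr
  have hrn : n + 1 ≤ r := by omega
  have hrN : r < N := by omega
  -- the loop of intervals
  set lo : ℕ → ℝ := fun t => if t < r then x n else x (n + (t - r) + 1) with hlo
  set hi : ℕ → ℝ := fun t => if t < r then x 0 else x (n + (t - r)) with hhi
  have lo_lt : ∀ t, t < r → lo t = x n := by intro t ht; simp [hlo, ht]
  have hi_lt : ∀ t, t < r → hi t = x 0 := by intro t ht; simp [hhi, ht]
  have lo_ge : ∀ t, r ≤ t → lo t = x (n + (t - r) + 1) := by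
    intro t ht; simp [hlo, Nat.not_lt.2 ht]
  have hi_ge : ∀ t, r ≤ t → hi t = x (n + (t - r)) := by
    intro t ht; simp [hhi, Nat.not_lt.2 ht]
  have hle : ∀ t < N, lo t ≤ hi t := by
    intro t ht
    rcases Nat.lt_or_ge t r with h | h
    · rw [lo_lt t h, hi_lt t h]; exact hmid.le
    · rw [lo_ge t h, hi_ge t h]
      exact (hdec (n + (t - r)) (by omega) (by omega)).le
  have hx1 : x 0 < x 1 := hinc 0 (by omega)
  have hxn1 : x (n + 1) < x n := hdec n (by omega) (by omega)
  have hcov : ∀ t < N,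
      Set.Icc (lo ((t + 1) % N)) (hi ((t + 1) % N)) ⊆ f '' Set.Icc (lo t) (hi t) := by
    intro t ht
    rcases Nat.lt_or_ge (t + 1) r with hA | hB
    · -- J → J
      rw [Nat.mod_eq_of_lt (by omega), lo_lt t (by omega), hi_lt t (by omega),
        lo_lt (t + 1) hA, hi_lt (t + 1) hA]
      apply my_cover f hf hmid.le
      rw [cyc n (by omega), cyc 0 (by omega), Set.uIcc_of_le (by linarith)]
      exact Set.Icc_subset_Icc hxn1.le (by linarith)
    rcases Nat.eq_or_lt_of_le hB with hB1 | hB2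
    · -- J → K_n
      rw [Nat.mod_eq_of_lt (by omega), lo_lt t (by omega), hi_lt t (by omega),
        lo_ge (t + 1) (by omega), hi_ge (t + 1) (by omega), ← hB1, Nat.sub_self,
        Nat.add_zero]
      apply my_cover f hf hmid.le
      rw [cyc n (by omega), cyc 0 (by omega)]
      simp only [Nat.add_zero, Nat.zero_add]
      rw [Set.uIcc_of_le (by linarith)]
      exact Set.Icc_subset_Icc le_rfl (by linarith)
    · have htr : r ≤ t := by omega
      rcases Nat.lt_or_ge (t + 1) N with hC | hD
      · -- K_p → K_(p+1)
        rw [Nat.mod_eq_of_lt hC, lo_ge t htr, hi_ge t htr,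
          lo_ge (t + 1) (by omega), hi_ge (t + 1) (by omega),
          show t + 1 - r = (t - r) + 1 by omega]
        set p := n + (t - r) with hp
        have hplt : p + 2 < m + n := by omega
        apply my_cover f hf (hdec p (by omega) (by omega)).le
        rw [cyc (p + 1) (by omega), cyc p (by omega),
          show n + (t - r + 1) + 1 = p + 1 + 1 by omega,
          show n + (t - r + 1) = p + 1 by omega]
        exact Set.Icc_subset_uIcc
      · -- K_last → J
        have htN : t + 1 = N := by omega
        rw [htN, Nat.mod_self, lo_lt 0 (by omega), hi_lt 0 (by omega),
          lo_ge t htr, hi_ge t htr,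
          show n + (t - r) + 1 = m + n - 1 by omega,
          show n + (t - r) = m + n - 2 by omega]
        apply my_cover f hf (by
          have := hdec (m + n - 2) (by omega) (by omega)
          rw [show m + n - 2 + 1 = m + n - 1 by omega] at this
          exact this.le)
        rw [cyc_last, cyc (m + n - 2) (by omega),
          show m + n - 2 + 1 = m + n - 1 by omega]
        have h1 : x (m + n - 1) ≤ x n := dec (m + n - 1) (by omega) n le_rfl (by omega)
        rw [Set.uIcc_comm, Set.uIcc_of_le (by linarith)]
        exact Set.Icc_subset_Icc h1 le_rfl
  obtain ⟨y, hfix, hmem⟩ := loop_periodic f hf N (by omega) lo hi hle hcov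
  refine ⟨y, hfix, ?_⟩
  intro j hj0 hjN hji
  -- the point at time N-1 equals the point at time j-1
  have hw2 : f^[N - 1] y = f^[j - 1] y := by
    have e1 : f^[(N - 1) + j] y = f^[N - 1] y := by
      rw [Function.iterate_add_apply, hji]
    have e2 : f^[(j - 1) + N] y = f^[j - 1] y := by
      rw [Function.iterate_add_apply, hfix]
    rw [← e1, ← e2, show (N - 1) + j = (j - 1) + N by omega]
  have hw1 : f^[N - 1] y ∈ Set.Icc (x (m + n - 1)) (x (m + n - 2)) := by
    have h := hmem (N - 1) (by omega)
    rwa [lo_ge (N - 1) (by omega), hi_ge (N - 1) (by omega),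
      show n + (N - 1 - r) + 1 = m + n - 1 by omega,
      show n + (N - 1 - r) = m + n - 2 by omega] at h
  have hy0 : x n ≤ y := by
    have h := hmem 0 (by omega)
    rw [lo_lt 0 (by omega)] at h
    simpa using h.1
  have hyNfix : y = f (f^[N - 1] y) := by
    conv_lhs => rw [← hfix, show N = 1 + (N - 1) by omega, Function.iterate_add_apply,
      Function.iterate_one]
  have hj1 := hmem (j - 1) (by omega)
  rcases Nat.lt_or_ge (j - 1) r with hE | hF
  · rw [lo_lt (j - 1) hE, hi_lt (j - 1) hE] at hj1
    have hub : x (m + n - 2) ≤ x n := dec (m + n - 2) (by omega) n le_rfl (by omega)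
    have hwn : f^[N - 1] y = x n := by
      refine le_antisymm (hw1.2.trans hub) ?_
      rw [hw2]; exact hj1.1
    rw [hwn, cyc n (by omega)] at hyNfix
    rw [hyNfix] at hy0
    linarith
  · rw [lo_ge (j - 1) hF, hi_ge (j - 1) hF] at hj1
    set p := n + (j - 1 - r) with hp
    have hpb : p + 2 ≤ m + n - 1 := by omega
    have hub : x (m + n - 2) ≤ x (p + 1) :=
      dec (m + n - 2) (by omega) (p + 1) (by omega) (by omega)
    have hwn : f^[N - 1] y = x (p + 1) := by
      refine le_antisymm (hw1.2.trans hub) ?_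
      rw [hw2]; exact hj1.1
    rw [hwn, cyc (p + 1) (by omega)] at hyNfix
    have h2 : x (p + 1 + 1) ≤ x (n + 1) := dec (p + 1 + 1) (by omega) (n + 1) (by omega) (by omega)
    rw [hyNfix] at hy0
    linarith
end

section
/- If f : ℝ → ℝ is continuous and has a fixed point x₀ with a backward orbit (x_{-i}) satisfying x₀ < ⋯ < x_{-i} < x_{-i+1} < ⋯ < x_{-2} < x_{-1} (type L(∞)), then for every n ≥ 2, f has a periodic point y₀ of period n whose orbit satisfies y₀ < y₁ < ⋯ < y_{n-1} (type L(n)). -/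
open Set

lemma pull_mono (f : ℝ → ℝ) (hf : Continuous f) {u v p q : ℝ} (huv : u ≤ v) (hpq : p ≤ q)
    (hu : f u = p) (hv : f v = q) :
    ∃ a b, u ≤ a ∧ a ≤ b ∧ b ≤ v ∧ f '' Set.Icc a b = Set.Icc p q := by
  set S := Icc u v ∩ f ⁻¹' {q} with hS
  have hSc : IsClosed S := isClosed_Icc.inter (isClosed_singleton.preimage hf)
  have hSne : S.Nonempty := ⟨v, ⟨huv, le_rfl⟩, hv⟩
  have hSbd : BddBelow S := (bddBelow_Icc : BddBelow (Icc u v)).mono inter_subset_left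
  set b := sInf S with hb
  have hbS : b ∈ S := hSc.csInf_mem hSne hSbd
  have hub : u ≤ b := hbS.1.1
  have hbv : b ≤ v := hbS.1.2
  have hfb : f b = q := hbS.2
  set T := Icc u b ∩ f ⁻¹' {p} with hT
  have hTc : IsClosed T := isClosed_Icc.inter (isClosed_singleton.preimage hf)
  have hTne : T.Nonempty := ⟨u, ⟨le_rfl, hub⟩, hu⟩
  have hTbd : BddAbove T := (bddAbove_Icc (a := u) (b := b)).mono inter_subset_left
  set a := sSup T with ha
  have haT : a ∈ T := hTc.csSup_mem hTne hTbd
  have hua : u ≤ a := haT.1.1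
  have hab : a ≤ b := haT.1.2
  have hfa : f a = p := haT.2
  refine ⟨a, b, hua, hab, hbv, ?_⟩
  apply Subset.antisymm
  · rintro _ ⟨z, hz, rfl⟩
    constructor
    · by_contra h
      push_neg at h
      have hza : a < z := lt_of_le_of_ne hz.1 (by rintro rfl; exact absurd hfa (by linarith))
      have : p ∈ Icc (f z) (f b) := ⟨h.le, hfb ▸ hpq⟩
      obtain ⟨w, hw, hfw⟩ := intermediate_value_Icc hz.2 hf.continuousOn this
      have hwT : w ∈ T := ⟨⟨le_trans hua (le_trans hza.le hw.1), hw.2⟩, hfw⟩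
      have := le_csSup hTbd hwT
      have : z ≤ a := le_trans hw.1 this
      linarith
    · by_contra h
      push_neg at h
      have hzb : z < b := lt_of_le_of_ne hz.2 (by rintro rfl; exact absurd hfb (by linarith))
      have : q ∈ Icc (f a) (f z) := ⟨hfa ▸ hpq, h.le⟩
      obtain ⟨w, hw, hfw⟩ := intermediate_value_Icc hz.1 hf.continuousOn this
      have hwS : w ∈ S := ⟨⟨le_trans hua hw.1, le_trans hw.2 (le_trans hzb.le hbv)⟩, hfw⟩
      have := csInf_le hSbd hwS
      have : b ≤ z := le_trans this hw.2
      linarith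
  · have := intermediate_value_Icc hab hf.continuousOn
    rwa [hfa, hfb] at this

lemma pull_anti (f : ℝ → ℝ) (hf : Continuous f) {u v p q : ℝ} (huv : u ≤ v) (hpq : p ≤ q)
    (hu : f u = q) (hv : f v = p) :
    ∃ a b, u ≤ a ∧ a ≤ b ∧ b ≤ v ∧ f '' Set.Icc a b = Set.Icc p q := by
  obtain ⟨a, b, h1, h2, h3, h4⟩ := pull_mono (fun t => f (-t)) (hf.comp continuous_neg)
    (neg_le_neg huv) hpq (by simpa using hv) (by simpa using hu)
  refine ⟨-b, -a, by linarith, by linarith, by linarith, ?_⟩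
  rw [← h4]
  ext t
  constructor
  · rintro ⟨z, hz, rfl⟩
    exact ⟨-z, ⟨by linarith [hz.2], by linarith [hz.1]⟩, by simp⟩
  · rintro ⟨z, hz, rfl⟩
    exact ⟨-z, ⟨by linarith [hz.2], by linarith [hz.1]⟩, rfl⟩

lemma pull (f : ℝ → ℝ) (hf : Continuous f) {u v p q : ℝ} (huv : u ≤ v) (hpq : p ≤ q)
    (h : Set.Icc p q ⊆ f '' Set.Icc u v) :
    ∃ a b, u ≤ a ∧ a ≤ b ∧ b ≤ v ∧ f '' Set.Icc a b = Set.Icc p q := by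
  obtain ⟨s, hs, hfs⟩ := h (left_mem_Icc.2 hpq)
  obtain ⟨t, ht, hft⟩ := h (right_mem_Icc.2 hpq)
  rcases le_total s t with hst | hst
  · obtain ⟨a, b, h1, h2, h3, h4⟩ := pull_mono f hf hst hpq hfs hft
    exact ⟨a, b, le_trans hs.1 h1, h2, le_trans h3 ht.2, h4⟩
  · obtain ⟨a, b, h1, h2, h3, h4⟩ := pull_anti f hf hst hpq hft hfs
    exact ⟨a, b, le_trans ht.1 h1, h2, le_trans h3 hs.2, h4⟩

theorem stmt_14 (f : ℝ → ℝ) (hf : Continuous f)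
    (x : ℕ → ℝ)
    (hfix : f (x 0) = x 0)
    (hback : ∀ i, f (x (i + 1)) = x i)
    (habove : ∀ i, 1 ≤ i → x 0 < x i)
    (hdec : ∀ i, 1 ≤ i → x (i + 1) < x i) :
    ∀ n, 2 ≤ n → ∃ y : ℕ → ℝ,
      (∀ i < n, f (y i) = y ((i + 1) % n)) ∧
      (∀ i < n, ∀ j < n, y i = y j → i = j) ∧
      (∀ i, i + 1 < n → y i < y (i + 1)) := by
  intro n hn
  -- basic facts
  have hxmono : ∀ i j, 1 ≤ i → i ≤ j → x j ≤ x i := by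
    intro i j hi hij
    induction j with
    | zero => omega
    | succ k ih =>
      rcases Nat.lt_or_ge i (k+1) with h | h
      · exact le_trans (hdec k (by omega)).le (ih (by omega))
      · have : i = k + 1 := by omega
        simp [this]
  have hx0n : x 0 ≤ x n := (habove n (by omega)).le
  -- the itinerary intervals
  set lo : ℕ → ℝ := fun k => if k = 0 ∨ k = n then x 0 else x (n - k + 1) with hlo
  set hi : ℕ → ℝ := fun k => if k = 0 ∨ k = n then x n else x (n - k) with hhi
  have lo_eq0 : ∀ k, (k = 0 ∨ k = n) → lo k = x 0 := by
    intro k h; simp only [hlo]; rw [if_pos h]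
  have hi_eq0 : ∀ k, (k = 0 ∨ k = n) → hi k = x n := by
    intro k h; simp only [hhi]; rw [if_pos h]
  have lo_eq : ∀ k, ¬(k = 0 ∨ k = n) → lo k = x (n - k + 1) := by
    intro k h; simp only [hlo]; rw [if_neg h]
  have hi_eq : ∀ k, ¬(k = 0 ∨ k = n) → hi k = x (n - k) := by
    intro k h; simp only [hhi]; rw [if_neg h]
  have hlohi : ∀ k, k ≤ n → lo k ≤ hi k := by
    intro k hk
    by_cases h : k = 0 ∨ k = n
    · rw [lo_eq0 k h, hi_eq0 k h]; exact hx0n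
    · rw [lo_eq k h, hi_eq k h]
      exact (hdec (n - k) (by omega)).le
  have cover : ∀ k, k < n → Set.Icc (lo (k+1)) (hi (k+1)) ⊆ f '' Set.Icc (lo k) (hi k) := by
    intro k hk
    rcases Nat.eq_zero_or_pos k with rfl | hk1
    · -- K 0 = [x0, xn], covers K 1 = [x n, x (n-1)]
      have e1 : lo 0 = x 0 := lo_eq0 0 (Or.inl rfl)
      have e2 : hi 0 = x n := hi_eq0 0 (Or.inl rfl)
      have e3 : lo 1 = x n := by
        rw [lo_eq 1 (by omega), show n - 1 + 1 = n by omega]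
      have e4 : hi 1 = x (n-1) := hi_eq 1 (by omega)
      have hfxn : f (x n) = x (n-1) := by
        have := hback (n-1); rwa [(by omega : n - 1 + 1 = n)] at this
      have h1 := intermediate_value_Icc hx0n hf.continuousOn
      rw [hfix, hfxn] at h1
      rw [e1, e2, e3, e4]
      exact fun t ht => h1 ⟨le_trans hx0n ht.1, ht.2⟩
    · rcases Nat.lt_or_ge (k+1) n with hkn | hkn
      · -- middle case
        have e1 : lo k = x (n - k + 1) := lo_eq k (by omega)
        have e2 : hi k = x (n - k) := hi_eq k (by omega)
        have e3 : lo (k+1) = x (n - k) := by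
          rw [lo_eq (k+1) (by omega)]; congr 1; omega
        have e4 : hi (k+1) = x (n - k - 1) := by
          rw [hi_eq (k+1) (by omega)]; congr 1
        have hf1 : f (x (n - k + 1)) = x (n - k) := hback (n - k)
        have hf2 : f (x (n - k)) = x (n - k - 1) := by
          have := hback (n - k - 1); rwa [(by omega : n - k - 1 + 1 = n - k)] at this
        have hle : x (n - k + 1) ≤ x (n - k) := (hdec (n-k) (by omega)).le
        have h1 := intermediate_value_Icc hle hf.continuousOn
        rw [hf1, hf2] at h1
        rw [e1, e2, e3, e4]
        exact h1
      · -- k = n - 1, covers K n = [x0, x n]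
        have hkeq : k = n - 1 := by omega
        have e1 : lo k = x 2 := by
          rw [lo_eq k (by omega)]; congr 1; omega
        have e2 : hi k = x 1 := by
          rw [hi_eq k (by omega)]; congr 1; omega
        have e3 : lo (k+1) = x 0 := lo_eq0 (k+1) (Or.inr (by omega))
        have e4 : hi (k+1) = x n := hi_eq0 (k+1) (Or.inr (by omega))
        have hf1 : f (x 2) = x 1 := hback 1
        have hf2 : f (x 1) = x 0 := hback 0
        have hle : x 2 ≤ x 1 := (hdec 1 le_rfl).le
        have h1 := intermediate_value_Icc' hle hf.continuousOn
        rw [hf1, hf2] at h1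
        rw [e1, e2, e3, e4]
        exact fun t ht => h1 ⟨ht.1, le_trans ht.2 (hxmono 1 n le_rfl (by omega))⟩
  -- main backward-recursion claim
  have main : ∀ m, m ≤ n → ∃ a b, a ≤ b ∧
      (∀ j, j ≤ m → f^[j] '' Set.Icc a b ⊆ Set.Icc (lo (n - m + j)) (hi (n - m + j))) ∧
      f^[m] '' Set.Icc a b = Set.Icc (x 0) (x n) := by
    intro m
    induction m with
    | zero =>
      intro _
      refine ⟨x 0, x n, hx0n, ?_, by simp⟩
      intro j hj
      interval_cases j
      rw [lo_eq0 (n-0+0) (Or.inr (by omega)), hi_eq0 (n-0+0) (Or.inr (by omega))]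
      simp
    | succ m ih =>
      intro hm
      obtain ⟨a, b, hab, hmem, him⟩ := ih (by omega)
      have hsub : Set.Icc a b ⊆ Set.Icc (lo (n - m)) (hi (n - m)) := by
        have := hmem 0 (Nat.zero_le _)
        simpa using this
      have hcov := cover (n - (m+1)) (by omega)
      have heq : n - (m+1) + 1 = n - m := by omega
      rw [heq] at hcov
      obtain ⟨a', b', h1, h2, h3, h4⟩ := pull f hf (hlohi (n - (m+1)) (by omega)) hab
        (fun t ht => hcov (hsub ht))
      refine ⟨a', b', h2, ?_, ?_⟩
      · intro j hj
        rcases Nat.eq_zero_or_pos j with rfl | hj1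
        · simp only [Function.iterate_zero, Set.image_id, add_zero]; exact fun t ht => ⟨le_trans h1 ht.1, le_trans ht.2 h3⟩
        · obtain ⟨j, rfl⟩ := Nat.exists_eq_succ_of_ne_zero (by omega : j ≠ 0)
          have : f^[j+1] '' Set.Icc a' b' = f^[j] '' Set.Icc a b := by
            rw [Function.iterate_succ, Set.image_comp, h4]
          rw [this, (by omega : n - (m+1) + (j+1) = n - m + j)]
          exact hmem j (by omega)
      · rw [Function.iterate_succ, Set.image_comp, h4, him]
  obtain ⟨a, b, hab, hmem, him⟩ := main n le_rfl
  have hmem' : ∀ j, j ≤ n → f^[j] '' Set.Icc a b ⊆ Set.Icc (lo j) (hi j) := by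
    intro j hj
    have := hmem j hj
    rwa [(by omega : n - n + j = j)] at this
  have hsub0 : Set.Icc a b ⊆ Set.Icc (x 0) (x n) := by
    have := hmem' 0 (Nat.zero_le _)
    simp only [Function.iterate_zero, Set.image_id] at this
    rwa [lo_eq0 0 (Or.inl rfl), hi_eq0 0 (Or.inl rfl)] at this
  have hxa : x 0 ≤ a := (hsub0 (left_mem_Icc.2 hab)).1
  have hbx : b ≤ x n := (hsub0 (right_mem_Icc.2 hab)).2
  -- fixed point of f^[n]
  obtain ⟨u, hu, hfu⟩ : ∃ u ∈ Set.Icc a b, f^[n] u = x 0 := by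
    have : x 0 ∈ Set.Icc (x 0) (x n) := left_mem_Icc.2 hx0n
    rw [← him] at this; obtain ⟨u, hu, hfu⟩ := this; exact ⟨u, hu, hfu⟩
  obtain ⟨v, hv, hfv⟩ : ∃ v ∈ Set.Icc a b, f^[n] v = x n := by
    have : x n ∈ Set.Icc (x 0) (x n) := right_mem_Icc.2 hx0n
    rw [← him] at this; obtain ⟨v, hv, hfv⟩ := this; exact ⟨v, hv, hfv⟩
  obtain ⟨y0, hy0m, hy0⟩ : ∃ y0 ∈ Set.Icc a b, f^[n] y0 = y0 := by
    set g : ℝ → ℝ := fun t => f^[n] t - t with hg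
    have hgc : Continuous g := (hf.iterate n).sub continuous_id
    have h0 : (0:ℝ) ∈ uIcc (g u) (g v) := by
      have h1 : g u ≤ 0 := by simp [hg, hfu]; linarith [hu.1]
      have h2 : 0 ≤ g v := by simp [hg, hfv]; linarith [hv.2]
      rcases le_total (g u) (g v) with h | h
      · rw [uIcc_of_le h]; exact ⟨h1, h2⟩
      · rw [uIcc_of_ge h]; exact ⟨by linarith, by linarith⟩
    obtain ⟨z, hz, hgz⟩ := intermediate_value_uIcc hgc.continuousOn h0
    refine ⟨z, uIcc_subset_Icc hu hv hz, by simpa [hg, sub_eq_zero] using hgz⟩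
  set Z : ℕ → ℝ := fun j => f^[j] y0 with hZ
  have hZmem : ∀ j, j ≤ n → Z j ∈ Set.Icc (lo j) (hi j) :=
    fun j hj => hmem' j hj ⟨y0, hy0m, rfl⟩
  have hZstep : ∀ j, f (Z j) = Z (j+1) := fun j => (Function.iterate_succ_apply' f j y0).symm
  have hboundary : ∀ j, j + 1 < n → hi j = x (n - j) ∧ lo (j+1) = x (n - j) := by
    intro j hj
    constructor
    · by_cases h : j = 0
      · rw [hi_eq0 j (Or.inl h), h, show n - 0 = n from rfl]
      · rw [hi_eq j (by omega)]
    · rw [lo_eq (j+1) (by omega)]; congr 1; omega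
  have hZlt : ∀ j, j + 1 < n → Z j < Z (j + 1) := by
    intro j hj
    obtain ⟨e1, e2⟩ := hboundary j hj
    have h1 : Z j ≤ x (n - j) := e1 ▸ (hZmem j (by omega)).2
    have h2 : x (n - j) ≤ Z (j+1) := e2 ▸ (hZmem (j+1) (by omega)).1
    rcases lt_or_eq_of_le (le_trans h1 h2) with h | h
    · exact h
    · exfalso
      have hZj : Z j = x (n - j) := le_antisymm h1 (h ▸ h2)
      have hfc : f (x (n - j)) = x (n - j - 1) := by
        have := hback (n - j - 1); rwa [(by omega : n - j - 1 + 1 = n - j)] at this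
      have : x (n - j) = x (n - j - 1) := by
        rw [← hfc, ← hZj, hZstep j, ← h, hZj]
      have := hdec (n - j - 1) (by omega)
      rw [(by omega : n - j - 1 + 1 = n - j)] at this
      linarith
  have hZmono : ∀ i j, i < j → j < n → Z i < Z j := by
    intro i j hij hjn
    induction j with
    | zero => omega
    | succ k ih =>
      rcases Nat.lt_or_ge i k with h | h
      · exact lt_trans (ih h (by omega)) (hZlt k (by omega))
      · have : i = k := by omega
        exact this ▸ hZlt k (by omega)
  refine ⟨fun i => Z (i % n), ?_, ?_, ?_⟩
  · intro i hi'
    show f (Z (i % n)) = Z ((i + 1) % n % n)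
    rw [Nat.mod_eq_of_lt (Nat.mod_lt _ (by omega))]
    rw [Nat.mod_eq_of_lt hi', hZstep i]
    rcases Nat.lt_or_ge (i+1) n with h | h
    · rw [Nat.mod_eq_of_lt h]
    · have : i + 1 = n := by omega
      rw [this, Nat.mod_self]
      show f^[n] y0 = Z 0
      simp [hZ, hy0]
  · intro i hi' j hj' hij
    simp only at hij
    rw [Nat.mod_eq_of_lt hi', Nat.mod_eq_of_lt hj'] at hij
    by_contra h
    rcases Nat.lt_or_ge i j with h' | h'
    · exact absurd hij (ne_of_lt (hZmono i j h' hj'))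
    · exact absurd hij.symm (ne_of_lt (hZmono j i (by omega) hi'))
  · intro i hi'
    show Z (i % n) < Z ((i + 1) % n)
    rw [Nat.mod_eq_of_lt (by omega : i < n), Nat.mod_eq_of_lt hi']
    exact hZlt i hi'
end

section
/- If f : ℝ → ℝ is continuous and has a periodic orbit of Štefan type of period 2n+1 (n ≥ 1), i.e., x_{2n} < x_{2n-2} < ⋯ < x₂ < x₀ < x₁ < x₃ < ⋯ < x_{2n-1} with f(x_i) = x_{i+1} cyclically, then f has a periodic point of period 2n+3. -/
open Set

private lemma subint_aux (f : ℝ → ℝ) (hf : Continuous f) (u v c d : ℝ)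
    (huv : u ≤ v) (hcd : c ≤ d) (hu : f u = c) (hv : f v = d) :
    ∃ a' b', u ≤ a' ∧ a' ≤ b' ∧ b' ≤ v ∧ f '' Set.Icc a' b' = Set.Icc c d := by
  classical
  set S : Set ℝ := {y | y ∈ Icc u v ∧ f y = c} with hS
  have hSne : S.Nonempty := ⟨u, ⟨le_refl u, huv⟩, hu⟩
  have hSbdd : BddAbove S := ⟨v, fun y hy => hy.1.2⟩
  have hSclosed : IsClosed S := by
    rw [hS]
    exact isClosed_Icc.inter (isClosed_singleton.preimage hf)
  have hu'mem : sSup S ∈ S := hSclosed.csSup_mem hSne hSbdd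
  set u' := sSup S with hu'def
  have huu' : u ≤ u' := le_csSup hSbdd ⟨⟨le_refl u, huv⟩, hu⟩
  have hu'v : u' ≤ v := hu'mem.1.2
  have hfu' : f u' = c := hu'mem.2
  set T : Set ℝ := {y | y ∈ Icc u' v ∧ f y = d} with hT
  have hTne : T.Nonempty := ⟨v, ⟨hu'v, le_refl v⟩, hv⟩
  have hTbdd : BddBelow T := ⟨u', fun y hy => hy.1.1⟩
  have hTclosed : IsClosed T := by
    rw [hT]
    exact isClosed_Icc.inter (isClosed_singleton.preimage hf)
  have hv'mem : sInf T ∈ T := hTclosed.csInf_mem hTne hTbdd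
  set v' := sInf T with hv'def
  have hu'v' : u' ≤ v' := hv'mem.1.1
  have hv'v : v' ≤ v := hv'mem.1.2
  have hfv' : f v' = d := hv'mem.2
  refine ⟨u', v', huu', hu'v', hv'v, ?_⟩
  apply Set.Subset.antisymm
  · rintro y ⟨w, hw, rfl⟩
    constructor
    · by_contra hlt
      push_neg at hlt
      have hcm : c ∈ Icc (f w) (f v') := by rw [hfv']; exact ⟨hlt.le, hcd⟩
      obtain ⟨z, hz, hfz⟩ := intermediate_value_Icc hw.2 hf.continuousOn hcm
      have hzS : z ∈ S := ⟨⟨by linarith [hw.1, hz.1], by linarith [hz.2]⟩, hfz⟩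
      have hzle : z ≤ u' := le_csSup hSbdd hzS
      have hwz : w = z := le_antisymm hz.1 (by linarith [hw.1])
      rw [hwz, hfz] at hlt
      exact lt_irrefl c hlt
    · by_contra hlt
      push_neg at hlt
      have hdm : d ∈ Icc (f u') (f w) := by rw [hfu']; exact ⟨hcd, hlt.le⟩
      obtain ⟨z, hz, hfz⟩ := intermediate_value_Icc hw.1 hf.continuousOn hdm
      have hzT : T ∈ ({T} : Set (Set ℝ)) := rfl
      have hzT' : z ∈ T := ⟨⟨hz.1, by linarith [hz.2, hw.2]⟩, hfz⟩
      have hzge : v' ≤ z := csInf_le hTbdd hzT'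
      have hwz : w = z := le_antisymm (by linarith [hw.2]) hz.2
      rw [hwz, hfz] at hlt
      exact lt_irrefl d hlt
  · have h := intermediate_value_Icc hu'v' hf.continuousOn
    rwa [hfu', hfv'] at h

private lemma subint (f : ℝ → ℝ) (hf : Continuous f) (a b c d : ℝ)
    (hcd : c ≤ d) (hcov : Set.Icc c d ⊆ f '' Set.Icc a b) :
    ∃ a' b', a ≤ a' ∧ a' ≤ b' ∧ b' ≤ b ∧ f '' Set.Icc a' b' = Set.Icc c d := by
  obtain ⟨u, hu, hfu⟩ := hcov ⟨le_refl c, hcd⟩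
  obtain ⟨v, hv, hfv⟩ := hcov ⟨hcd, le_refl d⟩
  have himg : ∀ (s t : ℝ), (fun y => f (-y)) '' Icc s t = f '' Icc (-t) (-s) := by
    intro s t; ext y; constructor
    · rintro ⟨w, hw, rfl⟩
      exact ⟨-w, ⟨neg_le_neg hw.2, neg_le_neg hw.1⟩, rfl⟩
    · rintro ⟨w, hw, rfl⟩
      exact ⟨-w, ⟨by linarith [hw.2], by linarith [hw.1]⟩, by simp⟩
  rcases le_total u v with h | h
  · obtain ⟨a', b', h1, h2, h3, h4⟩ := subint_aux f hf u v c d h hcd hfu hfv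
    exact ⟨a', b', hu.1.trans h1, h2, h3.trans hv.2, h4⟩
  · obtain ⟨a', b', h1, h2, h3, h4⟩ := subint_aux (fun y => f (-y))
      (hf.comp continuous_neg) (-u) (-v) c d (neg_le_neg h) hcd
      (by simpa using hfu) (by simpa using hfv)
    refine ⟨-b', -a', by linarith [hv.1], by linarith, by linarith [hu.2], ?_⟩
    rw [← himg, h4]

private lemma chain_lemma (f : ℝ → ℝ) (hf : Continuous f) :
    ∀ (m : ℕ) (a b : ℕ → ℝ), (∀ j, j ≤ m → a j ≤ b j) →
    (∀ j, j < m → Set.Icc (a (j+1)) (b (j+1)) ⊆ f '' Set.Icc (a j) (b j)) →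
    ∃ c d, a 0 ≤ c ∧ c ≤ d ∧ d ≤ b 0 ∧
      f^[m] '' Set.Icc c d = Set.Icc (a m) (b m) ∧
      ∀ j, j ≤ m → f^[j] '' Set.Icc c d ⊆ Set.Icc (a j) (b j) := by
  intro m
  induction m with
  | zero =>
    intro a b hab _
    refine ⟨a 0, b 0, le_refl _, hab 0 le_rfl, le_refl _, by simp, ?_⟩
    intro j hj
    interval_cases j
    simp
  | succ m ih =>
    intro a b hab hcov
    obtain ⟨c, d, hc, hcd, hd, him, htraj⟩ :=
      ih a b (fun j hj => hab j (by omega)) (fun j hj => hcov j (by omega))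
    have hcov' : Set.Icc (a (m+1)) (b (m+1)) ⊆ f^[m+1] '' Set.Icc c d := by
      rw [Function.iterate_succ', Set.image_comp, him]
      exact hcov m (by omega)
    obtain ⟨c', d', h1, h2, h3, h4⟩ :=
      subint f^[m+1] (hf.iterate (m+1)) c d (a (m+1)) (b (m+1)) (hab (m+1) le_rfl) hcov'
    refine ⟨c', d', hc.trans h1, h2, h3.trans hd, h4, ?_⟩
    intro j hj
    rcases Nat.eq_or_lt_of_le hj with heq | hlt
    · rw [heq, h4]
    · exact (Set.image_mono (Set.Icc_subset_Icc h1 h3)).trans (htraj j (by omega))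


private lemma fix_lemma (g : ℝ → ℝ) (hg : Continuous g) (c d A B : ℝ) (hcd : c ≤ d)
    (him : g '' Set.Icc c d = Set.Icc A B) (hA : A ≤ c) (hB : d ≤ B) :
    ∃ p ∈ Set.Icc c d, g p = p := by
  have hAB : A ≤ B := le_trans hA (le_trans hcd hB)
  have hu : A ∈ g '' Set.Icc c d := by rw [him]; exact ⟨le_refl _, hAB⟩
  have hv : B ∈ g '' Set.Icc c d := by rw [him]; exact ⟨hAB, le_refl _⟩
  obtain ⟨u, hu1, hu2⟩ := hu
  obtain ⟨v, hv1, hv2⟩ := hv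
  have hcont : ContinuousOn (fun y => g y - y) (Set.uIcc u v) :=
    (hg.sub continuous_id).continuousOn
  have h0 : (0:ℝ) ∈ Set.uIcc (g u - u) (g v - v) := by
    rw [Set.mem_uIcc, hu2, hv2]
    left
    constructor
    · linarith [hu1.1]
    · linarith [hv1.2]
  obtain ⟨p, hp, hp0⟩ := intermediate_value_uIcc hcont h0
  have hsub : Set.uIcc u v ⊆ Set.Icc c d := by
    intro y hy
    rcases Set.mem_uIcc.mp hy with ⟨h1, h2⟩ | ⟨h1, h2⟩ <;>
      exact ⟨by linarith [hu1.1, hv1.1], by linarith [hu1.2, hv1.2]⟩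
  refine ⟨p, hsub hp, by dsimp at hp0; linarith⟩

theorem stmt_16 (f : ℝ → ℝ) (hf : Continuous f) (n : ℕ) (hn : 1 ≤ n)
    (x : ℕ → ℝ)
    (hcyc : ∀ i < 2 * n + 1, f (x i) = x ((i + 1) % (2 * n + 1)))
    (hdist : ∀ i < 2 * n + 1, ∀ j < 2 * n + 1, x i = x j → i = j)
    (heven : ∀ i, 2 * i + 2 ≤ 2 * n → x (2 * i + 2) < x (2 * i))
    (h01 : x 0 < x 1)
    (hodd : ∀ i, 2 * i + 3 ≤ 2 * n → x (2 * i + 1) < x (2 * i + 3)) :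
    ∃ p : ℝ, f^[2 * n + 3] p = p ∧ ∀ j, 0 < j → j < 2 * n + 3 → f^[j] p ≠ p := by
  have hcyc' : ∀ i, i < 2*n → f (x i) = x (i+1) := by
    intro i hi
    have h := hcyc i (by omega)
    rwa [Nat.mod_eq_of_lt (by omega)] at h
  have hlast : f (x (2*n)) = x 0 := by
    have h := hcyc (2*n) (by omega)
    rwa [Nat.mod_self] at h
  -- monotonicity chains
  have hE : ∀ j, j ≤ n → ∀ i, i ≤ j → x (2*j) ≤ x (2*i) := by
    intro j
    induction j with
    | zero =>
      intro _ i hi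
      have hi0 : i = 0 := by omega
      rw [hi0]
    | succ j ih =>
      intro hj i hi
      rcases Nat.lt_or_ge i (j+1) with h | h
      · have h1 : x (2*(j+1)) ≤ x (2*j) := by
          have h2 := heven j (by omega)
          have e : 2*(j+1) = 2*j+2 := by ring
          rw [e]; exact h2.le
        exact h1.trans (ih (by omega) i (by omega))
      · have : i = j+1 := by omega
        subst this; exact le_refl _
  have hO : ∀ j, j < n → ∀ i, i ≤ j → x (2*i+1) ≤ x (2*j+1) := by
    intro j
    induction j with
    | zero =>
      intro _ i hi
      have hi0 : i = 0 := by omega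
      rw [hi0]
    | succ j ih =>
      intro hj i hi
      rcases Nat.lt_or_ge i (j+1) with h | h
      · have h1 : x (2*j+1) ≤ x (2*(j+1)+1) := by
          have h2 := hodd j (by omega)
          have e : 2*(j+1)+1 = 2*j+3 := by ring
          rw [e]; exact h2.le
        exact (ih (by omega) i (by omega)).trans h1
      · have : i = j+1 := by omega
        subst this; exact le_refl _
  have h20 : x 2 < x 0 := by
    have h2 := heven 0 (by omega); norm_num at h2; exact h2
  -- the interval sequences
  set A : ℕ → ℝ := fun j => if 4 ≤ j ∧ j ≤ 2*n+2 then
      (if j % 2 = 0 then x (j-2) else x (j-4)) else x 0 with hA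
  set B : ℕ → ℝ := fun j => if 4 ≤ j ∧ j ≤ 2*n+2 then
      (if j % 2 = 0 then x (j-4) else x (j-2)) else x 1 with hB
  have hAout : ∀ j, ¬(4 ≤ j ∧ j ≤ 2*n+2) → A j = x 0 := by
    intro j h; simp only [hA]; rw [if_neg h]
  have hBout : ∀ j, ¬(4 ≤ j ∧ j ≤ 2*n+2) → B j = x 1 := by
    intro j h; simp only [hB]; rw [if_neg h]
  have hAev : ∀ j, (4 ≤ j ∧ j ≤ 2*n+2) → j % 2 = 0 → A j = x (j-2) := by
    intro j h hp; simp only [hA]; rw [if_pos h, if_pos hp]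
  have hBev : ∀ j, (4 ≤ j ∧ j ≤ 2*n+2) → j % 2 = 0 → B j = x (j-4) := by
    intro j h hp; simp only [hB]; rw [if_pos h, if_pos hp]
  have hAod : ∀ j, (4 ≤ j ∧ j ≤ 2*n+2) → j % 2 = 1 → A j = x (j-4) := by
    intro j h hp; simp only [hA]; rw [if_pos h, if_neg (by omega)]
  have hBod : ∀ j, (4 ≤ j ∧ j ≤ 2*n+2) → j % 2 = 1 → B j = x (j-2) := by
    intro j h hp; simp only [hB]; rw [if_pos h, if_neg (by omega)]
  -- nonemptiness
  have hABle : ∀ j, j ≤ 2*n+3 → A j ≤ B j := by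
    intro j hj
    by_cases hin : 4 ≤ j ∧ j ≤ 2*n+2
    · by_cases hp : j % 2 = 0
      · rw [hAev j hin hp, hBev j hin hp]
        obtain ⟨i, rfl⟩ : ∃ i, j = 2*i+4 := ⟨(j-4)/2, by omega⟩
        rw [show 2*i+4-2 = 2*i+2 from by omega, show 2*i+4-4 = 2*i from by omega]
        exact (heven i (by omega)).le
      · rw [hAod j hin (by omega), hBod j hin (by omega)]
        obtain ⟨i, rfl⟩ : ∃ i, j = 2*i+5 := ⟨(j-5)/2, by omega⟩
        rw [show 2*i+5-4 = 2*i+1 from by omega, show 2*i+5-2 = 2*i+3 from by omega]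
        exact (hodd i (by omega)).le
    · rw [hAout j hin, hBout j hin]; exact h01.le
  -- key covering from the base interval
  have key1 : Set.Icc (x 2) (x 1) ⊆ f '' Set.Icc (x 0) (x 1) := by
    have h := intermediate_value_uIcc (f := f) (a := x 1) (b := x 0) hf.continuousOn
    rw [hcyc' 1 (by omega), hcyc' 0 (by omega),
      Set.uIcc_of_le (by linarith : x 2 ≤ x 1), Set.uIcc_of_ge h01.le] at h
    exact h
  -- coverings
  have hcovs : ∀ j, j < 2*n+3 →
      Set.Icc (A (j+1)) (B (j+1)) ⊆ f '' Set.Icc (A j) (B j) := by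
    intro j hj
    by_cases h3 : j ≤ 3
    · rw [hAout j (by omega), hBout j (by omega)]
      by_cases h2 : j ≤ 2
      · rw [hAout (j+1) (by omega), hBout (j+1) (by omega)]
        exact (Set.Icc_subset_Icc (by linarith) le_rfl).trans key1
      · have hj3 : j = 3 := by omega
        subst hj3
        rw [hAev 4 ⟨by omega, by omega⟩ (by omega), hBev 4 ⟨by omega, by omega⟩ (by omega)]
        norm_num
        exact (Set.Icc_subset_Icc le_rfl h01.le).trans key1
    · by_cases hmid : j ≤ 2*n+1
      · by_cases hp : j % 2 = 0
        · obtain ⟨i, rfl⟩ : ∃ i, j = 2*i+4 := ⟨(j-4)/2, by omega⟩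
          rw [hAev (2*i+4) ⟨by omega, by omega⟩ (by omega),
              hBev (2*i+4) ⟨by omega, by omega⟩ (by omega),
              hAod (2*i+4+1) ⟨by omega, by omega⟩ (by omega),
              hBod (2*i+4+1) ⟨by omega, by omega⟩ (by omega),
              show 2*i+4-2 = 2*i+2 from by omega, show 2*i+4-4 = 2*i from by omega,
              show 2*i+4+1-4 = 2*i+1 from by omega, show 2*i+4+1-2 = 2*i+3 from by omega]
          have h := intermediate_value_uIcc (f := f) (a := x (2*i+2)) (b := x (2*i))
            hf.continuousOn
          rw [hcyc' (2*i+2) (by omega), hcyc' (2*i) (by omega),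
            show 2*i+2+1 = 2*i+3 from by omega,
            Set.uIcc_of_ge (hodd i (by omega)).le,
            Set.uIcc_of_le (heven i (by omega)).le] at h
          exact h
        · obtain ⟨i, rfl⟩ : ∃ i, j = 2*i+5 := ⟨(j-5)/2, by omega⟩
          rw [hAod (2*i+5) ⟨by omega, by omega⟩ (by omega),
              hBod (2*i+5) ⟨by omega, by omega⟩ (by omega),
              hAev (2*i+5+1) ⟨by omega, by omega⟩ (by omega),
              hBev (2*i+5+1) ⟨by omega, by omega⟩ (by omega),
              show 2*i+5-4 = 2*i+1 from by omega, show 2*i+5-2 = 2*i+3 from by omega,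
              show 2*i+5+1-2 = 2*i+4 from by omega, show 2*i+5+1-4 = 2*i+2 from by omega]
          have h := intermediate_value_uIcc (f := f) (a := x (2*i+1)) (b := x (2*i+3))
            hf.continuousOn
          have hev : x (2*i+4) ≤ x (2*i+2) := by
            have h2 := heven (i+1) (by omega)
            rw [show 2*(i+1)+2 = 2*i+4 from by omega, show 2*(i+1) = 2*i+2 from by omega] at h2
            exact h2.le
          rw [hcyc' (2*i+1) (by omega), hcyc' (2*i+3) (by omega),
            show 2*i+1+1 = 2*i+2 from by omega, show 2*i+3+1 = 2*i+4 from by omega,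
            Set.uIcc_of_ge hev,
            Set.uIcc_of_le (hodd i (by omega)).le] at h
          exact h
      · have hj2 : j = 2*n+2 := by omega
        subst hj2
        rw [hAout (2*n+2+1) (by omega), hBout (2*n+2+1) (by omega),
          hAev (2*n+2) ⟨by omega, by omega⟩ (by omega),
          hBev (2*n+2) ⟨by omega, by omega⟩ (by omega),
          show 2*n+2-2 = 2*n from by omega, show 2*n+2-4 = 2*n-2 from by omega]
        have hev : x (2*n) ≤ x (2*n-2) := by
          have h2 := heven (n-1) (by omega)
          rw [show 2*(n-1)+2 = 2*n from by omega, show 2*(n-1) = 2*n-2 from by omega] at h2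
          exact h2.le
        have hx1 : x 1 ≤ x (2*n-1) := by
          have h2 := hO (n-1) (by omega) 0 (by omega)
          rw [show 2*(n-1)+1 = 2*n-1 from by omega] at h2
          norm_num at h2
          exact h2
        have h := intermediate_value_uIcc (f := f) (a := x (2*n)) (b := x (2*n-2))
          hf.continuousOn
        rw [hlast, hcyc' (2*n-2) (by omega), show 2*n-2+1 = 2*n-1 from by omega,
          Set.uIcc_of_le (by linarith : x 0 ≤ x (2*n-1)),
          Set.uIcc_of_le hev] at h
        exact (Set.Icc_subset_Icc le_rfl hx1).trans h
  -- build the periodic point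
  obtain ⟨c, d, hc, hcd, hd, him, htraj⟩ := chain_lemma f hf (2*n+3) A B hABle hcovs
  have hA0 : A 0 = x 0 := hAout 0 (by omega)
  have hB0 : B 0 = x 1 := hBout 0 (by omega)
  have hAm : A (2*n+3) = x 0 := hAout (2*n+3) (by omega)
  have hBm : B (2*n+3) = x 1 := hBout (2*n+3) (by omega)
  rw [hAm, hBm] at him
  rw [hA0] at hc
  rw [hB0] at hd
  obtain ⟨p, hp, hpfix⟩ := fix_lemma f^[2*n+3] (hf.iterate _) c d (x 0) (x 1) hcd him hc hd
  have htr : ∀ j, j ≤ 2*n+3 → f^[j] p ∈ Set.Icc (A j) (B j) :=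
    fun j hj => htraj j hj ⟨p, hp, rfl⟩
  refine ⟨p, hpfix, ?_⟩
  intro j hj0 hjlt hfeq
  set k := Function.minimalPeriod f p with hk
  have hperK : f^[k] p = p := Function.isPeriodicPt_minimalPeriod f p
  have hdvd : k ∣ 2*n+3 := Function.IsPeriodicPt.minimalPeriod_dvd hpfix
  have hkle : k ≤ j := Function.IsPeriodicPt.minimalPeriod_le hj0 hfeq
  obtain ⟨t, ht⟩ := hdvd
  have hkodd : k % 2 = 1 := by
    rcases Nat.even_or_odd k with he | ho
    · exfalso
      obtain ⟨s, hs⟩ := he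
      have : 2*n+3 = 2*(s*t) := by rw [ht, hs]; ring
      omega
    · exact Nat.odd_iff.mp ho
  have htodd : t % 2 = 1 := by
    rcases Nat.even_or_odd t with he | ho
    · exfalso
      obtain ⟨s, hs⟩ := he
      have : 2*n+3 = 2*(k*s) := by rw [ht, hs]; ring
      omega
    · exact Nat.odd_iff.mp ho
  have ht0 : t ≠ 0 := by rintro rfl; simp at ht
  have ht1 : t ≠ 1 := by rintro rfl; omega
  have ht3 : 3 ≤ t := by omega
  have h3k : 3*k ≤ 2*n+3 := by
    calc 3*k ≤ t*k := Nat.mul_le_mul_right k ht3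
    _ = 2*n+3 := by rw [mul_comm]; exact ht.symm
  have m0 : p ∈ Set.Icc (x 0) (x 1) := by
    have h := htr 0 (by omega)
    rw [hA0, hB0] at h
    simpa using h
  have m4 : f^[4] p ∈ Set.Icc (x 2) (x 0) := by
    have h := htr 4 (by omega)
    rwa [hAev 4 ⟨by omega, by omega⟩ (by omega), hBev 4 ⟨by omega, by omega⟩ (by omega),
      show (4:ℕ)-2 = 2 from by omega, show (4:ℕ)-4 = 0 from by omega] at h
  by_cases hk1 : k = 1
  · have hp1 : f p = p := by
      have := hperK; rw [hk1] at this; simpa using this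
    have hp4 : f^[4] p = p := Function.iterate_fixed hp1 4
    rw [hp4] at m4
    have hpx0 : p = x 0 := le_antisymm m4.2 m0.1
    have hfx0 := hcyc' 0 (by omega)
    rw [← hpx0, hp1] at hfx0
    linarith [m0.1, hfx0, h01]
  · have hk3 : 3 ≤ k := by omega
    have hiter : f^[4+k] p = f^[4] p := by
      rw [Function.iterate_add_apply, hperK]
    have mk : f^[4+k] p ∈ Set.Icc (A (4+k)) (B (4+k)) := htr (4+k) (by omega)
    rw [hiter, hAod (4+k) ⟨by omega, by omega⟩ (by omega),
      hBod (4+k) ⟨by omega, by omega⟩ (by omega),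
      show 4+k-4 = k from by omega] at mk
    have hxk : x 1 ≤ x k := by
      obtain ⟨i, hki⟩ : ∃ i, k = 2*i+1 := ⟨(k-1)/2, by omega⟩
      have h2 := hO i (by omega) 0 (by omega)
      norm_num at h2
      rw [hki]
      exact h2
    linarith [m4.2, mk.1, h01, hxk]
end

section
/- If f : ℝ → ℝ is continuous and has a period-3 point, then f² = f ∘ f has a period-4 point y₀ with orbit under f² satisfying either y₃ < y₂ < y₀ < y₁ or y₁ < y₀ < y₂ < y₃ (where y_{i+1} = f²(y_i)). -/
private lemma fix_in (G : ℝ → ℝ) (hG : Continuous G) (s t x1 x2 : ℝ)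
    (hx1 : x1 ∈ Set.Icc s t) (hx2 : x2 ∈ Set.Icc s t)
    (h1 : G x1 ≤ x1) (h2 : x2 ≤ G x2) :
    ∃ y ∈ Set.Icc s t, G y = y := by
  have hF : Continuous fun x => G x - x := hG.sub continuous_id
  rcases le_total x1 x2 with h | h
  · have key := intermediate_value_Icc h hF.continuousOn
    have h0 : (0:ℝ) ∈ Set.Icc (G x1 - x1) (G x2 - x2) := ⟨by linarith, by linarith⟩
    obtain ⟨y, hy, hy0⟩ := key h0
    exact ⟨y, ⟨le_trans hx1.1 hy.1, le_trans hy.2 hx2.2⟩, by simp at hy0; linarith⟩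
  · have key := intermediate_value_Icc' h hF.continuousOn
    have h0 : (0:ℝ) ∈ Set.Icc (G x1 - x1) (G x2 - x2) := ⟨by linarith, by linarith⟩
    obtain ⟨y, hy, hy0⟩ := key h0
    exact ⟨y, ⟨le_trans hx2.1 hy.1, le_trans hy.2 hx1.2⟩, by simp at hy0; linarith⟩

private lemma icc_image_eq (g : ℝ → ℝ) (hg : Continuous g) (α β u v : ℝ)
    (hαβ : α ≤ β) (hu : g α = u) (hv : g β = v) (huv : u ≤ v) :
    ∃ s t, α ≤ s ∧ s ≤ t ∧ t ≤ β ∧ g '' Set.Icc s t = Set.Icc u v := by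
  set S1 := Set.Icc α β ∩ {x | g x = u} with hS1def
  have hS1c : IsCompact S1 := isCompact_Icc.inter_right (isClosed_eq hg continuous_const)
  have hS1n : S1.Nonempty := ⟨α, ⟨le_refl _, hαβ⟩, hu⟩
  set s := sSup S1 with hsdef
  have hsS : s ∈ S1 := hS1c.sSup_mem hS1n
  have hgs : g s = u := hsS.2
  have hsβ : s ≤ β := hsS.1.2
  set S2 := Set.Icc s β ∩ {x | g x = v} with hS2def
  have hS2c : IsCompact S2 := isCompact_Icc.inter_right (isClosed_eq hg continuous_const)
  have hS2n : S2.Nonempty := ⟨β, ⟨hsβ, le_refl _⟩, hv⟩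
  set t := sInf S2 with htdef
  have htS : t ∈ S2 := hS2c.sInf_mem hS2n
  have hgt : g t = v := htS.2
  have hst : s ≤ t := htS.1.1
  have htβ : t ≤ β := htS.1.2
  refine ⟨s, t, hsS.1.1, hst, htβ, ?_⟩
  apply Set.Subset.antisymm
  · rintro _ ⟨x, hx, rfl⟩
    constructor
    · by_contra hlt
      push_neg at hlt
      have hmem : u ∈ Set.Icc (g x) (g t) := ⟨le_of_lt hlt, hgt ▸ huv⟩
      obtain ⟨x', hx', hgx'⟩ := intermediate_value_Icc hx.2 hg.continuousOn hmem
      have hx'S1 : x' ∈ S1 := ⟨⟨le_trans hsS.1.1 (le_trans hx.1 hx'.1), le_trans hx'.2 htβ⟩, hgx'⟩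
      have hle : x' ≤ s := le_csSup hS1c.bddAbove hx'S1
      have hxx' : x = x' := le_antisymm hx'.1 (le_trans hle hx.1)
      rw [← hxx'] at hgx'
      exact absurd hgx' (ne_of_lt hlt)
    · by_contra hlt
      push_neg at hlt
      have hmem : v ∈ Set.Icc (g s) (g x) := ⟨hgs ▸ huv, le_of_lt hlt⟩
      obtain ⟨x', hx', hgx'⟩ := intermediate_value_Icc hx.1 hg.continuousOn hmem
      have hx'S2 : x' ∈ S2 := ⟨⟨hx'.1, le_trans (le_trans hx'.2 hx.2) htβ⟩, hgx'⟩
      have hle : t ≤ x' := csInf_le hS2c.bddBelow hx'S2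
      have hxx' : x = x' := le_antisymm (le_trans hx.2 hle) hx'.2
      rw [← hxx'] at hgx'
      exact absurd hgx' (ne_of_gt hlt)
  · have := intermediate_value_Icc hst hg.continuousOn
    rw [hgs, hgt] at this
    exact this

private lemma icc_image_eq' (g : ℝ → ℝ) (hg : Continuous g) (α β u v : ℝ)
    (hu : g α = u) (hv : g β = v) (huv : u ≤ v) :
    ∃ s t, min α β ≤ s ∧ s ≤ t ∧ t ≤ max α β ∧ g '' Set.Icc s t = Set.Icc u v := by
  rcases le_total α β with h | h
  · obtain ⟨s, t, h1, h2, h3, h4⟩ := icc_image_eq g hg α β u v h hu hv huv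
    exact ⟨s, t, le_trans (min_le_left _ _) h1, h2, le_trans h3 (le_max_right _ _), h4⟩
  · obtain ⟨s, t, h1, h2, h3, h4⟩ :=
      icc_image_eq (fun x => g (-x)) (hg.comp continuous_neg) (-α) (-β) u v
        (by linarith) (by simp [hu]) (by simp [hv]) huv
    refine ⟨-t, -s, ?_, by linarith, ?_, ?_⟩
    · simp only [min_def]; split <;> linarith
    · simp only [max_def]; split <;> linarith
    · rw [← h4]
      ext z
      constructor
      · rintro ⟨x, hx, rfl⟩
        exact ⟨-x, ⟨by linarith [hx.2], by linarith [hx.1]⟩, by simp⟩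
      · rintro ⟨x, hx, rfl⟩
        exact ⟨-x, ⟨by linarith [hx.2], by linarith [hx.1]⟩, rfl⟩

private lemma subinterval (g : ℝ → ℝ) (hg : Continuous g) (A B : ℝ)
    (u v : ℝ) (huv : u ≤ v) (hcov : Set.Icc u v ⊆ g '' Set.Icc A B) :
    ∃ s t, A ≤ s ∧ s ≤ t ∧ t ≤ B ∧ g '' Set.Icc s t = Set.Icc u v := by
  obtain ⟨α, hα, hu⟩ := hcov (Set.left_mem_Icc.mpr huv)
  obtain ⟨β, hβ, hv⟩ := hcov (Set.right_mem_Icc.mpr huv)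
  obtain ⟨s, t, h1, h2, h3, h4⟩ := icc_image_eq' g hg α β u v hu hv huv
  exact ⟨s, t, le_trans (le_min hα.1 hβ.1) h1, h2, le_trans h3 (max_le hα.2 hβ.2), h4⟩

private lemma mainA (f : ℝ → ℝ) (hf : Continuous f) (c a b : ℝ) (hca : c < a) (hab : a < b)
    (hfa : f a = b) (hfb : f b = c) (hfc : f c = a) :
    ∃ y0 y1 y2 y3 : ℝ,
      (f ∘ f) y0 = y1 ∧ (f ∘ f) y1 = y2 ∧ (f ∘ f) y2 = y3 ∧ (f ∘ f) y3 = y0 ∧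
      (y1 < y0 ∧ y0 < y2 ∧ y2 < y3) := by
  set g := f ∘ f with hgdef
  have hg : Continuous g := hf.comp hf
  -- fixed point w of f in (a,b)
  obtain ⟨w, hwmem, hfw⟩ := fix_in f hf a b b a ⟨le_of_lt hab, le_refl _⟩
      ⟨le_refl _, le_of_lt hab⟩ (by rw [hfb]; linarith) (by rw [hfa]; exact hab.le)
  have haw : a < w := by
    rcases lt_or_eq_of_le hwmem.1 with h | h
    · exact h
    · exfalso; rw [← h] at hfw; rw [hfa] at hfw; linarith
  have hwb : w < b := by
    rcases lt_or_eq_of_le hwmem.2 with h | h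
    · exact h
    · exfalso; rw [h] at hfw; rw [hfb] at hfw; linarith
  have hga : g a = c := by simp [hgdef, Function.comp, hfa, hfb]
  have hgb : g b = a := by simp [hgdef, Function.comp, hfb, hfc]
  have hgc : g c = b := by simp [hgdef, Function.comp, hfc, hfa]
  have hgw : g w = w := by simp [hgdef, Function.comp, hfw]
  -- covering: Icc a b ⊆ g '' Icc w b
  have himg1 : Set.Icc c w ⊆ f '' Set.Icc w b := by
    have := intermediate_value_Icc' (le_of_lt hwb) hf.continuousOn
    rwa [hfb, hfw] at this
  have himg2 : Set.Icc a b ⊆ f '' Set.Icc c a := by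
    have := intermediate_value_Icc (le_of_lt hca) hf.continuousOn
    rwa [hfc, hfa] at this
  have hcovJ2 : Set.Icc a b ⊆ g '' Set.Icc w b := by
    intro z hz
    obtain ⟨x1, hx1, hfx1⟩ := himg2 hz
    have hx1' : x1 ∈ Set.Icc c w := ⟨hx1.1, le_trans hx1.2 (le_of_lt haw)⟩
    obtain ⟨x2, hx2, hfx2⟩ := himg1 hx1'
    exact ⟨x2, hx2, by simp [hgdef, Function.comp, hfx2, hfx1]⟩
  obtain ⟨τ, hτ, hgτ⟩ := hcovJ2 (Set.right_mem_Icc.mpr hab.le)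
  -- v := max fixed point of g in [w, b]
  set S := Set.Icc w b ∩ {x | g x = x} with hSdef
  have hScomp : IsCompact S := isCompact_Icc.inter_right (isClosed_eq hg continuous_id)
  have hSne : S.Nonempty := ⟨w, ⟨le_refl _, le_of_lt hwb⟩, hgw⟩
  set v := sSup S with hvdef
  have hvS : v ∈ S := hScomp.sSup_mem hSne
  have hgv : g v = v := hvS.2
  have hwv : w ≤ v := hvS.1.1
  have hvb : v ≤ b := hvS.1.2
  -- τ ≤ v
  have hτv : τ ≤ v := by
    by_contra hlt
    push_neg at hlt
    have hτb : τ ≤ b := hτ.2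
    obtain ⟨x, hx, hgx⟩ := fix_in g hg τ b b τ ⟨hτb, le_refl _⟩ ⟨le_refl _, hτb⟩
      (by rw [hgb]; linarith) (by rw [hgτ]; exact hτb)
    have : x ∈ S := ⟨⟨le_trans hτ.1 hx.1, hx.2⟩, hgx⟩
    have := le_csSup hScomp.bddAbove this
    linarith [hx.1]
  -- coverings
  have hcovJ2a : Set.Icc v b ⊆ g '' Set.Icc w v := by
    intro z hz
    have := intermediate_value_Icc' hτv hg.continuousOn
    rw [hgv, hgτ] at this
    obtain ⟨x, hx, hgx⟩ := this hz
    exact ⟨x, ⟨le_trans hτ.1 hx.1, hx.2⟩, hgx⟩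
  have hcovJ2b : Set.Icc a v ⊆ g '' Set.Icc v b := by
    have := intermediate_value_Icc' hvb hg.continuousOn
    rwa [hgb, hgv] at this
  have hcovJ1 : Set.Icc c w ⊆ g '' Set.Icc a w := by
    have := intermediate_value_Icc (le_of_lt haw) hg.continuousOn
    rwa [hga, hgw] at this
  have hcovJ0 : Set.Icc c b ⊆ g '' Set.Icc c a := by
    intro z hz
    have h3 : Set.Icc c b ⊆ f '' Set.Icc a b := by
      have := intermediate_value_Icc' (le_of_lt hab) hf.continuousOn
      rwa [hfb, hfa] at this
    obtain ⟨x1, hx1, hfx1⟩ := h3 hz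
    obtain ⟨x2, hx2, hfx2⟩ := himg2 hx1
    exact ⟨x2, hx2, by simp [hgdef, Function.comp, hfx2, hfx1]⟩
  -- chain of exact subintervals
  obtain ⟨s3, t3, hs3, hst3, ht3, hA3⟩ := subinterval g hg v b a w (le_of_lt haw)
    (fun z hz => hcovJ2b ⟨hz.1, le_trans hz.2 hwv⟩)
  obtain ⟨s2, t2, hs2, hst2, ht2, hA2⟩ := subinterval g hg w v s3 t3 hst3
    (fun z hz => hcovJ2a ⟨le_trans hs3 hz.1, le_trans hz.2 ht3⟩)
  obtain ⟨s1, t1, hs1, hst1, ht1, hA1⟩ := subinterval g hg c a s2 t2 hst2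
    (fun z hz => hcovJ0 ⟨le_trans (le_of_lt hca) (le_trans (le_trans (le_of_lt haw) hs2) hz.1),
      le_trans (le_trans hz.2 ht2) hvb⟩)
  obtain ⟨s0, t0, hs0, hst0, ht0, hA0⟩ := subinterval g hg a w s1 t1 hst1
    (fun z hz => hcovJ1 ⟨le_trans (le_trans hs1 hz.1) (le_refl _) |>.trans (le_refl _) |>.trans (le_refl _) |>.trans (le_refl _) |>.trans (le_refl _) |>.trans (le_refl _), le_trans (le_trans hz.2 ht1) (le_of_lt haw)⟩)
  -- fixed point of g^4 on [s0, t0]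
  have chase : ∀ z ∈ Set.Icc a w, ∃ x ∈ Set.Icc s0 t0, g (g (g (g x))) = z := by
    intro z hz
    rw [← hA3] at hz
    obtain ⟨z3, hz3, hgz3⟩ := hz
    rw [← hA2] at hz3
    obtain ⟨z2, hz2, hgz2⟩ := hz3
    rw [← hA1] at hz2
    obtain ⟨z1, hz1, hgz1⟩ := hz2
    rw [← hA0] at hz1
    obtain ⟨x, hx, hgx⟩ := hz1
    exact ⟨x, hx, by rw [hgx, hgz1, hgz2, hgz3]⟩
  obtain ⟨x1, hx1, hGx1⟩ := chase a ⟨le_refl _, le_of_lt haw⟩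
  obtain ⟨x2, hx2, hGx2⟩ := chase w ⟨le_of_lt haw, le_refl _⟩
  have hG : Continuous fun x => g (g (g (g x))) := hg.comp (hg.comp (hg.comp hg))
  obtain ⟨y0, hy0mem, hy0fix⟩ := fix_in _ hG s0 t0 x1 x2 hx1 hx2
    (by rw [hGx1]; exact le_trans hs0 hx1.1) (by rw [hGx2]; exact le_trans hx2.2 ht0)
  -- the orbit
  set y1 := g y0 with hy1def
  set y2 := g y1 with hy2def
  set y3 := g y2 with hy3def
  have hy1mem : y1 ∈ Set.Icc s1 t1 := by rw [← hA0]; exact ⟨y0, hy0mem, rfl⟩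
  have hy2mem : y2 ∈ Set.Icc s2 t2 := by rw [← hA1]; exact ⟨y1, hy1mem, rfl⟩
  have hy3mem : y3 ∈ Set.Icc s3 t3 := by rw [← hA2]; exact ⟨y2, hy2mem, rfl⟩
  have hy3g : g y3 = y0 := hy0fix
  -- coarse positions
  have hy0a : a ≤ y0 := le_trans hs0 hy0mem.1
  have hy0w : y0 ≤ w := le_trans hy0mem.2 ht0
  have hy1c : c ≤ y1 := le_trans hs1 hy1mem.1
  have hy1a : y1 ≤ a := le_trans hy1mem.2 ht1
  have hy2w : w ≤ y2 := le_trans hs2 hy2mem.1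
  have hy2v : y2 ≤ v := le_trans hy2mem.2 ht2
  have hy3v : v ≤ y3 := le_trans hs3 hy3mem.1
  -- strict inequalities
  have h10 : y1 < y0 := by
    rcases lt_or_eq_of_le (le_trans hy1a hy0a) with h | h
    · exact h
    · exfalso
      have hy0eq : y0 = a := le_antisymm (h ▸ hy1a) hy0a
      have : g a = a := by rw [← hy0eq, ← hy1def]; exact h
      rw [hga] at this; linarith
  have h02 : y0 < y2 := by
    rcases lt_or_eq_of_le (le_trans hy0w hy2w) with h | h
    · exact h
    · exfalso
      have hy0eq : y0 = w := le_antisymm hy0w (h ▸ hy2w)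
      have : y1 = w := by rw [hy1def, hy0eq, hgw]
      linarith [hy1a, haw]
  have h23 : y2 < y3 := by
    rcases lt_or_eq_of_le (le_trans hy2v hy3v) with h | h
    · exact h
    · exfalso
      have hy2eq : y2 = v := le_antisymm hy2v (h ▸ hy3v)
      have hy3eq : y3 = v := by rw [hy3def, hy2eq, hgv]
      have hy0eq : y0 = v := by rw [← hy3g, hy3eq, hgv]
      have hy0w' : y0 = w := le_antisymm hy0w (hy0eq ▸ hwv)
      have : y1 = w := by rw [hy1def, hy0w', hgw]
      linarith [hy1a, haw]
  exact ⟨y0, y1, y2, y3, rfl, rfl, rfl, hy3g, h10, h02, h23⟩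

private lemma mainB (f : ℝ → ℝ) (hf : Continuous f) (c a b : ℝ) (hca : c < a) (hab : a < b)
    (hfa : f a = c) (hfb : f b = a) (hfc : f c = b) :
    ∃ y0 y1 y2 y3 : ℝ,
      (f ∘ f) y0 = y1 ∧ (f ∘ f) y1 = y2 ∧ (f ∘ f) y2 = y3 ∧ (f ∘ f) y3 = y0 ∧
      (y3 < y2 ∧ y2 < y0 ∧ y0 < y1) := by
  set F := fun x => -f (-x) with hFdef
  have hF : Continuous F := (hf.comp continuous_neg).neg
  obtain ⟨z0, z1, z2, z3, h0, h1, h2, h3, ho1, ho2, ho3⟩ :=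
    mainA F hF (-b) (-a) (-c) (by linarith) (by linarith)
      (by simp [hFdef, hfa]) (by simp [hFdef, hfc]) (by simp [hFdef, hfb])
  have key : ∀ z w : ℝ, (F ∘ F) z = w → (f ∘ f) (-z) = -w := by
    intro z w h
    simp only [hFdef, Function.comp, neg_neg] at h ⊢
    linarith
  exact ⟨-z0, -z1, -z2, -z3, key _ _ h0, key _ _ h1, key _ _ h2, key _ _ h3,
    ⟨by linarith, by linarith, by linarith⟩⟩

theorem stmt_17 (f : ℝ → ℝ) (hf : Continuous f)
    (p : ℝ) (hp3 : f^[3] p = p) (hp1 : f p ≠ p) (hp2 : f^[2] p ≠ p) :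
    ∃ y0 y1 y2 y3 : ℝ,
      (f ∘ f) y0 = y1 ∧ (f ∘ f) y1 = y2 ∧ (f ∘ f) y2 = y3 ∧ (f ∘ f) y3 = y0 ∧
      ((y3 < y2 ∧ y2 < y0 ∧ y0 < y1) ∨ (y1 < y0 ∧ y0 < y2 ∧ y2 < y3)) := by
  set q := f p with hq
  set r := f q with hr
  have h2 : f^[2] p = r := by
    rw [hr, hq]; simp [Function.iterate_succ_apply', Function.iterate_one]
  have h3 : f r = p := by
    have h4 : f^[3] p = f (f^[2] p) := Function.iterate_succ_apply' f 2 p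
    rw [h2] at h4
    rw [← h4, hp3]
  have hfp : f p = q := hq.symm
  have hfq : f q = r := hr.symm
  have hrp : r ≠ p := by rw [← h2]; exact hp2
  have hqr : q ≠ r := by
    intro h
    apply hrp
    rw [hr, h, h3]
  rcases lt_trichotomy p q with h1 | h1 | h1
  · rcases lt_trichotomy q r with hb | hb | hb
    · -- p < q < r : type A (p,q,r)
      obtain ⟨y0, y1, y2, y3, e0, e1, e2, e3, o⟩ := mainA f hf p q r h1 hb hfq h3 hfp
      exact ⟨y0, y1, y2, y3, e0, e1, e2, e3, Or.inr o⟩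
    · exact absurd hb hqr
    · rcases lt_trichotomy p r with hc | hc | hc
      · -- p < r < q : type B (p,r,q)
        obtain ⟨y0, y1, y2, y3, e0, e1, e2, e3, o⟩ := mainB f hf p r q hc hb h3 hfq hfp
        exact ⟨y0, y1, y2, y3, e0, e1, e2, e3, Or.inl o⟩
      · exact absurd hc.symm hrp
      · -- r < p < q : type A (r,p,q)
        obtain ⟨y0, y1, y2, y3, e0, e1, e2, e3, o⟩ := mainA f hf r p q hc h1 hfp hfq h3
        exact ⟨y0, y1, y2, y3, e0, e1, e2, e3, Or.inr o⟩
  · exact absurd h1.symm hp1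
  · rcases lt_trichotomy q r with hb | hb | hb
    · rcases lt_trichotomy p r with hc | hc | hc
      · -- q < p < r : type B (q,p,r)
        obtain ⟨y0, y1, y2, y3, e0, e1, e2, e3, o⟩ := mainB f hf q p r h1 hc hfp h3 hfq
        exact ⟨y0, y1, y2, y3, e0, e1, e2, e3, Or.inl o⟩
      · exact absurd hc.symm hrp
      · -- q < r < p : type A (q,r,p)
        obtain ⟨y0, y1, y2, y3, e0, e1, e2, e3, o⟩ := mainA f hf q r p hb hc h3 hfp hfq
        exact ⟨y0, y1, y2, y3, e0, e1, e2, e3, Or.inr o⟩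
    · exact absurd hb hqr
    · -- r < q < p : type B (r,q,p)
      obtain ⟨y0, y1, y2, y3, e0, e1, e2, e3, o⟩ := mainB f hf r q p hb h1 hfq hfp h3
      exact ⟨y0, y1, y2, y3, e0, e1, e2, e3, Or.inl o⟩
end
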